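/- arXiv:1001.5224 — 9 statements merged into one kernel-verified Lean document; each statement's English description precedes it below -/
import Mathlib

section
/- Let D be an integral domain and I a t-finite fractional ideal of D. Then I is flat as a D-module if and only if I is invertible. -/
open scoped nonZeroDivisors

section Defs
variable (D K : Type*) [CommRing D] [IsDomain D] [Field K] [Algebra D K] [IsFractionRing D K]

/-- The endomorphism ring `(N : N) = {x ∈ K | x N ⊆ N}` of a `D`-submodule of `K`,
as a subalgebra of `K`. -/
def ends (N : Submodule D K) : Subalgebra D K where
  carrier := {x : K | ∀ y ∈ N, x * y ∈ N}
  mul_mem' := fun {a b} ha hb y hy => by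
    rw [mul_assoc]; exact ha _ (hb _ hy)
  add_mem' := fun {a b} ha hb y hy => by
    rw [add_mul]; exact N.add_mem (ha _ hy) (hb _ hy)
  algebraMap_mem' := fun r y hy => by
    rw [← Algebra.smul_def]; exact N.smul_mem r hy

/-- `N` viewed as a module over its endomorphism ring `(N : N)`. -/
noncomputable def overEnds (N : Submodule D K) : Submodule (ends D K N) K :=
  Submodule.span (ends D K N) (N : Set K)

/-- A `D`-submodule `N` of `K` is quasi-stable if it is flat as a module over its
endomorphism ring `(N : N)`. -/
def IsQuasiStable (N : Submodule D K) : Prop :=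
  Module.Flat (ends D K N) (overEnds D K N)

/-- The `t`-closure of a fractional ideal: the union of the divisorial closures
`J_v = (D : (D : J))` of the finitely generated fractional subideals `J`. -/
noncomputable def tClosure (I : FractionalIdeal D⁰ K) : Submodule D K :=
  ⨆ J : {J : FractionalIdeal D⁰ K // J ≤ I ∧ (J : Submodule D K).FG},
    ((1 / (1 / (J : FractionalIdeal D⁰ K)) : FractionalIdeal D⁰ K) : Submodule D K)

end Defs

universe u v

section AuxFlat

/-- Finite representation of an element of a product of submodules of an algebra. -/
lemma mem_mul_rep {R A : Type*} [CommSemiring R] [CommSemiring A] [Algebra R A]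
    {M N : Submodule R A} {z : A} (h : z ∈ M * N) :
    ∃ (n : ℕ) (f g : Fin n → A), (∀ i, f i ∈ M) ∧ (∀ i, g i ∈ N) ∧ z = ∑ i, f i * g i := by
  refine Submodule.mul_induction_on h ?_ ?_
  · intro m hm n hn
    exact ⟨1, fun _ => m, fun _ => n, fun _ => hm, fun _ => hn, by simp⟩
  · rintro x y ⟨n₁, f₁, g₁, hf₁, hg₁, rfl⟩ ⟨n₂, f₂, g₂, hf₂, hg₂, rfl⟩
    refine ⟨n₁ + n₂, Fin.append f₁ f₂, Fin.append g₁ g₂, ?_, ?_, ?_⟩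
    · intro i
      refine Fin.addCases (fun j => ?_) (fun j => ?_) i
      · simpa [Fin.append_left] using hf₁ j
      · simpa [Fin.append_right] using hf₂ j
    · intro i
      refine Fin.addCases (fun j => ?_) (fun j => ?_) i
      · simpa [Fin.append_left] using hg₁ j
      · simpa [Fin.append_right] using hg₂ j
    · rw [Fin.sum_univ_add]
      simp [Fin.append_left, Fin.append_right]

/-- Core lemma: multiplication by a flat submodule of the fraction field distributes over
intersections of submodules (same-universe version). -/
lemma flat_inter_core {D F : Type u} [CommRing D] [IsDomain D] [Field F]
    [Algebra D F] [IsFractionRing D F] (N A B : Submodule D F)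
    (hN : Module.Flat D N) : (N * A) ⊓ (N * B) ≤ N * (A ⊓ B) := by
  intro z hz
  obtain ⟨n, f, g, hf, hg, hz1⟩ := mem_mul_rep hz.1
  obtain ⟨m, f', g', hf', hg', hz2⟩ := mem_mul_rep hz.2
  obtain ⟨d, hd⟩ := IsLocalization.exist_integer_multiples (D⁰) (Finset.univ)
    (Sum.elim g g' : Fin n ⊕ Fin m → F)
  choose P hP using fun i => hd i (Finset.mem_univ i)
  have hd0 : algebraMap D F (d : D) ≠ 0 :=
    IsFractionRing.to_map_ne_zero_of_mem_nonZeroDivisors d.2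
  have hdinj : ∀ w₁ w₂ : F, (d : D) • w₁ = (d : D) • w₂ → w₁ = w₂ := by
    intro w₁ w₂ hw
    rw [Algebra.smul_def, Algebra.smul_def] at hw
    exact mul_left_cancel₀ hd0 hw
  -- the relation in the module ↥N
  set x : ULift.{u} (Fin n ⊕ Fin m) → N := fun i =>
    Sum.elim (fun j => (⟨f j, hf j⟩ : N)) (fun j => (⟨f' j, hf' j⟩ : N)) i.down with hxdef
  set c : ULift.{u} (Fin n ⊕ Fin m) → D := fun i =>
    Sum.elim (fun j => P (Sum.inl j)) (fun j => -(P (Sum.inr j))) i.down with hcdef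
  have key : ∀ i : Fin n ⊕ Fin m, c ⟨i⟩ • ((x ⟨i⟩ : N) : F)
      = Sum.elim (fun j => (d : D) • (f j * g j)) (fun j => -((d : D) • (f' j * g' j))) i := by
    rintro (j | j)
    · show P (Sum.inl j) • f j = (d : D) • (f j * g j)
      rw [Algebra.smul_def, hP (Sum.inl j)]
      show ((d : D) • g j) * f j = (d : D) • (f j * g j)
      rw [smul_mul_assoc, mul_comm (g j) (f j)]
    · show (-(P (Sum.inr j))) • f' j = -((d : D) • (f' j * g' j))
      rw [neg_smul, Algebra.smul_def, hP (Sum.inr j)]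
      show -(((d : D) • g' j) * f' j) = -((d : D) • (f' j * g' j))
      rw [smul_mul_assoc, mul_comm (g' j) (f' j)]
  have hrel : ∑ i, c i • x i = 0 := by
    rw [← ZeroMemClass.coe_eq_zero]
    have hcoe : ((∑ i, c i • x i : N) : F) = ∑ i, c i • ((x i : N) : F) := by
      push_cast
      rfl
    rw [hcoe]
    rw [← Fintype.sum_equiv (Equiv.ulift (α := Fin n ⊕ Fin m)).symm
      (fun i : Fin n ⊕ Fin m =>
        Sum.elim (fun j => (d : D) • (f j * g j)) (fun j => -((d : D) • (f' j * g' j))) i)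
      (fun i => c i • ((x i : N) : F)) (fun i => (key i).symm)]
    rw [Fintype.sum_sum_type]
    show (∑ j : Fin n, (d:D) • (f j * g j)) + (∑ j : Fin m, -((d:D) • (f' j * g' j))) = 0
    rw [Finset.sum_neg_distrib, ← Finset.smul_sum, ← Finset.smul_sum, ← hz1, ← hz2]
    exact add_neg_cancel _
  haveI : Module.Flat D N := hN
  obtain ⟨κ, a, y, hxa, hcrel⟩ := Module.Flat.isTrivialRelation_of_sum_smul_eq_zero hrel
  -- the intersection elements
  set t : Fin κ → F := fun l => ∑ j : Fin n, a ⟨Sum.inl j⟩ l • g j with htdef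
  have htA : ∀ l, t l ∈ A := fun l => Submodule.sum_mem _ fun j _ => A.smul_mem _ (hg j)
  have htB : ∀ l, t l ∈ B := by
    intro l
    have h1 : (d : D) • t l = algebraMap D F (∑ j : Fin n, P (Sum.inl j) * a ⟨Sum.inl j⟩ l) := by
      rw [htdef, Finset.smul_sum, map_sum]
      refine Finset.sum_congr rfl fun j _ => ?_
      have hPj : algebraMap D F (P (Sum.inl j)) = (d : D) • g j := hP (Sum.inl j)
      rw [map_mul, hPj, smul_mul_assoc]
      congr 1
      rw [Algebra.smul_def, mul_comm]
    have h2 : ∑ j : Fin n, P (Sum.inl j) * a ⟨Sum.inl j⟩ l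
        = ∑ j : Fin m, P (Sum.inr j) * a ⟨Sum.inr j⟩ l := by
      have := hcrel l
      rw [← Fintype.sum_equiv (Equiv.ulift (α := Fin n ⊕ Fin m)).symm
        (fun i : Fin n ⊕ Fin m => c ⟨i⟩ * a ⟨i⟩ l) (fun i => c i * a i l) (fun i => rfl),
        Fintype.sum_sum_type] at this
      have hsimp : (∑ j : Fin n, P (Sum.inl j) * a ⟨Sum.inl j⟩ l)
          + ∑ j : Fin m, (-(P (Sum.inr j))) * a ⟨Sum.inr j⟩ l = 0 := this
      rw [← sub_eq_zero]
      rw [← hsimp]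
      simp [neg_mul, Finset.sum_neg_distrib, sub_eq_add_neg]
    have h3 : (d : D) • t l = (d : D) • (∑ j : Fin m, a ⟨Sum.inr j⟩ l • g' j) := by
      rw [h1, h2, Finset.smul_sum, map_sum]
      refine Finset.sum_congr rfl fun j _ => ?_
      have hPj : algebraMap D F (P (Sum.inr j)) = (d : D) • g' j := hP (Sum.inr j)
      rw [map_mul, hPj, smul_mul_assoc]
      congr 1
      rw [Algebra.smul_def, mul_comm]
    rw [hdinj _ _ h3]
    exact Submodule.sum_mem _ fun j _ => B.smul_mem _ (hg' j)
  -- conclude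
  have hzrep : z = ∑ l, (y l : F) * t l := by
    rw [hz1]
    have hfj : ∀ j : Fin n, f j = ∑ l, a ⟨Sum.inl j⟩ l • (y l : F) := by
      intro j
      have := congrArg (Subtype.val) (hxa ⟨Sum.inl j⟩)
      simpa [Submodule.coe_sum, hxdef] using this
    calc ∑ j : Fin n, f j * g j = ∑ j : Fin n, ∑ l, (a ⟨Sum.inl j⟩ l • (y l : F)) * g j := by
          refine Finset.sum_congr rfl fun j _ => ?_
          rw [hfj j, Finset.sum_mul]
      _ = ∑ l, ∑ j : Fin n, (y l : F) * (a ⟨Sum.inl j⟩ l • g j) := by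
          rw [Finset.sum_comm]
          refine Finset.sum_congr rfl fun l _ => Finset.sum_congr rfl fun j _ => ?_
          rw [smul_mul_assoc, mul_smul_comm]
      _ = ∑ l, (y l : F) * t l := by
          refine Finset.sum_congr rfl fun l _ => ?_
          rw [htdef, Finset.mul_sum]
  rw [hzrep]
  exact Submodule.sum_mem _ fun l _ =>
    Submodule.mul_mem_mul (y l).2 (Submodule.mem_inf.mpr ⟨htA l, htB l⟩)

/-- Universe-polymorphic version of `flat_inter_core`, by transfer along the canonical
isomorphism with the fraction ring. -/
lemma flat_inter {D : Type u} {K : Type v} [CommRing D] [IsDomain D] [Field K]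
    [Algebra D K] [IsFractionRing D K] (N A B : Submodule D K)
    (hN : Module.Flat D N) : (N * A) ⊓ (N * B) ≤ N * (A ⊓ B) := by
  set e : K ≃ₐ[D] FractionRing D := (FractionRing.algEquiv D K).symm with hedef
  set φ : K →ₐ[D] FractionRing D := e.toAlgHom with hφdef
  have hinj : Function.Injective φ.toLinearMap := e.injective
  have hflat : Module.Flat D (N.map φ.toLinearMap) :=
    Module.Flat.of_linearEquiv
      (Submodule.equivMapOfInjective φ.toLinearMap hinj N).symm
  have key := flat_inter_core (N.map φ.toLinearMap) (A.map φ.toLinearMap)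
    (B.map φ.toLinearMap) hflat
  intro z hz
  have hz1 : φ z ∈ Submodule.map φ.toLinearMap (N * A) := ⟨z, hz.1, rfl⟩
  have hz2 : φ z ∈ Submodule.map φ.toLinearMap (N * B) := ⟨z, hz.2, rfl⟩
  rw [Submodule.map_mul] at hz1 hz2
  have hm := key ⟨hz1, hz2⟩
  rw [← Submodule.map_inf _ hinj, ← Submodule.map_mul] at hm
  obtain ⟨w, hw, hwz⟩ := hm
  have : w = z := hinj hwz
  rwa [← this]

end AuxFlat

section AuxFracIdeal

variable {D : Type u} {K : Type v} [CommRing D] [IsDomain D] [Field K]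
  [Algebra D K] [IsFractionRing D K]

lemma my_inv_ne_zero {J : FractionalIdeal D⁰ K} (h : J ≠ 0) : J⁻¹ ≠ 0 := by
  obtain ⟨a, ha, hfrac⟩ := J.isFractional
  have hmem : algebraMap D K a ∈ J⁻¹ := by
    rw [FractionalIdeal.mem_inv_iff h]
    intro y hy
    obtain ⟨c, hc⟩ := hfrac y hy
    rw [FractionalIdeal.mem_one_iff]
    exact ⟨c, by rw [hc, Algebra.smul_def]⟩
  intro h0
  rw [h0] at hmem
  exact IsFractionRing.to_map_ne_zero_of_mem_nonZeroDivisors ha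
    ((FractionalIdeal.mem_zero_iff _).mp hmem)

lemma my_le_inv_inv {I : FractionalIdeal D⁰ K} (hI : I ≠ 0) : I ≤ (I⁻¹)⁻¹ := by
  rw [FractionalIdeal.inv_eq, FractionalIdeal.inv_eq,
    FractionalIdeal.le_div_iff_mul_le (show (1 / I : FractionalIdeal D⁰ K) ≠ 0 from
      by rw [← FractionalIdeal.inv_eq]; exact my_inv_ne_zero hI)]
  exact FractionalIdeal.mul_one_div_le_one

lemma my_inv_inv_inv {I : FractionalIdeal D⁰ K} (hI : I ≠ 0) : ((I⁻¹)⁻¹)⁻¹ = I⁻¹ := by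
  have h1 : I⁻¹ ≠ 0 := my_inv_ne_zero hI
  have h2 : (I⁻¹)⁻¹ ≠ 0 := my_inv_ne_zero h1
  refine le_antisymm ?_ (my_le_inv_inv h1)
  exact FractionalIdeal.inv_anti_mono hI h2 (my_le_inv_inv hI)

lemma subset_tClosure (I : FractionalIdeal D⁰ K) :
    (I : Submodule D K) ≤ tClosure D K I := by
  intro x hx
  have hle : FractionalIdeal.spanSingleton D⁰ x ≤ I :=
    FractionalIdeal.spanSingleton_le_iff_mem.mpr (FractionalIdeal.mem_coe.mp hx)
  have hfg : ((FractionalIdeal.spanSingleton D⁰ x : FractionalIdeal D⁰ K) :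
      Submodule D K).FG := by
    rw [FractionalIdeal.coe_spanSingleton]
    exact Submodule.fg_span_singleton x
  have hxmem : x ∈ ((1 / (1 / (FractionalIdeal.spanSingleton D⁰ x)) :
      FractionalIdeal D⁰ K) : Submodule D K) := by
    rw [← FractionalIdeal.inv_eq, ← FractionalIdeal.inv_eq,
      FractionalIdeal.spanSingleton_inv, FractionalIdeal.spanSingleton_inv, inv_inv]
    exact FractionalIdeal.mem_coe.mpr (FractionalIdeal.mem_spanSingleton_self _ _)
  exact le_iSup (fun (J : {J : FractionalIdeal D⁰ K // J ≤ I ∧ (J : Submodule D K).FG}) =>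
    ((1 / (1 / (J : FractionalIdeal D⁰ K)) : FractionalIdeal D⁰ K) : Submodule D K))
    ⟨FractionalIdeal.spanSingleton D⁰ x, hle, hfg⟩ hxmem

lemma tClosure_le {J : FractionalIdeal D⁰ K} (hJ0 : J ≠ 0) :
    tClosure D K J ≤ ((1 / (1 / J) : FractionalIdeal D⁰ K) : Submodule D K) := by
  apply iSup_le
  rintro ⟨J', hle, hfg⟩
  show ((1 / (1 / J') : FractionalIdeal D⁰ K) : Submodule D K) ≤ _
  by_cases h0 : J' = 0
  · rw [h0, FractionalIdeal.div_zero, FractionalIdeal.div_zero, FractionalIdeal.coe_zero]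
    exact bot_le
  · apply FractionalIdeal.coe_le_coe.mpr
    rw [← FractionalIdeal.inv_eq, ← FractionalIdeal.inv_eq, ← FractionalIdeal.inv_eq,
      ← FractionalIdeal.inv_eq]
    exact FractionalIdeal.inv_anti_mono (my_inv_ne_zero hJ0) (my_inv_ne_zero h0)
      (FractionalIdeal.inv_anti_mono h0 hJ0 hle)

end AuxFracIdeal

/-- A `t`-finite fractional ideal of an integral domain is flat (as a `D`-module)
if and only if it is invertible. -/
theorem flat_iff_invertible_of_tFinite
    (D K : Type*) [CommRing D] [IsDomain D] [Field K] [Algebra D K] [IsFractionRing D K]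
    (I : FractionalIdeal D⁰ K) (hI : I ≠ 0)
    (htf : ∃ J : FractionalIdeal D⁰ K, J ≤ I ∧ (J : Submodule D K).FG ∧
      tClosure D K J = tClosure D K I) :
    Module.Flat D (I : Submodule D K) ↔ I * I⁻¹ = 1 := by
  obtain ⟨J, hJI, hJfg, htc⟩ := htf
  have hJ0 : J ≠ 0 := by
    rintro rfl
    have hbot : tClosure D K (0 : FractionalIdeal D⁰ K) = ⊥ := by
      apply le_bot_iff.mp
      apply iSup_le
      rintro ⟨J', hle, hfg⟩
      have h0 : J' = 0 := le_antisymm hle (FractionalIdeal.zero_le _)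
      show ((1 / (1 / J') : FractionalIdeal D⁰ K) : Submodule D K) ≤ ⊥
      rw [h0, FractionalIdeal.div_zero, FractionalIdeal.div_zero, FractionalIdeal.coe_zero]
    apply hI
    rw [← FractionalIdeal.coeToSubmodule_eq_bot]
    have hsub := subset_tClosure I
    rw [← htc, hbot] at hsub
    exact le_bot_iff.mp hsub
  constructor
  · -- flat → invertible
    intro hflat
    classical
    have hsub : (I : Submodule D K) ≤ ((1 / (1 / J) : FractionalIdeal D⁰ K) : Submodule D K) :=
      le_trans (subset_tClosure I) (htc ▸ tClosure_le hJ0)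
    have hle2 : I ≤ (J⁻¹)⁻¹ := by
      rw [FractionalIdeal.inv_eq, FractionalIdeal.inv_eq]
      exact FractionalIdeal.coe_le_coe.mp hsub
    have hIinv : I⁻¹ = J⁻¹ := by
      refine le_antisymm (FractionalIdeal.inv_anti_mono hJ0 hI hJI) ?_
      have h := FractionalIdeal.inv_anti_mono hI
        (my_inv_ne_zero (my_inv_ne_zero hJ0)) hle2
      rwa [my_inv_inv_inv hJ0] at h
    set N := (I : Submodule D K) with hNdef
    have h_single : ∀ a : K, a ∈ N → a ≠ 0 →
        (1 : K) ∈ N * ((1 : Submodule D K) / Submodule.span D {a}) := by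
      intro a haN ha
      have hainv : a⁻¹ ∈ (1 : Submodule D K) / Submodule.span D {a} := by
        rw [Submodule.mem_div_iff_forall_mul_mem]
        intro y hy
        rw [Submodule.mem_span_singleton] at hy
        obtain ⟨r, rfl⟩ := hy
        rw [mul_smul_comm, inv_mul_cancel₀ ha, Submodule.one_eq_span]
        exact Submodule.smul_mem _ r (Submodule.mem_span_singleton_self 1)
      have h1 : (1 : K) = a * a⁻¹ := (mul_inv_cancel₀ ha).symm
      rw [h1]
      exact Submodule.mul_mem_mul haN hainv
    have h_div_sup : ∀ P Q : Submodule D K,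
        (1 : Submodule D K) / (P ⊔ Q) = ((1 : Submodule D K) / P) ⊓ ((1 : Submodule D K) / Q) := by
      intro P Q
      apply le_antisymm
      · refine le_inf ?_ ?_ <;> intro x hx <;>
          rw [Submodule.mem_div_iff_forall_mul_mem] at hx ⊢
        · exact fun y hy => hx y (Submodule.mem_sup_left hy)
        · exact fun y hy => hx y (Submodule.mem_sup_right hy)
      · intro x hx
        rw [Submodule.mem_div_iff_forall_mul_mem]
        intro y hy
        obtain ⟨p, hp, q, hq, rfl⟩ := Submodule.mem_sup.mp hy
        rw [mul_add]
        exact Submodule.add_mem _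
          (Submodule.mem_div_iff_forall_mul_mem.mp hx.1 p hp)
          (Submodule.mem_div_iff_forall_mul_mem.mp hx.2 q hq)
    have main : ∀ (T : Finset K), (↑T : Set K) ⊆ (N : Set K) → ∀ a : K, a ∈ N → a ≠ 0 →
        (1 : K) ∈ N * ((1 : Submodule D K) / Submodule.span D (insert a (↑T : Set K))) := by
      intro T
      induction T using Finset.induction_on with
      | empty =>
        intro _ a haN ha
        have : (insert a (↑(∅ : Finset K) : Set K)) = {a} := by simp
        rw [this]
        exact h_single a haN ha
      | @insert b T hbT ih =>
        intro hsub a haN ha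
        have hTN : (↑T : Set K) ⊆ (N : Set K) := by
          intro y hy; exact hsub (by simp [hy])
        have hbN : b ∈ N := hsub (by simp)
        have h2 := ih hTN a haN ha
        rw [Finset.coe_insert, Set.insert_comm]
        by_cases hb : b = 0
        · rw [hb, Submodule.span_insert_zero]
          exact h2
        · have h1 := h_single b hbN hb
          rw [Submodule.span_insert, h_div_sup]
          exact flat_inter N _ _ hflat (Submodule.mem_inf.mpr ⟨h1, h2⟩)
    obtain ⟨S, hS⟩ := hJfg
    have hJN : (J : Submodule D K) ≤ N := FractionalIdeal.coe_le_coe.mpr hJI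
    have hSN : (↑S : Set K) ⊆ (N : Set K) := fun y hy => hJN (hS ▸ Submodule.subset_span hy)
    obtain ⟨a, haS, ha0⟩ : ∃ a ∈ S, a ≠ (0 : K) := by
      by_contra h
      push_neg at h
      apply hJ0
      rw [← FractionalIdeal.coeToSubmodule_eq_bot, ← hS]
      exact Submodule.span_eq_bot.mpr fun x hx => h x hx
    have hmain := main (S.erase a) (fun y hy => hSN (Finset.erase_subset a S hy))
      a (hSN haS) ha0
    have hcover : insert a (↑(S.erase a) : Set K) = (↑S : Set K) := by
      rw [← Finset.coe_insert, Finset.insert_erase haS]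
    rw [hcover] at hmain
    have h1mem : (1 : K) ∈ I * I⁻¹ := by
      rw [← FractionalIdeal.mem_coe, FractionalIdeal.coe_mul, hIinv, FractionalIdeal.inv_eq,
        FractionalIdeal.coe_div hJ0, FractionalIdeal.coe_one, ← hS]
      exact hmain
    refine le_antisymm ?_ (FractionalIdeal.one_le.mpr h1mem)
    rw [FractionalIdeal.inv_eq]
    exact FractionalIdeal.mul_one_div_le_one
  · -- invertible → flat
    intro hinv
    have h1 : (1 : K) ∈ ((I * I⁻¹ : FractionalIdeal D⁰ K) : Submodule D K) := by
      rw [hinv, FractionalIdeal.coe_one]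
      exact Submodule.one_le.mp le_rfl
    rw [FractionalIdeal.coe_mul] at h1
    obtain ⟨n, f, g, hf, hg, hsum⟩ := mem_mul_rep h1
    set N := (I : Submodule D K) with hNdef
    have hginv : ∀ (j : Fin n) (x : N), g j * (x : K) ∈
        LinearMap.range (Algebra.linearMap D K) := by
      intro j x
      have hm : g j * (x : K) ∈ ((I⁻¹ * I : FractionalIdeal D⁰ K) : Submodule D K) := by
        rw [FractionalIdeal.coe_mul]
        exact Submodule.mul_mem_mul (hg j) x.2
      rw [mul_comm I⁻¹ I, hinv, FractionalIdeal.coe_one, Submodule.one_eq_range] at hm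
      exact hm
    set e1 : D ≃ₗ[D] LinearMap.range (Algebra.linearMap D K) :=
      LinearEquiv.ofInjective (Algebra.linearMap D K)
        (IsFractionRing.injective D K) with he1def
    set iComp : Fin n → (N →ₗ[D] D) := fun j =>
      (e1.symm.toLinearMap).comp
        (LinearMap.codRestrict (LinearMap.range (Algebra.linearMap D K))
          ((LinearMap.mulLeft D (g j)).comp N.subtype) (hginv j)) with hiCompdef
    set i : N →ₗ[D] (Fin n → D) := LinearMap.pi iComp with hidef
    set s : (Fin n → D) →ₗ[D] N :=
      { toFun := fun c => ⟨∑ j, c j • f j,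
          Submodule.sum_mem _ fun j _ => N.smul_mem _ (hf j)⟩,
        map_add' := by
          intro c₁ c₂
          apply Subtype.ext
          simp [add_smul, Finset.sum_add_distrib],
        map_smul' := by
          intro r c
          apply Subtype.ext
          simp [smul_smul, Finset.smul_sum] } with hsdef
    have halg : ∀ (j : Fin n) (x : N), algebraMap D K (iComp j x) = g j * (x : K) := by
      intro j x
      have h1' : e1 (iComp j x) = ⟨g j * (x : K), hginv j x⟩ := by
        rw [hiCompdef]
        simp only [LinearMap.comp_apply, LinearEquiv.coe_toLinearMap]
        rw [LinearEquiv.apply_symm_apply]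
        apply Subtype.ext
        simp [LinearMap.codRestrict_apply]
        rfl
      have h2' : ((e1 (iComp j x)) : K) = algebraMap D K (iComp j x) := by
        rw [he1def]
        rfl
      rw [← h2', h1']
    have hsplit : s.comp i = LinearMap.id := by
      apply LinearMap.ext
      intro x
      apply Subtype.ext
      show ∑ j, (i x j) • f j = (x : K)
      have : ∀ j : Fin n, (i x j) • f j = (g j * (x : K)) * f j := by
        intro j
        rw [hidef]
        show (iComp j x) • f j = (g j * (x : K)) * f j
        rw [Algebra.smul_def, halg j x]
      rw [Fintype.sum_congr _ _ this]
      have hx1 : ∑ j, (g j * (x : K)) * f j = (x : K) * ∑ j, f j * g j := by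
        rw [Finset.mul_sum]
        exact Finset.sum_congr rfl fun j _ => by ring
      rw [hx1, ← hsum, mul_one]
    have hproj : Module.Projective D N := Module.Projective.of_split i s hsplit
    exact Module.Flat.of_projective
end

section
/- Let D be an integral domain, J a nonzero finitely generated fractional ideal of D, and I a flat fractional ideal of D. Then (I : J) = I·J⁻¹, where (I:J) = {x ∈ K | xJ ⊆ I} and J⁻¹ = (D:J). -/
open scoped nonZeroDivisors

section Aux

open TensorProduct

variable {D K : Type*} [CommRing D] [IsDomain D] [Field K] [Algebra D K] [IsFractionRing D K]

/-- The multiplication map `F ⊗[D] K → K`. -/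
noncomputable def mulK (F : Submodule D K) : F ⊗[D] K →ₗ[D] K :=
  TensorProduct.lift ((LinearMap.mul D K).comp F.subtype)

lemma mulK_tmul (F : Submodule D K) (x : F) (k : K) : mulK F (x ⊗ₜ k) = (x : K) * k := rfl

lemma exists_pure (F : Submodule D K) (t : F ⊗[D] K) :
    ∃ (x : F) (d : D⁰), t = x ⊗ₜ (algebraMap D K d)⁻¹ := by
  induction t with
  | zero => exact ⟨0, 1, by simp⟩
  | tmul x k =>
    obtain ⟨⟨c, d⟩, h : IsLocalization.mk' K c d = k⟩ := IsLocalization.mk'_surjective D⁰ k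
    refine ⟨c • x, d, ?_⟩
    rw [smul_tmul, ← h, IsFractionRing.mk'_eq_div, div_eq_mul_inv, Algebra.smul_def]
  | add a b ha hb =>
    obtain ⟨x, d, rfl⟩ := ha
    obtain ⟨y, e, rfl⟩ := hb
    have hd : algebraMap D K d ≠ 0 :=
      IsFractionRing.to_map_ne_zero_of_mem_nonZeroDivisors d.2
    have he : algebraMap D K e ≠ 0 :=
      IsFractionRing.to_map_ne_zero_of_mem_nonZeroDivisors e.2
    refine ⟨(e : D) • x + (d : D) • y, d * e, ?_⟩
    rw [add_tmul, smul_tmul, smul_tmul]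
    congr 2
    · rw [Algebra.smul_def]
      push_cast [map_mul]
      field_simp
    · rw [Algebra.smul_def]
      push_cast [map_mul]
      field_simp

lemma mulK_injective (F : Submodule D K) : Function.Injective (mulK F) := by
  rw [← @LinearMap.ker_eq_bot D D (F ⊗[D] K) K _ _ TensorProduct.addCommGroup, LinearMap.ker_eq_bot']
  intro t ht
  obtain ⟨x, d, rfl⟩ := exists_pure F t
  have hd : algebraMap D K d ≠ 0 :=
    IsFractionRing.to_map_ne_zero_of_mem_nonZeroDivisors d.2
  rw [mulK_tmul] at ht
  have hx : (x : K) = 0 := by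
    rcases mul_eq_zero.mp ht with h | h
    · exact h
    · exact absurd (inv_eq_zero.mp h) hd
  rw [show x = 0 from Subtype.ext hx, TensorProduct.zero_tmul]

lemma mulK_comp (F A : Submodule D K) :
    Submodule.mulMap F A = (mulK F).comp (A.subtype.lTensor F) :=
  TensorProduct.ext' fun _ _ => rfl

lemma mulMap_injective (F A : Submodule D K) [Module.Flat D F] :
    Function.Injective (Submodule.mulMap F A) := by
  rw [mulK_comp]
  exact (mulK_injective F).comp
    (Module.Flat.lTensor_preserves_injective_linearMap _ A.injective_subtype)

lemma flat_mul_inf (F A B : Submodule D K) [Module.Flat D F] :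
    F * (A ⊓ B) = F * A ⊓ F * B := by
  refine le_antisymm (le_inf (mul_le_mul_right inf_le_left _)
    (mul_le_mul_right inf_le_right _)) ?_
  rintro z ⟨hzA, hzB⟩
  rw [← Submodule.mulMap_range] at hzA hzB ⊢
  obtain ⟨s, hs⟩ := hzA
  obtain ⟨t, ht⟩ := hzB
  set g : ↥(A ⊓ B) →ₗ[D] ↥A := Submodule.inclusion inf_le_left with hg
  set f : ↥A →ₗ[D] K ⧸ B := B.mkQ.comp A.subtype with hf
  have hexact : Function.Exact g f := by
    intro a
    constructor
    · intro ha
      have haB : (a : K) ∈ B := by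
        simpa [hf, Submodule.Quotient.mk_eq_zero] using ha
      exact ⟨⟨(a : K), a.2, haB⟩, rfl⟩
    · rintro ⟨b, rfl⟩
      simpa [hf, hg, Submodule.Quotient.mk_eq_zero] using b.2.2
  have hflatex := Module.Flat.lTensor_exact (M := ↥F) hexact
  have hw : A.subtype.lTensor F s = B.subtype.lTensor F t := by
    apply mulK_injective F
    have h1 : mulK F (A.subtype.lTensor F s) = Submodule.mulMap F A s := by
      rw [mulK_comp]; rfl
    have h2 : mulK F (B.subtype.lTensor F t) = Submodule.mulMap F B t := by
      rw [mulK_comp]; rfl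
    rw [h1, h2, hs, ht]
  have h0 : LinearMap.lTensor (↥F) f s = 0 := by
    have h1 : LinearMap.lTensor (↥F) f s
        = LinearMap.lTensor (↥F) B.mkQ (LinearMap.lTensor (↥F) A.subtype s) := by
      rw [hf, LinearMap.lTensor_comp]; rfl
    rw [h1, hw, ← LinearMap.comp_apply, ← LinearMap.lTensor_comp]
    have hz : B.mkQ ∘ₗ B.subtype = 0 := by
      ext b; simpa [Submodule.Quotient.mk_eq_zero] using b.2
    rw [hz, LinearMap.lTensor_zero, LinearMap.zero_apply]
  obtain ⟨r, hr⟩ := (hflatex s).mp h0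
  refine ⟨r, ?_⟩
  have hc := LinearMap.congr_fun
    (Submodule.mulMap_comp_lTensor F (inf_le_left (a := A) (b := B))) r
  simp only [LinearMap.comp_apply] at hc
  calc Submodule.mulMap F (A ⊓ B) r
      = Submodule.mulMap F A (LinearMap.lTensor (↥F) g r) := hc.symm
    _ = z := by rw [hr, hs]

lemma aux_div_sup (F A B : Submodule D K) : F / (A ⊔ B) = F / A ⊓ F / B := by
  ext x
  simp only [Submodule.mem_div_iff_forall_mul_mem, Submodule.mem_inf]
  constructor
  · intro h
    exact ⟨fun y hy => h y (Submodule.mem_sup_left hy), fun y hy => h y (Submodule.mem_sup_right hy)⟩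
  · rintro ⟨h1, h2⟩ y hy
    obtain ⟨a, ha, b, hb, rfl⟩ := Submodule.mem_sup.mp hy
    rw [mul_add]
    exact Submodule.add_mem _ (h1 a ha) (h2 b hb)

lemma mem_div_span_singleton (F : Submodule D K) (a x : K) :
    x ∈ F / Submodule.span D {a} ↔ x * a ∈ F := by
  rw [Submodule.mem_div_iff_forall_mul_mem]
  constructor
  · intro h
    exact h a (Submodule.mem_span_singleton_self a)
  · intro h y hy
    obtain ⟨c, rfl⟩ := Submodule.mem_span_singleton.mp hy
    rw [mul_smul_comm]
    exact F.smul_mem c h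

lemma mul_one_div_le_div (F J : Submodule D K) : F * ((1 : Submodule D K) / J) ≤ F / J := by
  rw [Submodule.mul_le]
  intro f hf y hy
  rw [Submodule.mem_div_iff_forall_mul_mem]
  intro z hz
  have h1 : y * z ∈ (1 : Submodule D K) := Submodule.mem_div_iff_forall_mul_mem.mp hy z hz
  obtain ⟨d, hd⟩ := Submodule.mem_one.mp h1
  have h2 : f * y * z = d • f := by
    rw [mul_assoc, ← hd, Algebra.smul_def, mul_comm]
  rw [h2]
  exact F.smul_mem d hf

lemma div_span_singleton_eq (F : Submodule D K) {a : K} (ha : a ≠ 0) :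
    F / Submodule.span D {a} = F * ((1 : Submodule D K) / Submodule.span D {a}) := by
  refine le_antisymm ?_ (mul_one_div_le_div F _)
  intro x hx
  rw [mem_div_span_singleton] at hx
  have hinv : a⁻¹ ∈ (1 : Submodule D K) / Submodule.span D {a} := by
    rw [mem_div_span_singleton, inv_mul_cancel₀ ha]
    exact Submodule.mem_one.mpr ⟨1, map_one _⟩
  have hxa : x = (x * a) * a⁻¹ := by field_simp
  rw [hxa]
  exact Submodule.mul_mem_mul hx hinv

lemma div_eq_mul_one_div_of_flat_fg (F : Submodule D K) [Module.Flat D F]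
    (s : Finset K) (hs : s.Nonempty) (h0 : (0 : K) ∉ s) :
    F / Submodule.span D (s : Set K)
      = F * ((1 : Submodule D K) / Submodule.span D (s : Set K)) := by
  induction hs using Finset.Nonempty.cons_induction with
  | singleton a =>
    have ha : a ≠ 0 := by simpa using fun h => h0 (by simp [h])
    simpa using div_span_singleton_eq F ha
  | cons a s ha hs ih =>
    have ha0 : a ≠ 0 := fun h => h0 (by simp [h])
    have h0' : (0 : K) ∉ s := fun h => h0 (Finset.mem_cons_of_mem h)
    have hspan : Submodule.span D ((Finset.cons a s ha : Finset K) : Set K)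
        = Submodule.span D {a} ⊔ Submodule.span D (s : Set K) := by
      rw [Finset.coe_cons, Submodule.span_insert]
    rw [hspan, aux_div_sup, aux_div_sup, div_span_singleton_eq F ha0, ih h0',
      ← flat_mul_inf]

end Aux

/-- If `I` is a flat fractional ideal and `J` a nonzero finitely generated fractional
ideal of an integral domain `D`, then `(I : J) = I · J⁻¹`. -/
theorem div_eq_mul_inv_of_flat
    (D K : Type*) [CommRing D] [IsDomain D] [Field K] [Algebra D K] [IsFractionRing D K]
    (I J : FractionalIdeal D⁰ K) (hJ : J ≠ 0) (hJfg : (J : Submodule D K).FG)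
    (hflat : Module.Flat D (I : Submodule D K)) :
    I / J = I * (1 / J) := by
  haveI := hflat
  classical
  obtain ⟨t, ht⟩ := hJfg
  set s : Finset K := t.erase 0 with hsdef
  have hspan : Submodule.span D (s : Set K) = (J : Submodule D K) := by
    rw [← ht]
    refine le_antisymm (Submodule.span_mono ?_) (Submodule.span_le.mpr ?_)
    · exact fun x hx => Finset.mem_of_mem_erase hx
    · intro x hx
      by_cases hx0 : x = 0
      · simp [hx0]
      · exact Submodule.subset_span (Finset.mem_erase.mpr ⟨hx0, hx⟩)
  have hne : s.Nonempty := by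
    rw [Finset.nonempty_iff_ne_empty]
    intro h
    apply hJ
    rw [← FractionalIdeal.coeToSubmodule_eq_bot, ← hspan, h]
    simp
  have h0 : (0 : K) ∉ s := Finset.notMem_erase 0 t
  have key := div_eq_mul_one_div_of_flat_fg (I : Submodule D K) s hne h0
  rw [hspan] at key
  have goal2 : ((I / J : FractionalIdeal D⁰ K) : Submodule D K)
      = ((I * (1 / J) : FractionalIdeal D⁰ K) : Submodule D K) := by
    rw [FractionalIdeal.coe_div hJ, FractionalIdeal.coe_mul, FractionalIdeal.coe_div hJ,
      FractionalIdeal.coe_one]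
    exact key
  exact FractionalIdeal.coeToSubmodule_injective goal2
end

section
/- Let D be an integral domain and I a nonzero fractional ideal of D. If I is flat as a D-module, then I is a t-ideal, i.e., I = I_t. -/
open scoped nonZeroDivisors

universe u v


section ULiftFlat
variable (R : Type u) (M : Type v) [CommRing R] [AddCommGroup M] [Module R M]

noncomputable instance ulAlg : Algebra (ULift.{v} R) R :=
  { algebraMap := ULift.ringEquiv.toRingHom
    commutes' := fun _ _ => mul_comm _ _
    smul_def' := fun _ _ => (smul_eq_mul (α := R) _ _).symm ▸ rfl }

noncomputable def eqvRR : R ≃ₗ[ULift.{v} R] ULift.{v} R where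
  toFun := ULift.up
  invFun := ULift.down
  map_add' := fun _ _ => rfl
  map_smul' := fun a r => by ext; show a.down • r = (a * ULift.up r).down; rfl
  left_inv := fun _ => rfl
  right_inv := fun _ => rfl

theorem flat_ulift [Module.Flat R M] : Module.Flat (ULift.{v} R) (ULift.{u} M) := by
  have h1 : Module.Flat (ULift.{v} R) R := Module.Flat.of_linearEquiv (eqvRR R)
  haveI : Module.Flat R (ULift.{u} M) := inferInstance
  exact Module.Flat.trans (ULift.{v} R) R (ULift.{u} M)

end ULiftFlat

theorem up_sum {M : Type v} [AddCommMonoid M] {α : Type*} (s : Finset α) (f : α → M) :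
    (ULift.up.{u} (∑ i ∈ s, f i)) = ∑ i ∈ s, ULift.up.{u} (f i) :=
  map_sum (AddEquiv.ulift.symm : M ≃+ ULift.{u} M) f s

/-- Cross-universe multi-relation equational criterion consequence. -/
theorem flat_multirel {R : Type u} {M : Type v} [CommRing R] [AddCommGroup M] [Module R M]
    [Module.Flat R M] {ι ι' : Type v} [Fintype ι] [Fintype ι']
    (x : ι → M) (c : ι' → ι → R)
    (hc : ∀ k, ∑ i, c k i • x i = 0) :
    ∃ (κ : Type (max u v)) (_ : Fintype κ) (b : ι → κ → R) (y : κ → M),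
      (∀ i, x i = ∑ j, b i j • y j) ∧ ∀ k j, ∑ i, c k i * b i j = 0 := by
  classical
  let R' := ULift.{v} R
  let M' := ULift.{u} M
  haveI : Module.Flat R' M' := flat_ulift R M
  let N := ULift.{u} ι →₀ R'
  let KK := ULift.{u} ι' →₀ R'
  let xl : N →ₗ[R'] M' := Finsupp.linearCombination R' (fun i => ULift.up (x i.down))
  let rel : ι' → N := fun k => ∑ i : ι, Finsupp.single (ULift.up i) (ULift.up (c k i))
  let fl : KK →ₗ[R'] N := Finsupp.linearCombination R' (fun k => rel k.down)
  have hxl_single : ∀ (i : ι) (r : R),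
      xl (Finsupp.single (ULift.up i) (ULift.up r)) = ULift.up (r • x i) := by
    intro i r
    simp only [xl]
    rw [Finsupp.linearCombination_single]
    rfl
  have hxl_rel : ∀ k : ι', xl (rel k) = 0 := by
    intro k
    have h1 : xl (rel k) = ∑ i : ι, xl (Finsupp.single (ULift.up i) (ULift.up (c k i))) :=
      map_sum xl _ _
    rw [h1, Finset.sum_congr rfl (fun i _ => hxl_single i (c k i)), ← up_sum, hc k]
    rfl
  have hcomp : xl ∘ₗ fl = 0 := by
    apply Finsupp.lhom_ext
    intro k r
    have h1 : fl (Finsupp.single k r) = r • rel k.down := by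
      simp only [fl]
      rw [Finsupp.linearCombination_single]
    rw [LinearMap.comp_apply, h1, LinearMap.zero_apply, map_smul, hxl_rel, smul_zero]
  obtain ⟨κ, hκ, a, y, hya, haf⟩ : ∃ (κ : Type (max u v)) (_ : Fintype κ)
      (a : N →ₗ[R'] (κ →₀ R')) (y : (κ →₀ R') →ₗ[R'] M'), xl = y ∘ₗ a ∧ a ∘ₗ fl = 0 := by
    obtain ⟨k, a, y, hya, haf⟩ :=
      Module.Flat.exists_factorization_of_comp_eq_zero_of_free (R := R') (M := M') hcomp
    let e : (Fin k →₀ R') ≃ₗ[R'] (ULift.{max u v} (Fin k) →₀ R') :=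
      Finsupp.domLCongr Equiv.ulift.symm
    refine ⟨ULift (Fin k), inferInstance, e.toLinearMap ∘ₗ a, y ∘ₗ e.symm.toLinearMap, ?_, ?_⟩
    · rw [hya]; ext n; simp
    · rw [LinearMap.comp_assoc, haf, LinearMap.comp_zero]
  refine ⟨κ, hκ, fun i j => (a (Finsupp.single (ULift.up i) 1) j).down,
    fun j => (y (Finsupp.single j 1)).down, ?_, ?_⟩
  · intro i
    have h1 : xl (Finsupp.single (ULift.up i) 1) = ULift.up (x i) := by
      have := hxl_single i 1
      rw [one_smul] at this
      exact this
    rw [hya] at h1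
    have h2 : a (Finsupp.single (ULift.up i) 1)
        = ∑ j : κ, Finsupp.single j (a (Finsupp.single (ULift.up i) 1) j) :=
      (Finsupp.univ_sum_single _).symm
    have h3 : y (a (Finsupp.single (ULift.up i) 1))
        = ∑ j : κ, (a (Finsupp.single (ULift.up i) 1) j) • y (Finsupp.single j 1) := by
      conv_lhs => rw [h2]
      rw [map_sum]
      refine Finset.sum_congr rfl fun j _ => ?_
      rw [← map_smul, Finsupp.smul_single, smul_eq_mul, mul_one]
    refine ULift.up_injective ?_
    rw [up_sum, ← h1, LinearMap.comp_apply, h3]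
    exact Finset.sum_congr rfl fun j _ => rfl
  · intro k j
    have h0 : a (fl (Finsupp.single (ULift.up k) 1)) = 0 := by
      rw [← LinearMap.comp_apply, haf]; rfl
    have h1 : fl (Finsupp.single (ULift.up k) 1) = rel k := by
      simp only [fl]
      rw [Finsupp.linearCombination_single, one_smul]
    rw [h1] at h0
    have h2 : a (rel k) = ∑ i : ι, (ULift.up (c k i) : R') • a (Finsupp.single (ULift.up i) 1) := by
      simp only [rel, map_sum]
      refine Finset.sum_congr rfl fun i _ => ?_
      rw [← map_smul, Finsupp.smul_single, smul_eq_mul, mul_one]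
    rw [h2] at h0
    have h3 : ∑ i : ι, (ULift.up (c k i) : R') • (a (Finsupp.single (ULift.up i) 1) j) = 0 := by
      have h := congrArg (fun g : κ →₀ R' => g j) h0
      simpa only [Finsupp.finset_sum_apply, Finsupp.smul_apply, Finsupp.coe_zero,
        Pi.zero_apply] using h
    refine ULift.up_injective ?_
    rw [up_sum]
    exact (Finset.sum_congr rfl fun i _ => rfl).trans h3


open scoped nonZeroDivisors

/-- Key lemma: if `J ≤ I` is a nonzero finitely generated subideal and `I` is flat,
then `1 ≤ (1/J) * I`. -/
theorem one_le_one_div_mul {D : Type u} {K : Type v} [CommRing D] [IsDomain D] [Field K]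
    [Algebra D K] [IsFractionRing D K]
    (I J : FractionalIdeal D⁰ K) (hJI : J ≤ I) (hJ0 : J ≠ 0) (hfg : (J : Submodule D K).FG)
    (hflat : Module.Flat D (I : Submodule D K)) :
    (1 : FractionalIdeal D⁰ K) ≤ (1 / J) * I := by
  classical
  obtain ⟨s, hs⟩ := hfg
  obtain ⟨w, hwJ, hw0⟩ := Submodule.ne_bot_iff (J : Submodule D K) |>.mp
    (fun h => hJ0 (FractionalIdeal.coeToSubmodule_eq_bot.mp h))
  set ι : Type v := Option {g : K // g ∈ s} with hι
  let x : ι → K := fun o => o.elim w Subtype.val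
  have hxJ : ∀ i, x i ∈ (J : Submodule D K) := by
    rintro (_ | ⟨g, hg⟩)
    · exact hwJ
    · rw [← hs]; exact Submodule.subset_span hg
  have hspan : Submodule.span D (Set.range x) = (J : Submodule D K) := by
    apply le_antisymm
    · rw [Submodule.span_le]
      rintro _ ⟨i, rfl⟩
      exact hxJ i
    · rw [← hs]
      apply Submodule.span_mono
      intro g hg
      exact ⟨some ⟨g, hg⟩, rfl⟩
  obtain ⟨d, hd, hdint⟩ := J.isFractional
  set a : ι → D := fun i => (hdint (x i) (hxJ i)).choose with ha_def
  have ha : ∀ i, algebraMap D K (a i) = d • x i := fun i => (hdint (x i) (hxJ i)).choose_spec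
  have hJI' : (J : Submodule D K) ≤ (I : Submodule D K) := FractionalIdeal.coe_le_coe.mpr hJI
  set M := (I : Submodule D K) with hM
  haveI : Module.Flat D M := hflat
  let xm : ι → M := fun i => ⟨x i, hJI' (hxJ i)⟩
  let c : ι → ι → D := fun k i =>
    (if i = none then a k else 0) - (if i = k then a none else 0)
  have hdK : algebraMap D K d ≠ 0 :=
    IsFractionRing.to_map_ne_zero_of_mem_nonZeroDivisors hd
  have hsum : ∀ (k : ι) (z : ι → K), ∑ i, c k i • z i = a k • z none - a none • z k := by
    intro k z
    simp only [c, sub_smul, Finset.sum_sub_distrib, ite_smul, zero_smul]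
    rw [Finset.sum_ite_eq' Finset.univ none (fun i => a k • z i),
        Finset.sum_ite_eq' Finset.univ k (fun i => a none • z i)]
    simp
  have hc : ∀ k, ∑ i, c k i • xm i = 0 := by
    intro k
    have : ((∑ i, c k i • xm i : M) : K) = ∑ i, c k i • x i := by
      push_cast [M]
      rfl
    rw [← Submodule.coe_eq_zero, this, hsum k x]
    have h1 : (a k : D) • x none = algebraMap D K (a k) * x none := Algebra.smul_def _ _
    have h2 : (a none : D) • x k = algebraMap D K (a none) * x k := Algebra.smul_def _ _
    rw [h1, h2, ha k, ha none]
    simp only [Algebra.smul_def]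
    ring
  obtain ⟨κ, hκ, b, y, hb, hrel⟩ := flat_multirel xm c hc
  -- the relations in D
  have hrelD : ∀ (i : ι) (j : κ), a i * b none j = a none * b i j := by
    intro i j
    have := hrel i j
    rw [show ∀ z : ι → D, ∑ i', c i i' * z i' = a i * z none - a none * z i from ?_] at this
    · exact sub_eq_zero.mp this
    · intro z
      simp only [c, sub_mul, Finset.sum_sub_distrib, ite_mul, zero_mul]
      rw [Finset.sum_ite_eq' Finset.univ none (fun i' => a i * z i'),
          Finset.sum_ite_eq' Finset.univ i (fun i' => a none * z i')]
      simp
  -- key identity in K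
  have hkey : ∀ (i : ι) (j : κ), x i * algebraMap D K (b none j) = x none * algebraMap D K (b i j) := by
    intro i j
    have h := congrArg (algebraMap D K) (hrelD i j)
    rw [map_mul, map_mul, ha i, ha none] at h
    have h' : algebraMap D K d * (x i * algebraMap D K (b none j))
        = algebraMap D K d * (x none * algebraMap D K (b i j)) := by
      rw [Algebra.smul_def, Algebra.smul_def] at h
      ring_nf at h ⊢
      linear_combination h
    exact mul_left_cancel₀ hdK h'
  have hw : x none = w := rfl
  let q : κ → K := fun j => w⁻¹ * algebraMap D K (b none j)
  have hq : ∀ j, q j ∈ ((1 / J : FractionalIdeal D⁰ K) : Submodule D K) := by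
    intro j
    rw [FractionalIdeal.coe_div hJ0, FractionalIdeal.coe_one,
      Submodule.mem_div_iff_forall_mul_mem]
    intro v hv
    rw [← hspan] at hv
    induction hv using Submodule.span_induction with
    | mem v hv =>
        obtain ⟨i, rfl⟩ := hv
        have : q j * x i = algebraMap D K (b i j) := by
          have := hkey i j
          rw [hw] at this
          simp only [q]
          rw [mul_assoc, mul_comm (algebraMap D K (b none j)) (x i), this, ← mul_assoc,
            inv_mul_cancel₀ hw0, one_mul]
        rw [this, Submodule.one_eq_range]
        exact ⟨b i j, rfl⟩
    | zero => rw [mul_zero]; exact Submodule.zero_mem _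
    | add v v' _ _ h h' => rw [mul_add]; exact Submodule.add_mem _ h h'
    | smul r v _ h => rw [mul_smul_comm]; exact Submodule.smul_mem _ r h
  -- 1 = ∑ q j * y j
  have hone : (1 : K) = ∑ j, q j * ((y j : M) : K) := by
    have h1 : w = ∑ j, algebraMap D K (b none j) * ((y j : M) : K) := by
      calc w = ((xm none : M) : K) := rfl
      _ = ((∑ j, b none j • y j : M) : K) := by rw [hb none]
      _ = ∑ j, (b none j : D) • ((y j : M) : K) := by push_cast; rfl
      _ = ∑ j, algebraMap D K (b none j) * ((y j : M) : K) :=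
          Finset.sum_congr rfl fun j _ => Algebra.smul_def _ _
    have h2 : (1 : K) = ∑ j, w⁻¹ * (algebraMap D K (b none j) * ((y j : M) : K)) := by
      rw [← Finset.mul_sum, ← h1, inv_mul_cancel₀ hw0]
    rw [h2]
    exact Finset.sum_congr rfl fun j _ => by simp only [q]; ring
  rw [FractionalIdeal.one_le]
  have : (1 : K) ∈ (((1 / J) * I : FractionalIdeal D⁰ K) : Submodule D K) := by
    rw [FractionalIdeal.coe_mul, hone]
    exact Submodule.sum_mem _ fun j _ =>
      Submodule.mul_mem_mul (hq j) (y j).2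
  exact this


/-- A nonzero flat fractional ideal of an integral domain is a `t`-ideal. -/
theorem tClosure_eq_self_of_flat
    (D K : Type*) [CommRing D] [IsDomain D] [Field K] [Algebra D K] [IsFractionRing D K]
    (I : FractionalIdeal D⁰ K) (hI : I ≠ 0)
    (hflat : Module.Flat D (I : Submodule D K)) :
    tClosure D K I = (I : Submodule D K) := by
  apply le_antisymm
  · apply iSup_le
    rintro ⟨J, hJI, hfg⟩
    dsimp only
    by_cases hJ0 : J = 0
    · subst hJ0
      rw [show (1 / (1 / (0 : FractionalIdeal D⁰ K)) : FractionalIdeal D⁰ K) = 0 by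
        rw [FractionalIdeal.div_zero, FractionalIdeal.div_zero]]
      simp
    · have hd := one_le_one_div_mul I J hJI hJ0 hfg hflat
      have hA : (1 / (1 / J) : FractionalIdeal D⁰ K) * (1 / J) ≤ 1 := by
        rw [mul_comm]; exact FractionalIdeal.mul_one_div_le_one
      have hle : (1 / (1 / J) : FractionalIdeal D⁰ K) ≤ I := by
        calc (1 / (1 / J) : FractionalIdeal D⁰ K) = 1 / (1 / J) * 1 := (mul_one _).symm
        _ ≤ 1 / (1 / J) * ((1 / J) * I) := mul_le_mul_right hd _
        _ = (1 / (1 / J) * (1 / J)) * I := (mul_assoc _ _ _).symm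
        _ ≤ 1 * I := mul_le_mul_left hA I
        _ = I := one_mul I
      exact FractionalIdeal.coe_le_coe.mpr hle
  · intro z hz
    have hzI : z ∈ I := FractionalIdeal.mem_coe.mp hz
    have hJle : FractionalIdeal.spanSingleton D⁰ z ≤ I :=
      FractionalIdeal.spanSingleton_le_iff_mem.mpr hzI
    have hfg : ((FractionalIdeal.spanSingleton D⁰ z : FractionalIdeal D⁰ K) :
        Submodule D K).FG := by
      rw [FractionalIdeal.coe_spanSingleton]
      exact Submodule.fg_span_singleton z
    refine le_iSup (fun J : {J : FractionalIdeal D⁰ K // J ≤ I ∧ (J : Submodule D K).FG} =>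
      ((1 / (1 / (J : FractionalIdeal D⁰ K)) : FractionalIdeal D⁰ K) : Submodule D K))
      ⟨FractionalIdeal.spanSingleton D⁰ z, hJle, hfg⟩ ?_
    show z ∈ ((1 / (1 / FractionalIdeal.spanSingleton D⁰ z) : FractionalIdeal D⁰ K) :
      Submodule D K)
    rw [FractionalIdeal.one_div_spanSingleton, FractionalIdeal.one_div_spanSingleton, inv_inv,
      FractionalIdeal.coe_spanSingleton]
    exact Submodule.mem_span_singleton_self z
end

section
/- Let D be an integral domain and I a flat nonzero fractional ideal of D. Then for every nonzero finitely generated fractional ideal J of D, (I : J) = (I : J_v), where J_v = (D:(D:J)). -/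
section FlatFactor
open TensorProduct

open TensorProduct

universe u v

lemma flat_factor {D : Type u} {M : Type v} [CommRing D] [AddCommGroup M] [Module D M]
    [Module.Flat D M] {n : ℕ} (m : Fin n → M) (b : Fin n → D) (i0 : Fin n)
    (hrel : ∀ j, b j • m i0 = b i0 • m j) :
    ∃ (κ : Type (max u v)) (_ : Fintype κ) (y : κ → M) (c : κ → (Fin n →₀ D)),
      (∀ k j, b j * c k i0 = b i0 * c k j) ∧ (∀ i, m i = ∑ k, c k i • y k) := by
  classical
  set bv : (Fin n →₀ D) := ∑ j, Finsupp.single j (b j) with hbv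
  set F : (Fin n →₀ D) →ₗ[D] (Fin n →₀ D) := (Finsupp.lapply i0).smulRight bv - b i0 • LinearMap.id with hF
  have hbvapp : ∀ j, bv j = b j := by
    intro j
    rw [hbv, Finsupp.finset_sum_apply]
    rw [Finset.sum_eq_single j (fun l _ hl => Finsupp.single_eq_of_ne' hl)
      (fun h => absurd (Finset.mem_univ j) h)]
    exact Finsupp.single_eq_same
  have hFv : ∀ v : (Fin n →₀ D), F v = v i0 • bv - b i0 • v := by
    intro v
    rfl
  have hFapp : ∀ (v : (Fin n →₀ D)) (j : Fin n), F v j = v i0 * b j - b i0 * v j := by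
    intro v j
    rw [hFv, Finsupp.sub_apply, Finsupp.smul_apply, Finsupp.smul_apply, hbvapp,
      smul_eq_mul, smul_eq_mul]
  -- the element t
  set t : M ⊗[D] (Fin n →₀ D) := ∑ i, m i ⊗ₜ Finsupp.single i 1 with ht
  have htker : (TensorProduct.AlgebraTensorModule.lTensor D M F) t = 0 := by
    rw [ht, map_sum]
    have h1 : ∀ i, (TensorProduct.AlgebraTensorModule.lTensor D M F) (m i ⊗ₜ Finsupp.single i 1)
        = m i ⊗ₜ[D] F (Finsupp.single i 1) := fun i => rfl
    simp only [h1]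
    have h2 : ∀ i : Fin n, F (Finsupp.single i 1) =
        (if i = i0 then (1:D) else 0) • bv - Finsupp.single i (b i0) := by
      intro i
      rw [hFv]
      have : (Finsupp.single i (1:D)) i0 = if i = i0 then (1:D) else 0 :=
        Finsupp.single_apply
      rw [this]
      congr 1
      rw [Finsupp.smul_single, smul_eq_mul, mul_one]
    have h3 : ∀ i : Fin n, m i ⊗ₜ[D] F (Finsupp.single i 1)
        = (if i = i0 then m i0 ⊗ₜ[D] bv else 0) - (b i0 • m i) ⊗ₜ[D] Finsupp.single i (1:D) := by
      intro i
      rw [h2, tmul_sub]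
      congr 1
      · split_ifs with h
        · subst h; rw [one_smul]
        · rw [zero_smul, tmul_zero]
      · have : Finsupp.single i (b i0) = b i0 • Finsupp.single i (1:D) := by
          rw [Finsupp.smul_single, smul_eq_mul, mul_one]
        rw [this, tmul_smul, smul_tmul']
    simp only [h3]
    rw [Finset.sum_sub_distrib (G := M ⊗[D] (Fin n →₀ D))]
    rw [Finset.sum_ite_eq' Finset.univ i0 (fun _ => m i0 ⊗ₜ[D] bv)]
    simp only [Finset.mem_univ, if_pos]
    rw [hbv, tmul_sum, ← Finset.sum_sub_distrib (G := M ⊗[D] (Fin n →₀ D))]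
    apply Finset.sum_eq_zero
    intro j _
    have e1 : m i0 ⊗ₜ[D] Finsupp.single j (b j) = (b j • m i0) ⊗ₜ[D] Finsupp.single j (1:D) := by
      have : Finsupp.single j (b j) = b j • Finsupp.single j (1:D) := by
        rw [Finsupp.smul_single, smul_eq_mul, mul_one]
      rw [this, tmul_smul, smul_tmul']
    rw [e1, hrel j, sub_self]
  -- use flatness
  have hmem : t ∈ LinearMap.range
      ((TensorProduct.AlgebraTensorModule.lTensor D M) (LinearMap.ker F).subtype) := by
    rw [← Module.Flat.ker_lTensor_eq D M F]
    exact htker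
  obtain ⟨u, hu⟩ := hmem
  obtain ⟨S, hS⟩ := TensorProduct.exists_finset u
  have htS : t = ∑ p ∈ S, p.1 ⊗ₜ[D] ((p.2 : Fin n →₀ D)) := by
    rw [← hu, hS, map_sum]
    rfl
  -- coordinate extraction
  set χ : Fin n → (M ⊗[D] (Fin n →₀ D) →ₗ[D] M) := fun i =>
    (TensorProduct.rid D M).toLinearMap ∘ₗ LinearMap.lTensor M (Finsupp.lapply i) with hχ
  have hχtmul : ∀ (i : Fin n) (x : M) (v : (Fin n →₀ D)), χ i (x ⊗ₜ v) = v i • x := by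
    intro i x v
    simp only [hχ, LinearMap.comp_apply, LinearMap.lTensor_tmul, LinearEquiv.coe_coe,
      TensorProduct.rid_tmul]
    rfl
  have hχt : ∀ i, χ i t = m i := by
    intro i
    rw [ht, map_sum]
    simp only [hχtmul]
    rw [Finset.sum_eq_single i (fun l _ hl => by
        rw [Finsupp.single_apply, if_neg hl, zero_smul])
      (fun h => absurd (Finset.mem_univ i) h)]
    rw [Finsupp.single_eq_same, one_smul]
  refine ⟨{p // p ∈ S}, inferInstance, fun k => k.1.1, fun k => (k.1.2 : Fin n →₀ D), ?_, ?_⟩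
  · intro k j
    have hk : F (k.1.2 : Fin n →₀ D) = 0 := k.1.2.2
    have h4 := hFapp (k.1.2 : Fin n →₀ D) j
    rw [hk, Finsupp.zero_apply] at h4
    have h0 : ((k.1.2 : Fin n →₀ D)) i0 * b j - b i0 * ((k.1.2 : Fin n →₀ D)) j = 0 := h4.symm
    rw [sub_eq_zero] at h0
    rw [mul_comm (b j)]
    exact h0
  · intro i
    have h5 := congrArg (χ i) htS
    rw [hχt i, map_sum] at h5
    simp only [hχtmul] at h5
    rw [h5]
    exact (Finset.sum_attach S _).symm

end FlatFactor


open scoped nonZeroDivisors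

/-- If `I` is a flat nonzero fractional ideal, then for every nonzero finitely generated
fractional ideal `J`, `(I : J) = (I : J_v)` where `J_v = (D : (D : J))`. -/
theorem div_eq_div_vClosure_of_flat
    (D K : Type*) [CommRing D] [IsDomain D] [Field K] [Algebra D K] [IsFractionRing D K]
    (I : FractionalIdeal D⁰ K) (hI : I ≠ 0)
    (hflat : Module.Flat D (I : Submodule D K))
    (J : FractionalIdeal D⁰ K) (hJ : J ≠ 0) (hJfg : (J : Submodule D K).FG) :
    I / J = I / (1 / (1 / J)) := by
  classical
  haveI : Module.Flat D (I : Submodule D K) := hflat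
  obtain ⟨d, hd, hdint⟩ := J.isFractional
  have hdK : algebraMap D K d ≠ 0 :=
    IsFractionRing.to_map_ne_zero_of_mem_nonZeroDivisors hd
  have h1Jmem : algebraMap D K d ∈ (1 / J : FractionalIdeal D⁰ K) := by
    rw [FractionalIdeal.mem_div_iff_of_ne_zero hJ]
    intro y hy
    obtain ⟨r, hr⟩ := hdint y hy
    rw [FractionalIdeal.mem_one_iff]
    exact ⟨r, by rw [hr, Algebra.smul_def]⟩
  have h1J0 : (1 / J : FractionalIdeal D⁰ K) ≠ 0 := by
    intro h
    rw [h, FractionalIdeal.mem_zero_iff] at h1Jmem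
    exact hdK h1Jmem
  have hJle : J ≤ 1 / (1 / J) := by
    rw [SetLike.le_def]
    intro y hy
    rw [FractionalIdeal.mem_div_iff_of_ne_zero h1J0]
    intro w hw
    rw [FractionalIdeal.mem_div_iff_of_ne_zero hJ] at hw
    rw [mul_comm]
    exact hw y hy
  have hJv0 : (1 / (1 / J) : FractionalIdeal D⁰ K) ≠ 0 := by
    intro h
    exact hJ (le_antisymm (h ▸ hJle) (FractionalIdeal.zero_le _))
  apply le_antisymm
  · -- hard direction : I / J ≤ I / (1 / (1 / J))
    rw [SetLike.le_def]
    intro x hx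
    rw [FractionalIdeal.mem_div_iff_of_ne_zero hJ] at hx
    rw [FractionalIdeal.mem_div_iff_of_ne_zero hJv0]
    obtain ⟨n, a, hspan⟩ := Submodule.fg_iff_exists_fin_generating_family.mp hJfg
    have haJ : ∀ i, a i ∈ J := fun i => by
      rw [← FractionalIdeal.mem_coe, ← hspan]
      exact Submodule.subset_span ⟨i, rfl⟩
    have hex : ∃ i0, a i0 ≠ 0 := by
      by_contra h
      push_neg at h
      apply hJ
      have hle : (J : Submodule D K) ≤ ⊥ := by
        rw [← hspan]
        apply Submodule.span_le.mpr
        rintro _ ⟨i, rfl⟩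
        simp [h i]
      exact FractionalIdeal.eq_zero_iff.mpr fun z hz => hle (FractionalIdeal.mem_coe.mpr hz)
    obtain ⟨i0, ha0⟩ := hex
    have h' : ∀ i, ∃ r : D, algebraMap D K r = d • a i := fun i => hdint (a i) (haJ i)
    choose bfun hb using h'
    set mfun : Fin n → (I : Submodule D K) := fun i =>
      ⟨x * a i, FractionalIdeal.mem_coe.mpr (hx (a i) (haJ i))⟩ with hmfun
    have hrel : ∀ j, bfun j • mfun i0 = bfun i0 • mfun j := by
      intro j
      apply Subtype.ext
      show bfun j • (x * a i0) = bfun i0 • (x * a j)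
      rw [Algebra.smul_def, Algebra.smul_def, hb, hb, Algebra.smul_def, Algebra.smul_def]
      ring
    obtain ⟨κ, hκ, y, c, hc, hsum⟩ := flat_factor mfun bfun i0 hrel
    letI := hκ
    have hxa : x * a i0 = ∑ k, c k i0 • ((y k : K)) := by
      have h6 := congrArg (Subtype.val) (hsum i0)
      simpa using h6
    have hkey : ∀ k j, (algebraMap D K (c k i0) * (a i0)⁻¹) * a j = algebraMap D K (c k j) := by
      intro k j
      have hmain : algebraMap D K (c k i0) * a j = algebraMap D K (c k j) * a i0 := by
        apply mul_left_cancel₀ hdK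
        calc algebraMap D K d * (algebraMap D K (c k i0) * a j)
            = algebraMap D K (c k i0) * (d • a j) := by rw [Algebra.smul_def]; try ring
          _ = algebraMap D K (c k i0) * algebraMap D K (bfun j) := by rw [hb]

          _ = algebraMap D K (bfun j * c k i0) := by rw [map_mul]; try ring
          _ = algebraMap D K (bfun i0 * c k j) := by rw [hc k j]
          _ = (d • a i0) * algebraMap D K (c k j) := by rw [map_mul, hb]; try ring
          _ = algebraMap D K d * (algebraMap D K (c k j) * a i0) := by rw [Algebra.smul_def]; try ring
      rw [mul_right_comm, hmain, mul_assoc, mul_inv_cancel₀ ha0, mul_one]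
    have htk : ∀ k, (algebraMap D K (c k i0) * (a i0)⁻¹) ∈ (1 / J : FractionalIdeal D⁰ K) := by
      intro k
      rw [FractionalIdeal.mem_div_iff_of_ne_zero hJ]
      intro yy hyy
      have hle : (J : Submodule D K) ≤ Submodule.comap
          ((LinearMap.mul D K) (algebraMap D K (c k i0) * (a i0)⁻¹))
          ((1 : FractionalIdeal D⁰ K) : Submodule D K) := by
        rw [← hspan]
        apply Submodule.span_le.mpr
        rintro _ ⟨j, rfl⟩
        simp only [SetLike.mem_coe, Submodule.mem_comap, LinearMap.mul_apply']
        rw [hkey k j, FractionalIdeal.coe_one]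
        exact Submodule.mem_one.mpr ⟨c k j, rfl⟩
      have := hle (FractionalIdeal.mem_coe.mpr hyy)
      simp only [Submodule.mem_comap, LinearMap.mul_apply'] at this
      exact FractionalIdeal.mem_coe.mp this
    intro z hz
    have hz' := (FractionalIdeal.mem_div_iff_of_ne_zero h1J0).mp hz
    have hr : ∀ k, ∃ r : D,
        algebraMap D K r = z * (algebraMap D K (c k i0) * (a i0)⁻¹) := fun k =>
      FractionalIdeal.mem_one_iff _ |>.mp (hz' _ (htk k))
    choose r hrk using hr
    have hxz : x * z = ∑ k, r k • (y k : K) := by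
      have hx0 : x = (∑ k, c k i0 • (y k : K)) * (a i0)⁻¹ := by
        rw [← hxa, mul_assoc, mul_inv_cancel₀ ha0, mul_one]
      rw [hx0, Finset.sum_mul, Finset.sum_mul]
      apply Finset.sum_congr rfl
      intro k _
      rw [Algebra.smul_def, Algebra.smul_def, hrk]
      ring
    rw [← FractionalIdeal.mem_coe, hxz]
    exact Submodule.sum_mem _ fun k _ => Submodule.smul_mem _ _ (y k).2
  · -- easy direction
    rw [SetLike.le_def]
    intro x hx
    rw [FractionalIdeal.mem_div_iff_of_ne_zero hJv0] at hx
    rw [FractionalIdeal.mem_div_iff_of_ne_zero hJ]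
    exact fun yy hyy => hx yy (hJle hyy)
end

section
/- Every flat nonzero fractional ideal of an integrally closed domain D is complete, i.e., equal to its b-closure I^b = ⋂ I·V over all valuation overrings V of D. -/
open scoped nonZeroDivisors

set_option maxHeartbeats 1600000

universe u v
section FlatAux
variable {R : Type u} [CommRing R] {M : Type v} [AddCommGroup M] [Module R M]

noncomputable local instance : Algebra (ULift.{v} R) R :=
  { toSMul := inferInstance
    algebraMap := ULift.ringEquiv.toRingHom
    commutes' := fun r x => mul_comm _ _
    smul_def' := fun r x => by change r.down • x = r.down * x; rw [smul_eq_mul] }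

noncomputable local instance : Module.Free (ULift.{v} R) R :=
  Module.Free.of_equiv (R := ULift.{v} R) (M := ULift.{v} R)
    ({toFun := ULift.down
      invFun := ULift.up
      left_inv := fun _ => rfl
      right_inv := fun _ => rfl
      map_add' := fun _ _ => rfl
      map_smul' := fun _ _ => rfl } : ULift.{v} R ≃ₗ[ULift.{v} R] R)

local instance : IsScalarTower (ULift.{v} R) R (ULift.{u} M) :=
  ⟨fun r s m => by
    apply ULift.ext
    show (r.down • s) • m.down = r.down • (s • m.down)
    rw [smul_smul, smul_eq_mul]⟩

theorem flat_rel_factor [Module.Flat R M] {ι : Type v} [Fintype ι]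
    (E : ι → R) (c : ι → M) (hrel : ∀ i j, E j • c i = E i • c j) :
    ∃ (κ : Type) (_ : Fintype κ) (b : ι → κ → R) (z : κ → M),
      (∀ i, c i = ∑ k, b i k • z k) ∧ ∀ i j k, E j * b i k = E i * b j k := by
  classical
  letI R' := ULift.{v} R
  letI M' := ULift.{u} M
  haveI : Module.Flat R' (ULift.{u} M) := Module.Flat.trans R' R (ULift.{u} M)
  set ι' := ULift.{u} ι
  let E' : ι' → R' := fun i => ULift.up (E i.down)
  let relvec : ι' × ι' → (ι' →₀ R') := fun p =>
    Finsupp.single p.1 (E' p.2) - Finsupp.single p.2 (E' p.1)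
  let f : ((ι' × ι') →₀ R') →ₗ[R'] (ι' →₀ R') := Finsupp.linearCombination R' relvec
  let xm : (ι' →₀ R') →ₗ[R'] M' := Finsupp.linearCombination R' (fun i : ι' => ULift.up (c i.down))
  have hcomp : xm ∘ₗ f = 0 := by
    apply Finsupp.lhom_ext
    intro p r
    show xm (f (Finsupp.single p r)) = 0
    rw [show f (Finsupp.single p r) = r • relvec p from Finsupp.linearCombination_single ..]
    rw [map_smul]
    have : xm (relvec p) = 0 := by
      show xm (Finsupp.single p.1 (E' p.2) - Finsupp.single p.2 (E' p.1)) = 0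
      rw [map_sub, Finsupp.linearCombination_single, Finsupp.linearCombination_single]
      apply ULift.ext
      show E p.2.down • c p.1.down - E p.1.down • c p.2.down = (0 : M)
      rw [hrel, sub_self]
    rw [this, smul_zero]
  obtain ⟨κ, a, y, hxy, haf⟩ :=
    Module.Flat.exists_factorization_of_comp_eq_zero_of_free (R := R') (M := M') hcomp
  refine ⟨Fin κ, inferInstance, fun i k => (a (Finsupp.single (ULift.up i) 1) k).down,
    fun k => (y (Finsupp.single k 1)).down, ?_, ?_⟩
  · intro i
    have h1 : xm (Finsupp.single (ULift.up i) 1) = ULift.up (c i) := by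
      rw [Finsupp.linearCombination_single, one_smul]
    have h2 : y (a (Finsupp.single (ULift.up i) 1)) = ULift.up (c i) := by
      rw [← h1, hxy]; rfl
    set w := a (Finsupp.single (ULift.up i) 1) with hw
    have h3 : y w = ∑ k, w k • y (Finsupp.single k 1) := by
      conv_lhs => rw [← Finsupp.sum_single w]
      rw [Finsupp.sum, map_sum]
      rw [Finset.sum_subset (Finset.subset_univ w.support)]
      · apply Finset.sum_congr rfl
        intro k _
        rw [← Finsupp.smul_single_one, map_smul]
      · intro k _ hk
        rw [Finsupp.notMem_support_iff.mp hk, Finsupp.single_zero, map_zero]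
    have h4 : ULift.up (c i) = ∑ k, w k • y (Finsupp.single k 1) := by rw [← h3, h2]
    have := congrArg ULift.down h4
    rw [show (∑ k, w k • y (Finsupp.single k 1)).down
        = ∑ k, (w k).down • (y (Finsupp.single k 1)).down from
      map_sum (AddEquiv.ulift (α := M)).toAddMonoidHom _ _] at this
    exact this
  · intro i j k
    have h0 : a (f (Finsupp.single (ULift.up i, ULift.up j) 1)) = 0 := by
      rw [← LinearMap.comp_apply, haf, LinearMap.zero_apply]
    have h1 : f (Finsupp.single (ULift.up i, ULift.up j) 1)
        = relvec (ULift.up i, ULift.up j) := by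
      rw [Finsupp.linearCombination_single, one_smul]
    rw [h1] at h0
    have h2 : a (Finsupp.single (ULift.up i) (E' (ULift.up j)))
        - a (Finsupp.single (ULift.up j) (E' (ULift.up i))) = 0 := by
      rw [← map_sub]; exact h0
    have h3 : E' (ULift.up j) • a (Finsupp.single (ULift.up i) 1)
        = E' (ULift.up i) • a (Finsupp.single (ULift.up j) 1) := by
      rw [← map_smul, ← map_smul, Finsupp.smul_single_one, Finsupp.smul_single_one]
      exact sub_eq_zero.mp h2
    have h4 := congrArg (fun v : Fin κ →₀ R' => v k) h3
    simp only [Finsupp.smul_apply, smul_eq_mul] at h4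
    exact congrArg ULift.down h4
end FlatAux


section Helpers
variable {D : Type*} [CommRing D] {K : Type*} [Field K] [Algebra D K]

private lemma sum_submod_le {ι : Type*} {s : Finset ι} {f : ι → Submodule D K}
    {P : Submodule D K} (h : ∀ i ∈ s, f i ≤ P) : (∑ i ∈ s, f i) ≤ P := by
  classical
  induction s using Finset.induction_on with
  | empty => simp
  | insert a s' hni ih =>
    rw [Finset.sum_insert hni, Submodule.add_eq_sup]
    exact sup_le (h a (Finset.mem_insert_self a s'))
      (ih fun i hi => h i (Finset.mem_insert_of_mem hi))

private lemma le_sum_submod {ι : Type*} {s : Finset ι} {f : ι → Submodule D K}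
    {i : ι} (hi : i ∈ s) : f i ≤ ∑ j ∈ s, f j := by
  classical
  induction s using Finset.induction_on with
  | empty => simp at hi
  | insert a s' hni ih =>
    rw [Finset.sum_insert hni, Submodule.add_eq_sup]
    rcases Finset.mem_insert.mp hi with rfl | hi'
    · exact le_sup_left
    · exact le_trans (ih hi') le_sup_right

private lemma mem_sum_submod {ι : Type*} {s : Finset ι} {f : ι → Submodule D K}
    {z : K} (hz : z ∈ ∑ i ∈ s, f i) :
    ∃ g : ι → K, (∀ i, g i ∈ f i) ∧ z = ∑ i ∈ s, g i := by
  classical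
  induction s using Finset.induction_on generalizing z with
  | empty => exact ⟨fun _ => 0, fun _ => Submodule.zero_mem _, by simpa using hz⟩
  | insert a s' hni ih =>
    rw [Finset.sum_insert hni, Submodule.add_eq_sup] at hz
    obtain ⟨u, hu, w, hw, rfl⟩ := Submodule.mem_sup.mp hz
    obtain ⟨g, hg, rfl⟩ := ih hw
    refine ⟨fun i => if i = a then u else g i, ?_, ?_⟩
    · intro i
      by_cases hia : i = a
      · subst hia; simpa using hu
      · simpa [hia] using hg i
    · rw [Finset.sum_insert hni, if_pos rfl]
      congr 1
      apply Finset.sum_congr rfl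
      intro i hi
      rw [if_neg (by rintro rfl; exact hni hi)]

private lemma pow_submod_mono {A B : Submodule D K} (h : A ≤ B) : ∀ n, A ^ n ≤ B ^ n
  | 0 => by simp
  | n + 1 => by
    rw [pow_succ, pow_succ]
    exact mul_le_mul' (pow_submod_mono h n) h

private lemma map_ml_mul (y z : K) (A B : Submodule D K) :
    (A.map (LinearMap.mulLeft D y)) * (B.map (LinearMap.mulLeft D z))
      = (A * B).map (LinearMap.mulLeft D (y * z)) := by
  apply le_antisymm
  · rw [Submodule.mul_le]
    rintro _ ⟨a, ha, rfl⟩ _ ⟨b, hb, rfl⟩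
    exact ⟨a * b, Submodule.mul_mem_mul ha hb, by
      simp [LinearMap.mulLeft_apply]; ring⟩
  · rw [Submodule.map_le_iff_le_comap]
    intro w hw
    refine Submodule.mul_induction_on hw
      (fun a ha b hb => Submodule.mem_comap.mpr ?_) (fun w1 w2 h1 h2 => Submodule.add_mem _ h1 h2)
    have e : (LinearMap.mulLeft D (y * z)) (a * b)
        = (LinearMap.mulLeft D y a) * (LinearMap.mulLeft D z b) := by
      simp only [LinearMap.mulLeft_apply]; ring
    rw [e]
    exact Submodule.mul_mem_mul (Submodule.mem_map_of_mem ha) (Submodule.mem_map_of_mem hb)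

private lemma map_ml_pow (y : K) (A : Submodule D K) :
    ∀ m, (A.map (LinearMap.mulLeft D y)) ^ (m + 1)
      = (A ^ (m + 1)).map (LinearMap.mulLeft D (y ^ (m + 1)))
  | 0 => by simp
  | m + 1 => by
    rw [pow_succ, map_ml_pow y A m, map_ml_mul, ← pow_succ, ← pow_succ]

private lemma map_ml_comp (y z : K) (A : Submodule D K) :
    (A.map (LinearMap.mulLeft D y)).map (LinearMap.mulLeft D z)
      = A.map (LinearMap.mulLeft D (z * y)) := by
  rw [← Submodule.map_comp, ← LinearMap.mulLeft_mul]

private lemma exists_fg_le_of_mem_pow (N : Submodule D K) :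
    ∀ (m : ℕ) (z : K), z ∈ N ^ (m + 1) →
      ∃ J : Submodule D K, J ≤ N ∧ J.FG ∧ z ∈ J ^ (m + 1) := by
  intro m
  induction m with
  | zero =>
    intro z hz
    rw [pow_one] at hz
    exact ⟨Submodule.span D {z}, by rwa [Submodule.span_le, Set.singleton_subset_iff],
      Submodule.fg_span_singleton z, by rw [pow_one]; exact Submodule.mem_span_singleton_self z⟩
  | succ m ih =>
    intro z hz
    rw [pow_succ] at hz
    refine Submodule.mul_induction_on hz (fun a ha b hb => ?_) (fun w1 w2 h1 h2 => ?_)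
    · obtain ⟨J1, hJ1N, hJ1fg, haJ1⟩ := ih a ha
      refine ⟨J1 ⊔ Submodule.span D {b},
        sup_le hJ1N (by rwa [Submodule.span_le, Set.singleton_subset_iff]),
        hJ1fg.sup (Submodule.fg_span_singleton b), ?_⟩
      rw [pow_succ]
      exact Submodule.mul_mem_mul (pow_submod_mono le_sup_left _ haJ1)
        (le_sup_right (α := Submodule D K) (Submodule.mem_span_singleton_self b))
    · obtain ⟨J1, hN1, hfg1, hm1⟩ := h1
      obtain ⟨J2, hN2, hfg2, hm2⟩ := h2
      exact ⟨J1 ⊔ J2, sup_le hN1 hN2, hfg1.sup hfg2,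
        Submodule.add_mem _ (pow_submod_mono le_sup_left _ hm1)
          (pow_submod_mono le_sup_right _ hm2)⟩

private lemma fg_sum_submod {ι : Type*} {s : Finset ι} {f : ι → Submodule D K}
    (h : ∀ i ∈ s, (f i).FG) : (∑ i ∈ s, f i).FG := by
  classical
  induction s using Finset.induction_on with
  | empty => simpa using Submodule.fg_bot
  | insert a s' hni ih =>
    rw [Finset.sum_insert hni]
    rw [Submodule.add_eq_sup]
    exact (h a (Finset.mem_insert_self a s')).sup (ih fun i hi => h i (Finset.mem_insert_of_mem hi))

end Helpers

section ValAux
variable {K : Type*} [Field K]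

private lemma isUnit_valsub_iff (B : ValuationSubring K) {k : K} (hk : k ∈ B) :
    IsUnit (⟨k, hk⟩ : B) ↔ k ≠ 0 ∧ k⁻¹ ∈ B := by
  constructor
  · rintro ⟨u, hu⟩
    have h1 : (u : B) * u⁻¹ = 1 := u.mul_inv
    have hk0 : k ≠ 0 := by
      rintro rfl
      apply one_ne_zero (α := K)
      have := congrArg (Subtype.val) h1
      rw [hu] at this
      simpa using this.symm
    refine ⟨hk0, ?_⟩
    have h2 : k * ((u⁻¹ : Bˣ) : B) = 1 := by
      have := congrArg (Subtype.val) h1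
      rwa [hu] at this
    have hv : (((u⁻¹ : Bˣ) : B) : K) = k⁻¹ := (inv_eq_of_mul_eq_one_right h2).symm
    rw [← hv]
    exact ((u⁻¹ : Bˣ) : B).2
  · rintro ⟨hk0, hkinv⟩
    refine IsUnit.of_mul_eq_one ⟨k⁻¹, hkinv⟩ ?_
    ext
    simp [mul_inv_cancel₀ hk0]

private lemma exists_valuation_dominating (R' : Subring K) (m : Ideal R') [m.IsMaximal] :
    ∃ B : ValuationSubring K, (∀ k, k ∈ R' → k ∈ B) ∧
      ∀ (k : K) (hk : k ∈ R'), (⟨k, hk⟩ : R') ∈ m →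
        ∀ (hkB : k ∈ B), ¬ IsUnit (⟨k, hkB⟩ : B) := by
  haveI : m.IsPrime := Ideal.IsMaximal.isPrime ‹_›
  obtain ⟨B, hB⟩ := (LocalSubring.ofPrime R' m).exists_le_valuationSubring
  obtain ⟨hsub, hloc⟩ := LocalSubring.le_def.mp hB
  have hRle : R' ≤ (LocalSubring.ofPrime R' m).toSubring := LocalSubring.le_ofPrime R' m
  refine ⟨B, fun k hk => hsub (hRle hk), ?_⟩
  intro k hk hkm hkB hunit
  -- the element of the localization
  set L := (LocalSubring.ofPrime R' m).toSubring
  have hkL : k ∈ L := hRle hk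
  have hmap : algebraMap R' L ⟨k, hk⟩ = ⟨k, hkL⟩ := rfl
  have hnonunitL : ¬ IsUnit (algebraMap R' L ⟨k, hk⟩) := by
    rw [IsLocalization.AtPrime.isUnit_to_map_iff L m ⟨k, hk⟩]
    intro hcompl
    exact hcompl hkm
  apply hnonunitL
  rw [hmap]
  have hincl : Subring.inclusion hsub ⟨k, hkL⟩ = ⟨k, hkB⟩ := rfl
  exact hloc.1 _ (by rw [hincl]; exact hunit)
end ValAux
section VS
variable (D : Type*) {K : Type*} [CommRing D] [Field K] [Algebra D K]

private def valSubalg (B : ValuationSubring K) (hB : ∀ d : D, algebraMap D K d ∈ B) :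
    Subalgebra D K :=
  { B.toSubring.toSubsemiring with algebraMap_mem' := hB }

private lemma mem_valSubalg {B : ValuationSubring K} {hB : ∀ d : D, algebraMap D K d ∈ B}
    {k : K} : k ∈ valSubalg D B hB ↔ k ∈ B := Iff.rfl

private lemma valSubalg_valuationRing (B : ValuationSubring K)
    (hB : ∀ d : D, algebraMap D K d ∈ B) : ValuationRing ↥(valSubalg D B hB) := by
  refine { cond' := fun a b => ?_ }
  by_cases hb0 : (b : K) = 0
  · exact ⟨0, Or.inl (by ext; simp [hb0])⟩
  by_cases ha0 : (a : K) = 0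
  · exact ⟨0, Or.inr (by ext; simp [ha0])⟩
  rcases B.mem_or_inv_mem ((a : K) / b) with h | h
  · refine ⟨⟨(a : K) / b, mem_valSubalg D |>.mpr h⟩, Or.inr ?_⟩
    ext
    push_cast
    field_simp
  · rw [inv_div] at h
    refine ⟨⟨(b : K) / a, mem_valSubalg D |>.mpr h⟩, Or.inl ?_⟩
    ext
    push_cast
    field_simp
end VS
section MainA
variable {D : Type*} [CommRing D] [IsDomain D] {K : Type*} [Field K] [Algebra D K]
  [IsFractionRing D K] [IsIntegrallyClosed D]

private lemma exists_fg_hv (I : FractionalIdeal D⁰ K) (hI : I ≠ 0) {x : K} (hx0 : x ≠ 0)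
    (hxV : ∀ V : Subalgebra D K, ValuationRing V →
      x ∈ (I : Submodule D K) * Subalgebra.toSubmodule V) :
    ∃ J : Submodule D K, J.FG ∧ J ≤ (I : Submodule D K) ∧ (∃ a₀ ∈ J, a₀ ≠ (0 : K)) ∧
      ∀ t : K, (∀ a ∈ J, ∃ d, algebraMap D K d = t * a) →
        ∃ d, algebraMap D K d = t * x := by
  classical
  set φ := algebraMap D K with hφdef
  set Ic := (I : Submodule D K) with hIc
  set Q : Submodule D K := Ic.map (LinearMap.mulLeft D x⁻¹) with hQdef
  set G : ℕ → Submodule D K := fun n => ∑ k ∈ Finset.range (n + 1), Q ^ k with hGdef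
  have hIne : Ic ≠ ⊥ := fun h => hI (FractionalIdeal.coeToSubmodule_eq_bot.mp h)
  obtain ⟨a₀, ha₀I, ha₀ne⟩ := Ic.ne_bot_iff.mp hIne
  have hQk_le_G : ∀ k n : ℕ, k ≤ n → Q ^ k ≤ G n := fun k n hk =>
    le_sum_submod (Finset.mem_range.mpr (by omega))
  have hGmono : ∀ {m n : ℕ}, m ≤ n → G m ≤ G n := fun {m n} h =>
    sum_submod_le fun i hi => hQk_le_G i n (by have := Finset.mem_range.mp hi; omega)
  have hGmul : ∀ m n : ℕ, G m * G n ≤ G (m + n) := by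
    intro m n
    rw [hGdef]
    rw [Finset.sum_mul_sum]
    apply sum_submod_le
    intro i hi
    apply sum_submod_le
    intro j hj
    rw [← pow_add]
    exact hQk_le_G (i + j) (m + n)
      (by have := Finset.mem_range.mp hi; have := Finset.mem_range.mp hj; omega)
  have hG0 : G 0 = 1 := by rw [hGdef]; simp
  have hGone : ∀ n, (1 : K) ∈ G n := by
    intro n
    apply hQk_le_G 0 n (Nat.zero_le n)
    rw [pow_zero, Submodule.one_eq_range]
    exact ⟨1, by simp⟩
  have hφmem : ∀ d, φ d ∈ G 0 := by
    intro d
    rw [hG0, Submodule.one_eq_range]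
    exact ⟨d, rfl⟩
  let R' : Subring K :=
    { carrier := ⋃ n, (G n : Set K)
      one_mem' := Set.mem_iUnion.mpr ⟨0, hGone 0⟩
      zero_mem' := Set.mem_iUnion.mpr ⟨0, Submodule.zero_mem _⟩
      mul_mem' := by
        rintro a b ha hb
        obtain ⟨m, hm⟩ := Set.mem_iUnion.mp ha
        obtain ⟨n, hn⟩ := Set.mem_iUnion.mp hb
        exact Set.mem_iUnion.mpr ⟨m + n, hGmul m n (Submodule.mul_mem_mul hm hn)⟩
      add_mem' := by
        rintro a b ha hb
        obtain ⟨m, hm⟩ := Set.mem_iUnion.mp ha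
        obtain ⟨n, hn⟩ := Set.mem_iUnion.mp hb
        exact Set.mem_iUnion.mpr ⟨m + n, Submodule.add_mem _
          (hGmono (Nat.le_add_right m n) hm) (hGmono (Nat.le_add_left n m) hn)⟩
      neg_mem' := by
        rintro a ha
        obtain ⟨m, hm⟩ := Set.mem_iUnion.mp ha
        exact Set.mem_iUnion.mpr ⟨m, Submodule.neg_mem _ hm⟩ }
  have mem_R' : ∀ {k : K}, k ∈ R' ↔ ∃ n, k ∈ G n := fun {k} => Set.mem_iUnion
  by_cases hone : ∃ n, (1 : K) ∈ Q * G n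
  · -- the integrality case
    obtain ⟨n, hn1⟩ := hone
    have hn1' : (1 : K) ∈ ∑ k ∈ Finset.range (n + 1), Q ^ (k + 1) := by
      rw [hGdef] at hn1
      rw [Finset.mul_sum] at hn1
      rw [show (∑ k ∈ Finset.range (n + 1), Q * Q ^ k)
          = ∑ k ∈ Finset.range (n + 1), Q ^ (k + 1) from
        Finset.sum_congr rfl fun k _ => (pow_succ' Q k).symm] at hn1
      exact hn1
    obtain ⟨g, hg, hgsum⟩ := mem_sum_submod hn1'
    choose Jk hJkQ hJkfg hJkmem using fun k => exists_fg_le_of_mem_pow Q k (g k) (hg k)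
    have hmapback : ∀ A : Submodule D K, A ≤ Ic →
        (A.map (LinearMap.mulLeft D x⁻¹)).map (LinearMap.mulLeft D x) = A := by
      intro A _
      rw [map_ml_comp, mul_inv_cancel₀ hx0, LinearMap.mulLeft_one, Submodule.map_id]
    have hmapQ : Q.map (LinearMap.mulLeft D x) = Ic := by
      rw [hQdef, map_ml_comp, mul_inv_cancel₀ hx0, LinearMap.mulLeft_one, Submodule.map_id]
    set J : Submodule D K :=
      (∑ k ∈ Finset.range (n + 1), (Jk k).map (LinearMap.mulLeft D x)) ⊔
        Submodule.span D {a₀} with hJdef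
    have hJle : J ≤ Ic := by
      apply sup_le
      · apply sum_submod_le
        intro k _
        calc (Jk k).map (LinearMap.mulLeft D x)
            ≤ Q.map (LinearMap.mulLeft D x) := Submodule.map_mono (hJkQ k)
          _ = Ic := hmapQ
      · rwa [Submodule.span_le, Set.singleton_subset_iff]
    have hJfg : J.FG :=
      (fg_sum_submod fun k _ => (hJkfg k).map _).sup (Submodule.fg_span_singleton a₀)
    have ha₀J : a₀ ∈ J := Submodule.mem_sup_right (Submodule.mem_span_singleton_self a₀)
    have hJkle : ∀ k, k ∈ Finset.range (n + 1) → Jk k ≤ J.map (LinearMap.mulLeft D x⁻¹) := by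
      intro k hk
      have h1 : Jk k = ((Jk k).map (LinearMap.mulLeft D x)).map (LinearMap.mulLeft D x⁻¹) := by
        rw [map_ml_comp, inv_mul_cancel₀ hx0, LinearMap.mulLeft_one, Submodule.map_id]
      have h2 : (Jk k).map (LinearMap.mulLeft D x) ≤ J := by
        rw [hJdef]
        refine le_sup_of_le_left ?_
        exact le_sum_submod (f := fun j => (Jk j).map (LinearMap.mulLeft D x)) hk
      rw [h1]
      exact Submodule.map_mono h2
    have hck : ∀ k, k ∈ Finset.range (n + 1) →
        ∃ c ∈ J ^ (k + 1), g k = x⁻¹ ^ (k + 1) * c := by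
      intro k hk
      have h1 : g k ∈ (J.map (LinearMap.mulLeft D x⁻¹)) ^ (k + 1) :=
        pow_submod_mono (hJkle k hk) (k + 1) (hJkmem k)
      rw [map_ml_pow] at h1
      obtain ⟨c, hc, hceq⟩ := h1
      exact ⟨c, hc, hceq.symm⟩
    refine ⟨J, hJfg, hJle, ⟨a₀, ha₀J, ha₀ne⟩, ?_⟩
    intro t ht
    have hpow : ∀ m : ℕ, ∀ c ∈ J ^ (m + 1), ∃ d, φ d = t ^ (m + 1) * c := by
      intro m
      induction m with
      | zero =>
        intro c hc
        rw [pow_one] at hc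
        simpa using ht c hc
      | succ m ih =>
        intro c hc
        rw [pow_succ] at hc
        refine Submodule.mul_induction_on hc (fun a ha b hb => ?_) (fun w1 w2 h1 h2 => ?_)
        · obtain ⟨d1, hd1⟩ := ih a ha
          obtain ⟨d2, hd2⟩ := ht b hb
          exact ⟨d1 * d2, by rw [map_mul, hd1, hd2]; ring⟩
        · obtain ⟨d1, hd1⟩ := h1
          obtain ⟨d2, hd2⟩ := h2
          exact ⟨d1 + d2, by rw [map_add, hd1, hd2, mul_add]⟩
    choose cc hccJ hcceq using hck
    have hdk : ∀ k (hk : k ∈ Finset.range (n + 1)), ∃ d, φ d = t ^ (k + 1) * cc k hk :=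
      fun k hk => hpow k (cc k hk) (hccJ k hk)
    choose dk hdkspec using hdk
    let dkf : ℕ → D := fun k => if hk : k ∈ Finset.range (n + 1) then dk k hk else 0
    set p : Polynomial D := Polynomial.X ^ (n + 1) -
      ∑ k ∈ Finset.range (n + 1), Polynomial.C (dkf k) * Polynomial.X ^ (n - k) with hpdef
    have hmonic : p.Monic := by
      apply Polynomial.monic_X_pow_sub
      apply lt_of_le_of_lt (Polynomial.degree_sum_le _ _)
      rw [Finset.sup_lt_iff (by exact WithBot.bot_lt_coe _)]
      intro k hk
      apply lt_of_le_of_lt (Polynomial.degree_C_mul_X_pow_le _ _)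
      exact_mod_cast Nat.lt_succ_of_le (Nat.sub_le n k)
    have hkey : (t * x) ^ (n + 1)
        = ∑ k ∈ Finset.range (n + 1), φ (dkf k) * (t * x) ^ (n - k) := by
      have h1 : ((t * x) ^ (n + 1) : K)
          = ∑ k ∈ Finset.range (n + 1), (t * x) ^ (n + 1) * g k := by
        rw [← Finset.mul_sum, ← hgsum, mul_one]
      rw [h1]
      apply Finset.sum_congr rfl
      intro k hk
      have hkn : k ≤ n := by have := Finset.mem_range.mp hk; omega
      rw [show dkf k = dk k hk from dif_pos hk, hdkspec k hk, hcceq k hk]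
      have hxsplit : x ^ (n + 1) = x ^ (n - k) * x ^ (k + 1) := by
        rw [← pow_add]; congr 1; omega
      have htsplit : t ^ (n + 1) = t ^ (k + 1) * t ^ (n - k) := by
        rw [← pow_add]; congr 1; omega
      have hxinv : x ^ (k + 1) * x⁻¹ ^ (k + 1) = 1 := by
        rw [← mul_pow, mul_inv_cancel₀ hx0, one_pow]
      rw [mul_pow t x, hxsplit, htsplit]
      linear_combination (t ^ (k + 1) * t ^ (n - k) * x ^ (n - k) * cc k hk) * hxinv
    have haeval : Polynomial.aeval (t * x) p = 0 := by
      rw [hpdef]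
      rw [map_sub, map_pow, Polynomial.aeval_X, map_sum]
      rw [show (∑ k ∈ Finset.range (n + 1),
          Polynomial.aeval (t * x) (Polynomial.C (dkf k) * Polynomial.X ^ (n - k)))
          = ∑ k ∈ Finset.range (n + 1), φ (dkf k) * (t * x) ^ (n - k) from
        Finset.sum_congr rfl fun k _ => by
          rw [map_mul, Polynomial.aeval_C, map_pow, Polynomial.aeval_X]]
      rw [← hkey, sub_self]
    have hint : IsIntegral D (t * x) := ⟨p, hmonic, by rwa [← Polynomial.aeval_def]⟩
    obtain ⟨d, hd⟩ := IsIntegrallyClosed.isIntegral_iff.mp hint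
    exact ⟨d, hd⟩
  · -- the valuation-theoretic contradiction
    exfalso
    push_neg at hone
    let J0 : Ideal R' :=
      { carrier := {r : R' | ∃ n, (r : K) ∈ Q * G n}
        zero_mem' := ⟨0, Submodule.zero_mem _⟩
        add_mem' := by
          rintro a b ⟨m, hm⟩ ⟨n, hn⟩
          refine ⟨m + n, Submodule.add_mem _ ?_ ?_⟩
          · exact mul_le_mul' le_rfl (hGmono (Nat.le_add_right m n)) hm
          · exact mul_le_mul' le_rfl (hGmono (Nat.le_add_left n m)) hn
        smul_mem' := by
          rintro r y ⟨n, hn⟩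
          obtain ⟨m, hm⟩ := mem_R'.mp r.2
          refine ⟨m + n, ?_⟩
          have h1 : (r : K) * (y : K) ∈ G m * (Q * G n) := Submodule.mul_mem_mul hm hn
          have h2 : G m * (Q * G n) = Q * (G m * G n) := by
            rw [← mul_assoc, Submodule.mul_comm (G m) Q, mul_assoc]
          rw [h2] at h1
          exact mul_le_mul' le_rfl (hGmul m n) h1 }
    have hJ0ne : J0 ≠ ⊤ := by
      intro h
      have h1 : (1 : R') ∈ J0 := h ▸ Submodule.mem_top
      obtain ⟨n, hn⟩ := h1
      exact hone n hn
    obtain ⟨m, hmmax, hJ0m⟩ := Ideal.exists_le_maximal J0 hJ0ne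
    obtain ⟨B, hBsub, hBnon⟩ := exists_valuation_dominating R' m
    have hφB : ∀ d, φ d ∈ B := fun d => hBsub _ (mem_R'.mpr ⟨0, hφmem d⟩)
    have hxIV := hxV (valSubalg D B hφB) (valSubalg_valuationRing D B hφB)
    let MB : Submodule D K :=
      { carrier := {k : K | ∃ hk : k ∈ B, ¬ IsUnit (⟨k, hk⟩ : B)}
        zero_mem' := ⟨zero_mem _, by
          intro hu
          have : ((⟨(0 : K), zero_mem _⟩ : B)) = 0 := rfl
          rw [this] at hu
          exact not_isUnit_zero hu⟩
        add_mem' := by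
          rintro a b ⟨ha, hna⟩ ⟨hb, hnb⟩
          refine ⟨add_mem ha hb, ?_⟩
          have := IsLocalRing.nonunits_add (mem_nonunits_iff.mpr hna) (mem_nonunits_iff.mpr hnb)
          exact mem_nonunits_iff.mp this
        smul_mem' := by
          rintro d k ⟨hk, hnk⟩
          have hmem : d • k ∈ B := by
            rw [Algebra.smul_def]
            exact mul_mem (hφB d) hk
          refine ⟨hmem, fun hu => hnk ?_⟩
          have heq : (⟨d • k, hmem⟩ : B) = ⟨φ d, hφB d⟩ * ⟨k, hk⟩ :=
            Subtype.ext (Algebra.smul_def d k)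
          rw [heq] at hu
          exact isUnit_of_mul_isUnit_right hu }
    have hmul_le : Ic * Subalgebra.toSubmodule (valSubalg D B hφB)
        ≤ MB.comap (LinearMap.mulLeft D x⁻¹) := by
      rw [Submodule.mul_le]
      intro a haI v hv
      have hvB : v ∈ B := hv
      have hmem1 : x⁻¹ * a ∈ Q := ⟨a, haI, rfl⟩
      have hmem2 : x⁻¹ * a ∈ R' := mem_R'.mpr ⟨1, hQk_le_G 1 1 le_rfl (by rwa [pow_one])⟩
      have hmemJ0 : (⟨x⁻¹ * a, hmem2⟩ : R') ∈ J0 := by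
        refine ⟨0, ?_⟩
        rw [hG0, mul_one]
        exact hmem1
      have hmemm : (⟨x⁻¹ * a, hmem2⟩ : R') ∈ m := hJ0m hmemJ0
      have hmemB : x⁻¹ * a ∈ B := hBsub _ hmem2
      have hnonu := hBnon (x⁻¹ * a) hmem2 hmemm hmemB
      have hmemB2 : x⁻¹ * (a * v) ∈ B := by
        rw [← mul_assoc]
        exact mul_mem hmemB hvB
      refine Submodule.mem_comap.mpr ?_
      show ∃ hk : x⁻¹ * (a * v) ∈ B, ¬ IsUnit (⟨x⁻¹ * (a * v), hk⟩ : B)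
      refine ⟨hmemB2, fun hu => hnonu ?_⟩
      have heq : (⟨x⁻¹ * (a * v), hmemB2⟩ : B) = ⟨x⁻¹ * a, hmemB⟩ * ⟨v, hvB⟩ :=
        Subtype.ext (by push_cast; ring)
      rw [heq] at hu
      exact isUnit_of_mul_isUnit_left hu
    have hxMB := hmul_le hxIV
    rw [Submodule.mem_comap] at hxMB
    have h1 : (LinearMap.mulLeft D x⁻¹) x = (1 : K) := by
      simp [LinearMap.mulLeft_apply, inv_mul_cancel₀ hx0]
    rw [h1] at hxMB
    obtain ⟨h1B, hnu⟩ := hxMB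
    exact hnu (by rw [show (⟨(1 : K), h1B⟩ : B) = 1 from Subtype.ext rfl]; exact isUnit_one)
end MainA

section MainB
variable {D : Type*} [CommRing D] [IsDomain D] {K : Type*} [Field K] [Algebra D K]
  [IsFractionRing D K]

private lemma mem_of_fg_hv (I : FractionalIdeal D⁰ K)
    (hflat : Module.Flat D (I : Submodule D K)) {x : K} (J : Submodule D K)
    (hfg : J.FG) (hJI : J ≤ (I : Submodule D K)) (ha : ∃ a₀ ∈ J, a₀ ≠ (0 : K))
    (hv : ∀ t : K, (∀ a ∈ J, ∃ d, algebraMap D K d = t * a) →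
      ∃ d, algebraMap D K d = t * x) :
    x ∈ (I : Submodule D K) := by
  classical
  obtain ⟨s, hs⟩ := hfg
  obtain ⟨a₀, ha₀J, ha₀ne⟩ := ha
  set φ := algebraMap D K with hφ
  let ι := {y : K // y ∈ s}
  let c' : ι → K := fun i => (i : K)
  have hc'J : ∀ i, c' i ∈ J := fun i => hs ▸ Submodule.subset_span i.2
  have hc'I : ∀ i, c' i ∈ (I : Submodule D K) := fun i => hJI (hc'J i)
  obtain ⟨dd, hddmem, hdd⟩ := I.isFractional
  have hφdd : φ dd ≠ 0 := IsFractionRing.to_map_ne_zero_of_mem_nonZeroDivisors hddmem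
  have hE' : ∀ i : ι, ∃ e : D, φ e = dd • c' i := fun i => hdd (c' i) (hc'I i)
  choose E hE using hE'
  let cM : ι → ↥(I : Submodule D K) := fun i => ⟨c' i, hc'I i⟩
  have hrel : ∀ i j, E j • cM i = E i • cM j := by
    intro i j
    apply Subtype.ext
    show E j • c' i = E i • c' j
    rw [Algebra.smul_def, Algebra.smul_def, hE j, hE i, Algebra.smul_def, Algebra.smul_def]
    ring
  obtain ⟨κ, hκ, b, z, hcz, hbrel⟩ := flat_rel_factor E cM hrel
  have hczK : ∀ i, c' i = ∑ k, φ (b i k) * (z k : K) := by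
    intro i
    have h := congrArg (Subtype.val) (hcz i)
    rw [show ((∑ k, b i k • z k : ↥(I : Submodule D K)) : K) = ∑ k, φ (b i k) * (z k : K) from ?_] at h
    · exact h
    · rw [AddSubmonoidClass.coe_finset_sum]
      apply Finset.sum_congr rfl
      intro k _
      rw [SetLike.val_smul, Algebra.smul_def]
  have hKrel : ∀ i j k, c' j * φ (b i k) = c' i * φ (b j k) := by
    intro i j k
    have h := congrArg φ (hbrel i j k)
    rw [map_mul, map_mul, hE j, hE i, Algebra.smul_def, Algebra.smul_def] at h
    rw [mul_assoc, mul_assoc] at h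
    exact mul_left_cancel₀ hφdd h
  have hex : ∃ i₀ : ι, c' i₀ ≠ 0 := by
    by_contra hno
    push_neg at hno
    have : J ≤ ⊥ := by
      rw [← hs, Submodule.span_le]
      intro y hy
      have : y = 0 := hno ⟨y, hy⟩
      simp [this]
    exact ha₀ne ((Submodule.mem_bot D).mp (this ha₀J))
  obtain ⟨i₀, hi₀⟩ := hex
  let t : κ → K := fun k => φ (b i₀ k) * (c' i₀)⁻¹
  have htc : ∀ k i, t k * c' i = φ (b i k) := by
    intro k i
    have h := (hKrel i i₀ k).symm
    show φ (b i₀ k) * (c' i₀)⁻¹ * c' i = φ (b i k)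
    field_simp
    rw [mul_comm (φ (b i₀ k)) (c' i), h]
  have htJ : ∀ k, ∀ a ∈ J, ∃ d, φ d = t k * a := by
    intro k a haJ
    rw [← hs] at haJ
    induction haJ using Submodule.span_induction with
    | mem y hy => exact ⟨b ⟨y, hy⟩ k, (htc k ⟨y, hy⟩).symm⟩
    | zero => exact ⟨0, by simp⟩
    | add y w _ _ hy hw =>
      obtain ⟨d1, hd1⟩ := hy
      obtain ⟨d2, hd2⟩ := hw
      exact ⟨d1 + d2, by rw [map_add, hd1, hd2]; ring⟩
    | smul d' y _ hy =>
      obtain ⟨d, hd⟩ := hy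
      exact ⟨d' * d, by rw [map_mul, hd, Algebra.smul_def]; ring⟩
  choose dk hdk using fun k => hv (t k) (htJ k)
  have sum1 : (∑ k, t k * (z k : K)) = 1 := by
    have h := hczK i₀
    have h2 : c' i₀ * (∑ k, t k * (z k : K)) = c' i₀ * 1 := by
      rw [mul_one, Finset.mul_sum]
      rw [show (∑ k, c' i₀ * (t k * (z k : K))) = ∑ k, φ (b i₀ k) * (z k : K) from
        Finset.sum_congr rfl fun k _ => by
          rw [show c' i₀ * (t k * (z k : K)) = (t k * c' i₀) * (z k : K) by ring, htc k i₀]]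
      exact h.symm
    exact mul_left_cancel₀ hi₀ h2
  have hfin : x = ∑ k, dk k • (z k : K) := by
    calc x = x * (∑ k, t k * (z k : K)) := by rw [sum1, mul_one]
    _ = ∑ k, (t k * x) * (z k : K) := by rw [Finset.mul_sum]; apply Finset.sum_congr rfl; intros; ring
    _ = ∑ k, dk k • (z k : K) := by
        apply Finset.sum_congr rfl
        intro k _
        rw [Algebra.smul_def, hdk k]
  rw [hfin]
  exact Submodule.sum_mem _ fun k _ => Submodule.smul_mem _ _ (z k).2
end MainB

/-- Every flat nonzero fractional ideal of an integrally closed domain is complete: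
it equals the intersection `⋂ I·V` over all valuation overrings `V` of `D`. -/
theorem flat_ideal_complete_of_integrallyClosed
    (D K : Type*) [CommRing D] [IsDomain D] [Field K] [Algebra D K] [IsFractionRing D K]
    [IsIntegrallyClosed D]
    (I : FractionalIdeal D⁰ K) (hI : I ≠ 0)
    (hflat : Module.Flat D (I : Submodule D K)) :
    (⨅ V ∈ {V : Subalgebra D K | ValuationRing V},
        (I : Submodule D K) * Subalgebra.toSubmodule V) = (I : Submodule D K) := by
  classical
  apply le_antisymm
  · intro x hx
    have hxV : ∀ V : Subalgebra D K, ValuationRing V →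
        x ∈ (I : Submodule D K) * Subalgebra.toSubmodule V := by
      intro V hV
      have h1 := (Submodule.mem_iInf _).mp hx V
      exact (Submodule.mem_iInf _).mp h1 hV
    by_cases hx0 : x = 0
    · subst hx0; exact Submodule.zero_mem _
    obtain ⟨J, hJfg, hJle, ha, hv⟩ := exists_fg_hv I hI hx0 hxV
    exact mem_of_fg_hv I hflat J hJfg hJle ha hv
  · apply le_iInf; intro V; apply le_iInf; intro hV
    intro m hm
    have h1 : (1 : K) ∈ Subalgebra.toSubmodule V := V.one_mem
    have h2 := Submodule.mul_mem_mul hm h1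
    rwa [mul_one] at h2
end

section
/- Let D be an integrally closed domain. Every idempotent (I² = I) flat nonzero fractional ideal of D is a radical ideal. -/
open scoped nonZeroDivisors

universe u

section AuxRad
variable {D : Type u} [CommRing D]

/-- Any element of `A * B` has a finite representation `∑ aᵢ * mᵢ`. -/
theorem RadAux.mem_mul_repr {A B : Ideal D} {t : D} (ht : t ∈ A * B) :
    ∃ (ι : Type u) (_ : Fintype ι) (a m : ι → D),
      (∀ i, a i ∈ A) ∧ (∀ i, m i ∈ B) ∧ t = ∑ i, a i * m i := by
  refine Submodule.mul_induction_on ht ?_ ?_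
  · intro a ha m hm
    exact ⟨PUnit.{u+1}, inferInstance, fun _ => a, fun _ => m, fun _ => ha, fun _ => hm, by simp⟩
  · rintro x y ⟨ι₁, _, a₁, m₁, ha₁, hm₁, rfl⟩ ⟨ι₂, _, a₂, m₂, ha₂, hm₂, rfl⟩
    exact ⟨ι₁ ⊕ ι₂, inferInstance, Sum.elim a₁ a₂, Sum.elim m₁ m₂,
      by rintro (i | i) <;> simp [ha₁, ha₂], by rintro (i | i) <;> simp [hm₁, hm₂],
      by rw [Fintype.sum_sum_type]; simp⟩

/-- Any element of `I ^ (n+1)` lies in `J ^ (n+1)` for a finitely generated `J ≤ I`. -/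
theorem RadAux.mem_pow_fg {I : Ideal D} :
    ∀ (n : ℕ) (t : D), t ∈ I ^ (n + 1) →
      ∃ s : Finset D, (s : Set D) ⊆ I ∧ t ∈ Ideal.span (s : Set D) ^ (n + 1) := by
  classical
  intro n
  induction n with
  | zero =>
    intro t ht
    rw [pow_one] at ht
    refine ⟨{t}, ?_, ?_⟩
    · rw [Finset.coe_singleton, Set.singleton_subset_iff]; exact ht
    · rw [pow_one, Finset.coe_singleton]
      exact Ideal.mem_span_singleton_self t
  | succ n ih =>
    intro t ht
    rw [pow_succ] at ht
    refine Submodule.mul_induction_on ht ?_ ?_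
    · intro z hz a ha
      obtain ⟨s, hsI, hzs⟩ := ih z hz
      refine ⟨insert a s, ?_, ?_⟩
      · intro c hc
        rcases Finset.mem_insert.mp (by exact_mod_cast hc) with h | h
        · subst h; exact ha
        · exact hsI h
      · rw [pow_succ]
        refine Submodule.mul_mem_mul ?_ (Ideal.subset_span ?_)
        · exact Ideal.pow_right_mono (Ideal.span_mono (by
            intro c hc; exact_mod_cast Finset.mem_insert_of_mem (by exact_mod_cast hc))) _ hzs
        · exact_mod_cast Finset.mem_insert_self a s
    · rintro z w ⟨s₁, hs₁, hz⟩ ⟨s₂, hs₂, hw⟩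
      refine ⟨s₁ ∪ s₂, ?_, ?_⟩
      · intro c hc
        rcases Finset.mem_union.mp (by exact_mod_cast hc) with h | h
        · exact hs₁ h
        · exact hs₂ h
      · have h₁ : Ideal.span (s₁ : Set D) ≤ Ideal.span ((s₁ ∪ s₂ : Finset D) : Set D) :=
          Ideal.span_mono (by
            intro c hc; exact_mod_cast Finset.mem_union_left _ (by exact_mod_cast hc))
        have h₂ : Ideal.span (s₂ : Set D) ≤ Ideal.span ((s₁ ∪ s₂ : Finset D) : Set D) :=
          Ideal.span_mono (by
            intro c hc; exact_mod_cast Finset.mem_union_right _ (by exact_mod_cast hc))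
        exact Ideal.add_mem _ (Ideal.pow_right_mono h₁ _ hz) (Ideal.pow_right_mono h₂ _ hw)

/-- For a flat ideal `I`, `(A * I) ∩ (B * I) ≤ (A ⊓ B) * I`. -/
theorem RadAux.flat_inter_mul {I : Ideal D} (hflat : Module.Flat D I) {A B : Ideal D} {t : D}
    (h1 : t ∈ A * I) (h2 : t ∈ B * I) : t ∈ (A ⊓ B) * I := by
  obtain ⟨ι₁, _, a₁, m₁, ha₁, hm₁, heq₁⟩ := RadAux.mem_mul_repr h1
  obtain ⟨ι₂, _, a₂, m₂, ha₂, hm₂, heq₂⟩ := RadAux.mem_mul_repr h2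
  haveI := hflat
  set f : ι₁ ⊕ ι₂ → D := Sum.elim a₁ (fun j => -(a₂ j)) with hf
  set xv : ι₁ ⊕ ι₂ → I := Sum.elim (fun i => ⟨m₁ i, hm₁ i⟩) (fun j => ⟨m₂ j, hm₂ j⟩) with hx
  have hrel : ∑ i, f i • xv i = 0 := by
    have : ((∑ i, f i • xv i : I) : D) = 0 := by
      push_cast
      rw [Fintype.sum_sum_type]
      simp only [hf, hx, Sum.elim_inl, Sum.elim_inr, smul_eq_mul]
      simp only [neg_mul]
      rw [Finset.sum_neg_distrib, ← heq₁, ← heq₂]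
      ring
    exact Subtype.ext this
  obtain ⟨κ, aa, y, hxy, hsum⟩ := Module.Flat.isTrivialRelation_of_sum_smul_eq_zero hrel
  set g : Fin κ → D := fun j => ∑ i, a₁ i * aa (Sum.inl i) j with hg
  have hgA : ∀ j, g j ∈ A := fun j => Ideal.sum_mem _ fun i _ => Ideal.mul_mem_right _ _ (ha₁ i)
  have hgB : ∀ j, g j ∈ B := by
    intro j
    have h0 := hsum j
    rw [Fintype.sum_sum_type] at h0
    simp only [hf, Sum.elim_inl, Sum.elim_inr, neg_mul] at h0
    have : g j = ∑ i, a₂ i * aa (Sum.inr i) j := by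
      rw [hg]
      rw [Finset.sum_neg_distrib] at h0
      linear_combination h0
    rw [this]
    exact Ideal.sum_mem _ fun i _ => Ideal.mul_mem_right _ _ (ha₂ i)
  have ht : t = ∑ j, g j * (y j : D) := by
    rw [heq₁]
    have hm : ∀ i, m₁ i = ∑ j, aa (Sum.inl i) j * (y j : D) := by
      intro i
      have := congrArg (fun z : I => (z : D)) (hxy (Sum.inl i))
      simpa [hx] using this
    calc ∑ i, a₁ i * m₁ i = ∑ i, ∑ j, a₁ i * (aa (Sum.inl i) j * (y j : D)) := by
          refine Finset.sum_congr rfl fun i _ => ?_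
          rw [hm i, Finset.mul_sum]
      _ = ∑ j, g j * (y j : D) := by
          rw [Finset.sum_comm]
          refine Finset.sum_congr rfl fun j _ => ?_
          rw [hg, Finset.sum_mul]
          exact Finset.sum_congr rfl fun i _ => by ring
  rw [ht]
  exact Ideal.sum_mem _ fun j _ => Ideal.mul_mem_mul ⟨hgA j, hgB j⟩ (y j).2

/-- For a flat ideal `I`, membership in finitely many `span {b i} * I` gives membership in
`(⨅ span {b i}) * I`. -/
theorem RadAux.flat_inf_mul {I : Ideal D} (hflat : Module.Flat D I) {ι : Type*}
    {s : Finset ι} (hs : s.Nonempty) (b : ι → D) {t : D}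
    (ht : ∀ i ∈ s, t ∈ Ideal.span {b i} * I) :
    t ∈ (s.inf fun i => Ideal.span {b i}) * I := by
  induction hs using Finset.Nonempty.cons_induction with
  | singleton i => rw [Finset.inf_singleton]; exact ht i (by simp)
  | cons i s hi hs ih =>
    rw [Finset.inf_cons]
    exact RadAux.flat_inter_mul hflat (ht i (by simp)) (ih fun j hj => ht j (by simp [hj]))

theorem RadAux.pow_eq_self {I : Ideal D} (hidem : I * I = I) : ∀ n : ℕ, I ^ (n + 1) = I := by
  intro n
  induction n with
  | zero => rw [pow_one]
  | succ n ih => rw [pow_succ, ih, hidem]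

end AuxRad

/-- In an integrally closed domain, every idempotent flat nonzero ideal is a radical ideal. -/
theorem radical_of_idempotent_flat
    (D : Type*) [CommRing D] [IsDomain D] [IsIntegrallyClosed D]
    (I : Ideal D) (hI : I ≠ ⊥) (hflat : Module.Flat D I) (hidem : I * I = I) :
    I.radical = I := by
  classical
  refine le_antisymm ?_ Ideal.le_radical
  intro x hx
  obtain ⟨n, hxn⟩ := hx
  rcases Nat.eq_zero_or_pos n with hn | hn
  · subst hn
    rw [pow_zero] at hxn
    rw [(Ideal.eq_top_iff_one I).mpr hxn]
    trivial
  by_cases hx0 : x = 0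
  · subst hx0; exact I.zero_mem
  obtain ⟨m, rfl⟩ : ∃ m, n = m + 1 := ⟨n - 1, by omega⟩
  have hpow : x ^ (m + 1) ∈ I ^ (m + 1) := by
    rw [RadAux.pow_eq_self hidem]; exact hxn
  obtain ⟨s, hsI, hxs⟩ := RadAux.mem_pow_fg m _ hpow
  -- throw away zero generators
  set s' : Finset D := s.filter (· ≠ 0) with hs'
  have hspan : Ideal.span (s : Set D) = Ideal.span (s' : Set D) := by
    apply le_antisymm
    · rw [Ideal.span_le]
      intro c hc
      by_cases h0 : c = 0
      · subst h0
        exact SetLike.mem_coe.mpr (Ideal.zero_mem _)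
      · exact SetLike.mem_coe.mpr (Ideal.subset_span (by
          simp only [hs', Finset.coe_filter, Set.mem_setOf_eq]
          exact ⟨by exact_mod_cast hc, h0⟩))
    · exact Ideal.span_mono (by
        intro c hc
        exact_mod_cast Finset.filter_subset _ _ (by exact_mod_cast hc))
  rw [hspan] at hxs
  have hxnez : x ^ (m + 1) ≠ 0 := pow_ne_zero _ hx0
  have hs'ne : s'.Nonempty := by
    rw [Finset.nonempty_iff_ne_empty]
    intro hemp
    rw [hemp, Finset.coe_empty, Ideal.span_empty] at hxs
    have hbot : (⊥ : Ideal D) ^ (m + 1) = ⊥ := by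
      rw [← Ideal.zero_eq_bot, zero_pow (Nat.succ_ne_zero m)]
    rw [hbot, Ideal.mem_bot] at hxs
    exact hxnez hxs
  have hs'I : ∀ c ∈ s', c ∈ I := fun c hc => hsI (by exact_mod_cast Finset.filter_subset _ _ hc)
  have hs'nz : ∀ c ∈ s', c ≠ 0 := fun c hc => (Finset.mem_filter.mp hc).2
  set C : D := ∏ c ∈ s', c with hC
  have hCnz : C ≠ 0 := Finset.prod_ne_zero_iff.mpr hs'nz
  set bb : D → D := fun c => ∏ d ∈ s'.erase c, d with hbb
  have hCb : ∀ c ∈ s', c * bb c = C := fun c hc => Finset.mul_prod_erase s' (fun d => d) hc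
  have h1 : ∀ c ∈ s', C ∈ Ideal.span {bb c} * I := by
    intro c hc
    rw [← hCb c hc, mul_comm c (bb c)]
    exact Ideal.mul_mem_mul (Ideal.mem_span_singleton_self _) (hs'I c hc)
  have h2 := RadAux.flat_inf_mul hflat hs'ne bb h1
  obtain ⟨ι, _, g, mm, hg, hmm, hCsum⟩ := RadAux.mem_mul_repr h2
  -- key step : each `g j * x` is divisible by `C`
  have key : ∀ j, ∃ d : D, g j * x = C * d := by
    intro j
    -- first : `g j * z ∈ span {C}` for every `z` in the span of `s'`
    have hgc : ∀ z ∈ Ideal.span (s' : Set D), g j * z ∈ Ideal.span {C} := by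
      intro z hz
      refine Submodule.span_induction (fun c hc => ?_) ?_ (fun a b _ _ ha hb => ?_)
        (fun r a _ ha => ?_) hz
      · have hcs' : c ∈ s' := by exact_mod_cast hc
        have hle := Finset.inf_le (s := s') (f := fun i => Ideal.span {bb i}) hcs'
        have hgj : g j ∈ Ideal.span {bb c} := hle (hg j)
        obtain ⟨e, he⟩ := Ideal.mem_span_singleton'.mp hgj
        rw [Ideal.mem_span_singleton]
        exact ⟨e, by rw [← hCb c hcs', ← he]; ring⟩
      · rw [mul_zero]; exact Ideal.zero_mem _
      · rw [mul_add]; exact Ideal.add_mem _ ha hb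
      · rw [smul_eq_mul, mul_left_comm]
        exact Ideal.mul_mem_left _ _ ha
    have hstep : Ideal.span {g j} * Ideal.span (s' : Set D) ≤ Ideal.span {C} := by
      rw [Ideal.mul_le]
      intro r hr z hz
      obtain ⟨e, he⟩ := Ideal.mem_span_singleton'.mp hr
      rw [← he, mul_assoc]
      exact Ideal.mul_mem_left _ _ (hgc z hz)
    have hpow2 : g j ^ (m + 1) * x ^ (m + 1) ∈ Ideal.span {C ^ (m + 1)} := by
      have h3 := Ideal.pow_right_mono hstep (m + 1)
      rw [mul_pow, Ideal.span_singleton_pow, Ideal.span_singleton_pow] at h3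
      exact h3 (Ideal.mul_mem_mul (Ideal.mem_span_singleton_self _) hxs)
    obtain ⟨e, he⟩ := Ideal.mem_span_singleton'.mp hpow2
    -- move to the fraction field
    set K := FractionRing D
    have hCK : algebraMap D K C ≠ 0 := fun h => hCnz (IsFractionRing.injective D K (by simpa using h))
    set z : K := algebraMap D K (g j * x) / algebraMap D K C with hz
    have hzn : z ^ (m + 1) = algebraMap D K e := by
      have hCKp : (algebraMap D K) C ^ (m + 1) ≠ 0 := pow_ne_zero _ hCK
      rw [hz, div_pow, div_eq_iff hCKp, ← map_pow, ← map_pow, ← map_mul]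
      congr 1
      rw [mul_pow]
      linear_combination -he
    have hzint : IsIntegral D (z ^ (m + 1)) := by
      rw [hzn]; exact isIntegral_algebraMap
    obtain ⟨d, hd⟩ := IsIntegrallyClosed.exists_algebraMap_eq_of_isIntegral_pow
      (Nat.succ_pos m) hzint
    refine ⟨d, IsFractionRing.injective D K ?_⟩
    rw [map_mul (algebraMap D K) C d, hd, hz, mul_div_cancel₀ _ hCK]
  choose d hd using key
  have hfin : C * x = C * ∑ j, d j * mm j := by
    calc C * x = ∑ j, (g j * x) * mm j := by
          rw [hCsum, Finset.sum_mul]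
          exact Finset.sum_congr rfl fun j _ => by ring
      _ = ∑ j, (C * d j) * mm j := Finset.sum_congr rfl fun j _ => by rw [hd j]
      _ = C * ∑ j, d j * mm j := by
          rw [Finset.mul_sum]
          exact Finset.sum_congr rfl fun j _ => by ring
  have hxx : x = ∑ j, d j * mm j := mul_left_cancel₀ hCnz hfin
  rw [hxx]
  exact Ideal.sum_mem _ fun j _ => Ideal.mul_mem_left _ _ (hmm j)
end

section
/- Let D be an integral domain with the t-finite character, i.e., each proper t-ideal of D is contained in only finitely many t-maximal ideals. Then every faithfully flat nonzero ideal of D is invertible. -/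
open scoped nonZeroDivisors

section TOps
variable (D K : Type*) [CommRing D] [IsDomain D] [Field K] [Algebra D K] [IsFractionRing D K]

/-- An integral ideal of `D` is a `t`-ideal if it equals its `t`-closure. -/
def IsTIdeal (I : Ideal D) : Prop :=
  tClosure D K (I : FractionalIdeal D⁰ K) = ((I : FractionalIdeal D⁰ K) : Submodule D K)

/-- A `t`-maximal ideal: maximal among proper integral `t`-ideals. -/
def IsTMaximal (P : Ideal D) : Prop :=
  P ≠ ⊤ ∧ IsTIdeal D K P ∧ ∀ Q : Ideal D, Q ≠ ⊤ → IsTIdeal D K Q → P ≤ Q → P = Q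

/-- `D` has the `t`-finite character if every proper integral `t`-ideal is contained
in only finitely many `t`-maximal ideals. -/
def HasTFiniteCharacter : Prop :=
  ∀ I : Ideal D, I ≠ ⊤ → IsTIdeal D K I →
    {P : Ideal D | IsTMaximal D K P ∧ I ≤ P}.Finite

end TOps


section Aux
set_option linter.unusedSectionVars false
set_option linter.unusedVariables false
variable {D K : Type*} [CommRing D] [IsDomain D] [Field K] [Algebra D K] [IsFractionRing D K]

open FractionalIdeal

namespace TProof

lemma exists_ne_zero' {J : FractionalIdeal D⁰ K} (hJ : J ≠ 0) : ∃ x ∈ J, x ≠ (0 : K) := by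
  by_contra h
  push_neg at h
  exact hJ (eq_zero_iff.mpr h)

lemma one_div_ne_zero' {J : FractionalIdeal D⁰ K} (hJ : J ≠ 0) :
    (1 / J : FractionalIdeal D⁰ K) ≠ 0 := by
  obtain ⟨a, haS, ha⟩ := J.isFractional
  intro h0
  have hmem : algebraMap D K a ∈ (1 / J : FractionalIdeal D⁰ K) := by
    rw [mem_div_iff_of_ne_zero hJ]
    intro y hy
    obtain ⟨c, hc⟩ := ha y (mem_coe.mpr hy)
    rw [mem_one_iff]
    exact ⟨c, by rw [hc, Algebra.smul_def]⟩
  rw [h0, mem_zero_iff] at hmem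
  exact (map_ne_zero_iff _ (IsFractionRing.injective D K)).mpr
    (nonZeroDivisors.ne_zero haS) hmem

lemma mul_one_div_le_one' {J : FractionalIdeal D⁰ K} : J * (1 / J) ≤ 1 := by
  rcases eq_or_ne J 0 with rfl | hJ
  · rw [FractionalIdeal.div_zero, mul_zero]
    exact zero_le _
  · refine mul_le.mpr fun i hi j hj => ?_
    rw [mem_div_iff_of_ne_zero hJ] at hj
    rw [mul_comm]
    exact hj i hi

lemma le_vop (J : FractionalIdeal D⁰ K) : J ≤ 1 / (1 / J) := by
  rcases eq_or_ne J 0 with rfl | hJ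
  · exact zero_le _
  · exact (le_div_iff_mul_le (one_div_ne_zero' hJ)).mpr mul_one_div_le_one'

lemma one_div_antitone' {J J' : FractionalIdeal D⁰ K} (hJ : J ≠ 0) (h : J ≤ J') :
    1 / J' ≤ 1 / J := by
  have hJ' : J' ≠ 0 := fun e => hJ (le_antisymm (e ▸ h) (zero_le J))
  refine (le_div_iff_mul_le hJ).mpr (mul_le.mpr fun i hi j hj => ?_)
  rw [mem_div_iff_of_ne_zero hJ'] at hi
  exact hi j (h hj)

lemma vop_mono {J J' : FractionalIdeal D⁰ K} (h : J ≤ J') : 1 / (1 / J) ≤ 1 / (1 / J') := by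
  rcases eq_or_ne J 0 with rfl | hJ
  · rw [FractionalIdeal.div_zero, FractionalIdeal.div_zero]
    exact zero_le _
  · have hJ' : J' ≠ 0 := fun e => hJ (le_antisymm (e ▸ h) (zero_le J))
    exact one_div_antitone' (one_div_ne_zero' hJ') (one_div_antitone' hJ h)

lemma one_div_vop (J : FractionalIdeal D⁰ K) : 1 / (1 / (1 / J)) = 1 / J := by
  rcases eq_or_ne J 0 with rfl | hJ
  · rw [FractionalIdeal.div_zero, FractionalIdeal.div_zero, FractionalIdeal.div_zero]
  · exact le_antisymm (one_div_antitone' hJ (le_vop J)) (le_vop (1 / J))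

lemma vop_idem (J : FractionalIdeal D⁰ K) : 1 / (1 / (1 / (1 / J))) = 1 / (1 / J) :=
  one_div_vop (1 / J)

lemma vop_spanSingleton (x : K) :
    1 / (1 / spanSingleton D⁰ x) = spanSingleton D⁰ x := by
  rw [one_div_spanSingleton, one_div_spanSingleton, inv_inv]

lemma vop_ne_zero {J : FractionalIdeal D⁰ K} (hJ : J ≠ 0) :
    (1 / (1 / J) : FractionalIdeal D⁰ K) ≠ 0 :=
  fun e => hJ (le_antisymm (e ▸ le_vop J) (zero_le J))

lemma div_mul_self_le {A B : FractionalIdeal D⁰ K} : A / B * B ≤ A := by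
  rcases eq_or_ne B 0 with rfl | hB
  · rw [mul_zero]
    exact zero_le _
  · exact mul_le.mpr fun i hi j hj => (mem_div_iff_of_ne_zero hB).mp hi j hj

lemma vop_mul_le (J B : FractionalIdeal D⁰ K) :
    1 / (1 / J) * B ≤ 1 / (1 / (J * B)) := by
  rcases eq_or_ne J 0 with rfl | hJ
  · rw [FractionalIdeal.div_zero, FractionalIdeal.div_zero, zero_mul]
    exact zero_le _
  rcases eq_or_ne B 0 with rfl | hB
  · rw [mul_zero]
    exact zero_le _
  have hJB : J * B ≠ 0 := by
    obtain ⟨x, hx, hx0⟩ := exists_ne_zero' hJ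
    obtain ⟨y, hy, hy0⟩ := exists_ne_zero' hB
    intro e
    have hxy := mul_mem_mul hx hy
    rw [e, mem_zero_iff] at hxy
    exact mul_ne_zero hx0 hy0 hxy
  have step : B * (1 / (J * B)) ≤ 1 / (1 / (1 / J)) := by
    rw [one_div_vop]
    refine mul_le.mpr fun b hb z hz => ?_
    rw [mem_div_iff_of_ne_zero hJ]
    intro y hy
    have h1 : z * (y * b) ∈ (1 : FractionalIdeal D⁰ K) :=
      (mem_div_iff_of_ne_zero hJB).mp hz _ (mul_mem_mul hy hb)
    have : b * z * y = z * (y * b) := by ring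
    rw [this]
    exact h1
  refine (le_div_iff_mul_le (one_div_ne_zero' hJB)).mpr ?_
  rw [mul_assoc]
  refine mul_le.mpr fun x hx w hw => ?_
  have hw' := step hw
  rw [mul_comm]
  exact (mem_div_iff_of_ne_zero (vop_ne_zero hJ)).mp hw' x hx

lemma vop_div {V : FractionalIdeal D⁰ K} (hV : 1 / (1 / V) = V) (B : FractionalIdeal D⁰ K) :
    1 / (1 / (V / B)) = V / B := by
  rcases eq_or_ne B 0 with rfl | hB
  · rw [FractionalIdeal.div_zero, FractionalIdeal.div_zero, FractionalIdeal.div_zero]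
  refine le_antisymm ?_ (le_vop _)
  rw [le_div_iff_mul_le hB]
  calc 1 / (1 / (V / B)) * B ≤ 1 / (1 / (V / B * B)) := vop_mul_le _ _
    _ ≤ 1 / (1 / V) := vop_mono div_mul_self_le
    _ = V := hV

lemma vop_one : 1 / (1 / (1 : FractionalIdeal D⁰ K)) = 1 := by
  rw [FractionalIdeal.div_one, FractionalIdeal.div_one]


/-- The ideal of "denominators" `{s : D | s • x ∈ V}`. -/
def colonIdeal (V : FractionalIdeal D⁰ K) (x : K) : Ideal D where
  carrier := {s : D | algebraMap D K s * x ∈ (V : Submodule D K)}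
  add_mem' := fun {a b} ha hb => by
    simp only [Set.mem_setOf_eq, _root_.map_add, add_mul] at *
    exact Submodule.add_mem _ ha hb
  zero_mem' := by
    simp only [Set.mem_setOf_eq, _root_.map_zero, zero_mul]
    exact Submodule.zero_mem _
  smul_mem' := fun c s hs => by
    simp only [Set.mem_setOf_eq, smul_eq_mul, _root_.map_mul, mul_assoc] at *
    rw [← Algebra.smul_def]
    exact Submodule.smul_mem _ _ hs

lemma mem_colonIdeal {V : FractionalIdeal D⁰ K} {x : K} {s : D} :
    s ∈ colonIdeal V x ↔ algebraMap D K s * x ∈ V := mem_coe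

lemma mem_of_locally {V : FractionalIdeal D⁰ K} {x : K}
    (h : ∀ M : Ideal D, M.IsMaximal → ∃ s, s ∉ M ∧ algebraMap D K s * x ∈ V) : x ∈ V := by
  have htop : colonIdeal V x = ⊤ := by
    by_contra hne
    obtain ⟨M, hM, hle⟩ := Ideal.exists_le_maximal _ hne
    obtain ⟨s, hs, hsx⟩ := h M hM
    exact hs (hle (mem_colonIdeal.mpr hsx))
  have h1 : (1 : D) ∈ colonIdeal V x := htop ▸ Submodule.mem_top
  simpa using mem_colonIdeal.mp h1

lemma le_tClosure (X : FractionalIdeal D⁰ K) : (X : Submodule D K) ≤ tClosure D K X := by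
  intro x hx
  have hx' : x ∈ X := mem_coe.mp hx
  have h1 : spanSingleton D⁰ x ≤ X := spanSingleton_le_iff_mem.mpr hx'
  have h2 : ((spanSingleton D⁰ x : FractionalIdeal D⁰ K) : Submodule D K).FG := by
    rw [coe_spanSingleton]; exact Submodule.fg_span_singleton x
  have hle := le_iSup (fun J : {J : FractionalIdeal D⁰ K // J ≤ X ∧ (J : Submodule D K).FG} =>
      ((1 / (1 / (J : FractionalIdeal D⁰ K)) : FractionalIdeal D⁰ K) : Submodule D K))
      ⟨spanSingleton D⁰ x, h1, h2⟩
  refine hle ?_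
  show x ∈ ((1 / (1 / spanSingleton D⁰ x) : FractionalIdeal D⁰ K) : Submodule D K)
  rw [vop_spanSingleton]
  exact mem_coe.mpr (mem_spanSingleton_self D⁰ x)

lemma vop_le_tClosure {X J : FractionalIdeal D⁰ K} (h : J ≤ X) (hFG : (J : Submodule D K).FG) :
    ((1 / (1 / J) : FractionalIdeal D⁰ K) : Submodule D K) ≤ tClosure D K X :=
  le_iSup (fun J : {J : FractionalIdeal D⁰ K // J ≤ X ∧ (J : Submodule D K).FG} =>
      ((1 / (1 / (J : FractionalIdeal D⁰ K)) : FractionalIdeal D⁰ K) : Submodule D K))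
      ⟨J, h, hFG⟩

lemma isTIdeal_of_divisorial (A : Ideal D)
    (h : 1 / (1 / (A : FractionalIdeal D⁰ K)) = (A : FractionalIdeal D⁰ K)) :
    IsTIdeal D K A := by
  refine le_antisymm (iSup_le ?_) (le_tClosure _)
  rintro ⟨J, hJ, hFG⟩
  refine coe_le_coe.mpr ?_
  have hv := vop_mono hJ
  rwa [h] at hv

lemma coeIdeal_fg (A : Ideal D) (h : A.FG) :
    ((A : FractionalIdeal D⁰ K) : Submodule D K).FG := by
  rw [coe_coeIdeal]
  exact Submodule.FG.map _ h


lemma vop_le_coeIdeal {I : Ideal D}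
    (LP : ∀ M : Ideal D, M.IsMaximal →
      ∃ a, a ∈ I ∧ a ≠ 0 ∧ ∀ b ∈ I, ∃ s, s ∉ M ∧ ∃ d, s * b = d * a)
    {J : FractionalIdeal D⁰ K} (hJI : J ≤ (I : FractionalIdeal D⁰ K))
    (hFG : (J : Submodule D K).FG) :
    1 / (1 / J) ≤ (I : FractionalIdeal D⁰ K) := by
  intro x hx
  refine mem_of_locally fun M hM => ?_
  obtain ⟨a, haI, ha0, hloc⟩ := LP M hM
  obtain ⟨T, hT⟩ := hFG
  have hTmem : ∀ y ∈ T, ∃ b, b ∈ I ∧ algebraMap D K b = y := by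
    intro y hy
    have hyJ : y ∈ J := mem_coe.mp (hT ▸ Submodule.subset_span hy)
    exact (mem_coeIdeal _).mp (hJI hyJ)
  choose b hbI hbeq using hTmem
  choose s hsM d hd using fun (y : K) (hy : y ∈ T) => hloc (b y hy) (hbI y hy)
  classical
  set sP : D := ∏ y ∈ T.attach, s y.1 y.2 with hsP
  have hsPM : sP ∉ M := by
    intro hmem
    haveI := hM.isPrime
    obtain ⟨y, _, hyM⟩ := Ideal.IsPrime.prod_mem_iff.mp hmem
    exact hsM y.1 y.2 hyM
  have hsP0 : algebraMap D K sP ≠ 0 := by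
    intro h0
    have h1 : sP = 0 := IsFractionRing.injective D K (by rw [h0, _root_.map_zero])
    exact hsPM (h1 ▸ M.zero_mem)
  have ha0K : algebraMap D K a ≠ 0 := fun h0 =>
    ha0 (IsFractionRing.injective D K (by rw [h0, _root_.map_zero]))
  set c : K := algebraMap D K a * (algebraMap D K sP)⁻¹ with hc
  have hJc : J ≤ spanSingleton D⁰ c := by
    rw [← coe_le_coe, ← hT, coe_spanSingleton, Submodule.span_le]
    intro y hy
    obtain ⟨r, hr⟩ : ∃ r, sP = s y hy * r := by
      refine ⟨∏ z ∈ (T.attach.erase ⟨y, hy⟩), s z.1 z.2, ?_⟩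
      rw [hsP]
      exact (Finset.mul_prod_erase T.attach _ (Finset.mem_attach T ⟨y, hy⟩)).symm
    have key : algebraMap D K sP * y = algebraMap D K (r * d y hy) * algebraMap D K a := by
      conv_lhs => rw [← hbeq y hy]
      rw [← _root_.map_mul, ← _root_.map_mul]
      congr 1
      calc sP * b y hy = r * (s y hy * b y hy) := by rw [hr]; ring
        _ = r * (d y hy * a) := by rw [hd y hy]
        _ = r * d y hy * a := by ring
    show y ∈ Submodule.span D {c}
    rw [Submodule.mem_span_singleton]
    refine ⟨r * d y hy, ?_⟩
    rw [Algebra.smul_def, hc]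
    have hinv : (algebraMap D K sP)⁻¹ * algebraMap D K sP = 1 := inv_mul_cancel₀ hsP0
    have h9 : algebraMap D K (r * d y hy) * (algebraMap D K a * (algebraMap D K sP)⁻¹)
        * algebraMap D K sP = y * algebraMap D K sP := by
      calc algebraMap D K (r * d y hy) * (algebraMap D K a * (algebraMap D K sP)⁻¹)
            * algebraMap D K sP
          = algebraMap D K (r * d y hy) * algebraMap D K a
            * ((algebraMap D K sP)⁻¹ * algebraMap D K sP) := by ring
        _ = algebraMap D K (r * d y hy) * algebraMap D K a := by rw [hinv, mul_one]
        _ = algebraMap D K sP * y := key.symm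
        _ = y * algebraMap D K sP := by ring
    exact mul_right_cancel₀ hsP0 h9
  have hxc : x ∈ spanSingleton D⁰ c := by
    have h2 := vop_mono hJc
    rw [vop_spanSingleton] at h2
    exact h2 hx
  obtain ⟨z, hz⟩ := (mem_spanSingleton _).mp hxc
  refine ⟨sP, hsPM, ?_⟩
  rw [← hz, Algebra.smul_def, hc]
  have heq : algebraMap D K sP * (algebraMap D K z * (algebraMap D K a * (algebraMap D K sP)⁻¹))
      = algebraMap D K (z * a) := by
    rw [_root_.map_mul]
    field_simp
  rw [heq]
  exact (mem_coeIdeal _).mpr ⟨z * a, I.mul_mem_left z haI, rfl⟩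

lemma isTIdeal_of_LP {I : Ideal D}
    (LP : ∀ M : Ideal D, M.IsMaximal →
      ∃ a, a ∈ I ∧ a ≠ 0 ∧ ∀ b ∈ I, ∃ s, s ∉ M ∧ ∃ d, s * b = d * a) :
    IsTIdeal D K I := by
  refine le_antisymm (iSup_le ?_) (le_tClosure _)
  rintro ⟨J, hJ, hFG⟩
  exact coe_le_coe.mpr (vop_le_coeIdeal LP hJ hFG)

lemma exists_tMaximal (A : Ideal D) (hA : A ≠ ⊤) (hTA : IsTIdeal D K A) :
    ∃ P : Ideal D, IsTMaximal D K P ∧ A ≤ P := by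
  have key : ∀ c ⊆ {Q : Ideal D | Q ≠ ⊤ ∧ IsTIdeal D K Q}, IsChain (· ≤ ·) c → ∀ y ∈ c,
      ∃ ub ∈ {Q : Ideal D | Q ≠ ⊤ ∧ IsTIdeal D K Q}, ∀ z ∈ c, z ≤ ub := by
    intro c hcs hchain y hyc
    refine ⟨sSup c, ⟨?_, ?_⟩, fun z hz => le_sSup hz⟩
    · intro htop
      have h1 : (1 : D) ∈ sSup c := htop ▸ Submodule.mem_top
      obtain ⟨Q, hQc, hQ1⟩ := (Submodule.mem_sSup_of_directed ⟨y, hyc⟩ hchain.directedOn).mp h1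
      exact (hcs hQc).1 ((Ideal.eq_top_iff_one Q).mpr hQ1)
    · refine le_antisymm (iSup_le ?_) (le_tClosure _)
      rintro ⟨J, hJ, hFG⟩
      obtain ⟨T, hT⟩ := hFG
      classical
      have hex : ∀ T' : Finset K, (∀ z ∈ T', z ∈ (J : Submodule D K)) →
          ∃ Q ∈ c, ∀ z ∈ T', z ∈ ((Q : FractionalIdeal D⁰ K) : Submodule D K) := by
        intro T'
        induction T' using Finset.induction_on with
        | empty => exact fun _ => ⟨y, hyc, fun z hz => absurd hz (Finset.notMem_empty z)⟩
        | @insert w T'' hw ih =>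
          intro hmem
          obtain ⟨Q1, hQ1c, hQ1⟩ := ih fun u hu => hmem u (Finset.mem_insert_of_mem hu)
          have hwJ : w ∈ (J : Submodule D K) := hmem w (Finset.mem_insert_self _ _)
          have hwS : w ∈ ((sSup c : Ideal D) : FractionalIdeal D⁰ K) := hJ (mem_coe.mp hwJ)
          obtain ⟨bw, hbw, rfl⟩ := (mem_coeIdeal _).mp hwS
          obtain ⟨Q2, hQ2c, hbQ2⟩ :=
            (Submodule.mem_sSup_of_directed ⟨y, hyc⟩ hchain.directedOn).mp hbw
          obtain ⟨Q3, hQ3c, h13, h23⟩ := hchain.directedOn Q1 hQ1c Q2 hQ2c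
          refine ⟨Q3, hQ3c, fun z hz => ?_⟩
          rcases Finset.mem_insert.mp hz with rfl | hz'
          · exact mem_coe.mpr ((mem_coeIdeal _).mpr ⟨bw, h23 hbQ2, rfl⟩)
          · exact mem_coe.mpr ((coeIdeal_le_coeIdeal K).mpr h13 (mem_coe.mp (hQ1 z hz')))
      obtain ⟨Q, hQc, hQT⟩ := hex T fun z hz => hT ▸ Submodule.subset_span hz
      have hJQ : J ≤ (Q : FractionalIdeal D⁰ K) := by
        rw [← coe_le_coe, ← hT, Submodule.span_le]
        exact fun z hz => hQT z hz
      have hv := vop_le_tClosure hJQ (hT ▸ Submodule.fg_span T.finite_toSet)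
      have heq : tClosure D K (Q : FractionalIdeal D⁰ K)
          = ((Q : FractionalIdeal D⁰ K) : Submodule D K) := (hcs hQc).2
      rw [heq] at hv
      refine hv.trans ?_
      exact coe_le_coe.mpr ((coeIdeal_le_coeIdeal K).mpr (le_sSup hQc))
  obtain ⟨m, hAm, hm⟩ := zorn_le_nonempty₀ {Q : Ideal D | Q ≠ ⊤ ∧ IsTIdeal D K Q} key A ⟨hA, hTA⟩
  exact ⟨m, ⟨hm.prop.1, hm.prop.2,
    fun Q hQ hTQ hle => le_antisymm hle (hm.2 ⟨hQ, hTQ⟩ hle)⟩, hAm⟩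

lemma coeIdeal_colonIdeal {V : FractionalIdeal D⁰ K} (hV1 : V ≤ 1) {x : K} (hx : x ≠ 0) :
    ((colonIdeal V x : Ideal D) : FractionalIdeal D⁰ K) = V / spanSingleton D⁰ x ⊓ 1 := by
  have hsx : spanSingleton D⁰ x ≠ 0 := spanSingleton_ne_zero_iff.mpr hx
  apply le_antisymm
  · refine le_inf ?_ coeIdeal_le_one
    intro z hz
    obtain ⟨u, hu, rfl⟩ := (mem_coeIdeal _).mp hz
    show algebraMap D K u ∈ V / spanSingleton D⁰ x
    rw [mem_div_iff_of_ne_zero hsx]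
    intro y hy
    obtain ⟨e, he⟩ := (mem_spanSingleton _).mp hy
    have hmem : algebraMap D K u * x ∈ V := mem_colonIdeal.mp hu
    have : algebraMap D K u * y = e • (algebraMap D K u * x) := by
      rw [← he, Algebra.smul_def, Algebra.smul_def]
      ring
    rw [this]
    exact mem_coe.mp (Submodule.smul_mem _ e (mem_coe.mpr hmem))
  · intro z hz
    have hz2 : z ∈ V / spanSingleton D⁰ x ⊓ 1 := hz
    rw [← mem_coe, coe_inf, Submodule.mem_inf] at hz2
    obtain ⟨hzd, hz1⟩ := hz2
    show z ∈ ((colonIdeal V x : Ideal D) : FractionalIdeal D⁰ K)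
    obtain ⟨u, rfl⟩ := (mem_one_iff _).mp (mem_coe.mp hz1)
    refine (mem_coeIdeal _).mpr ⟨u, mem_colonIdeal.mpr ?_, rfl⟩
    exact (mem_div_iff_of_ne_zero hsx).mp (mem_coe.mp hzd) x (mem_spanSingleton_self _ _)

lemma isTIdeal_colonIdeal {V : FractionalIdeal D⁰ K} (hVv : 1 / (1 / V) = V) (hV1 : V ≤ 1)
    {x : K} (hx : x ≠ 0) : IsTIdeal D K (colonIdeal V x) := by
  refine isTIdeal_of_divisorial _ ?_
  rw [coeIdeal_colonIdeal hV1 hx]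
  refine le_antisymm (le_inf ?_ ?_) (le_vop _)
  · have h := vop_mono (inf_le_left (a := V / spanSingleton D⁰ x) (b := 1))
    rwa [vop_div hVv] at h
  · have h := vop_mono (inf_le_right (a := V / spanSingleton D⁰ x) (b := 1))
    rwa [vop_one] at h

lemma flat_local_gen {R : Type*} [CommRing R] [IsDomain R] (I : Ideal R) (hI : I ≠ ⊥)
    (hff : Module.FaithfullyFlat R I) (P : Ideal R) :
    ∃ a, a ∈ I ∧ a ≠ 0 ∧ (P ≠ ⊤ → ∀ b ∈ I, ∃ s, s ∉ P ∧ ∃ d, s * b = d * a) := by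
  by_cases hP : P = ⊤
  · obtain ⟨a, haI, ha0⟩ := Submodule.exists_mem_ne_zero_of_ne_bot hI
    exact ⟨a, haI, ha0, fun h => absurd hP h⟩
  · have hsub := ((Module.FaithfullyFlat.iff_flat_and_proper_ideal R ↥I).mp hff).2 P hP
    have hex : ∃ m : ↥I, m ∉ (P • ⊤ : Submodule R ↥I) := by
      by_contra h
      push_neg at h
      exact hsub (eq_top_iff.mpr fun m _ => h m)
    obtain ⟨m, hm⟩ := hex
    have hm0 : (m : R) ≠ 0 := by
      intro h0
      have hz : m = 0 := by
        apply Subtype.ext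
        simpa using h0
      exact hm (hz ▸ Submodule.zero_mem _)
    refine ⟨(m : R), m.2, hm0, fun _ b hb => ?_⟩
    haveI : Module.Flat R ↥I := hff.toFlat
    set mb : ↥I := ⟨b, hb⟩ with hmb
    have hrel : ∑ i : ULift.{0} (Fin 2), (![(m : R), -b] i.down) • (![mb, m] i.down) = 0 := by
      rw [Fintype.sum_equiv (Equiv.ulift (α := Fin 2))
        (fun i => (![(m : R), -b] i.down) • (![mb, m] i.down))
        (fun j => (![(m : R), -b] j) • (![mb, m] j)) (fun i => rfl)]
      apply Subtype.ext
      simp [Fin.sum_univ_two, hmb]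
      ring
    obtain ⟨κ, cm, yv, hxv, hrel2⟩ :=
      Module.Flat.isTrivialRelation_of_sum_smul_eq_zero
        (f := fun i : ULift.{0} (Fin 2) => ![(m : R), -b] i.down)
        (x := fun i : ULift.{0} (Fin 2) => ![mb, m] i.down) hrel
    by_cases hall : ∀ j, cm ⟨1⟩ j ∈ P
    · exfalso
      apply hm
      have h1 : m = ∑ j, cm ⟨1⟩ j • yv j := by simpa using hxv ⟨1⟩
      rw [h1]
      exact Submodule.sum_mem _ fun j _ => Submodule.smul_mem_smul (hall j) Submodule.mem_top
    · push_neg at hall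
      obtain ⟨j, hj⟩ := hall
      refine ⟨cm ⟨1⟩ j, hj, cm ⟨0⟩ j, ?_⟩
      have h2 := hrel2 j
      rw [Fintype.sum_equiv (Equiv.ulift (α := Fin 2))
        (fun i => (![(m : R), -b] i.down) * cm i j)
        (fun i => (![(m : R), -b] i) * cm ⟨i⟩ j) (fun i => rfl)] at h2
      simp [Fin.sum_univ_two] at h2
      linear_combination -h2


/-- The ideal `{t | sP * t ∈ (aM)}`. -/
def mulColonIdeal (sP aM : D) : Ideal D where
  carrier := {t : D | ∃ e, sP * t = e * aM}
  add_mem' := by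
    rintro t₁ t₂ ⟨e₁, he₁⟩ ⟨e₂, he₂⟩
    exact ⟨e₁ + e₂, by rw [mul_add, he₁, he₂]; ring⟩
  zero_mem' := ⟨0, by ring⟩
  smul_mem' := by
    rintro r t ⟨e, he⟩
    refine ⟨r * e, ?_⟩
    rw [smul_eq_mul]
    calc sP * (r * t) = r * (sP * t) := by ring
      _ = r * (e * aM) := by rw [he]
      _ = r * e * aM := by ring

lemma mem_mulColonIdeal {sP aM t : D} : t ∈ mulColonIdeal (D := D) sP aM ↔ ∃ e, sP * t = e * aM :=
  Iff.rfl


lemma main (D K : Type*) [CommRing D] [IsDomain D] [Field K] [Algebra D K] [IsFractionRing D K]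
    (hfc : HasTFiniteCharacter D K)
    (I : Ideal D) (hI : I ≠ ⊥) (hff : Module.FaithfullyFlat D I) :
    (I : FractionalIdeal D⁰ K) * (I : FractionalIdeal D⁰ K)⁻¹ = 1 := by
  classical
  by_cases htop : I = ⊤
  · rw [htop, coeIdeal_top, inv_one, mul_one]
  -- basic setup
  have hW : (I : FractionalIdeal D⁰ K) ≠ 0 := fun h => hI (coeIdeal_eq_zero.mp h)
  choose a haI ha0 hloc using fun P : Ideal D => flat_local_gen I hI hff P
  have LPmax : ∀ M : Ideal D, M.IsMaximal →
      ∃ a, a ∈ I ∧ a ≠ 0 ∧ ∀ b ∈ I, ∃ s, s ∉ M ∧ ∃ d, s * b = d * a :=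
    fun M hM => ⟨a M, haI M, ha0 M, hloc M hM.ne_top⟩
  have hTI : IsTIdeal D K I := isTIdeal_of_LP LPmax
  set S : Set (Ideal D) := {P : Ideal D | IsTMaximal D K P ∧ I ≤ P} with hSdef
  have hSfin : S.Finite := hfc I htop hTI
  -- the finitely generated ideal J0
  set J0 : Ideal D := Ideal.span (a '' S) with hJ0def
  have hJ0I : J0 ≤ I := Ideal.span_le.mpr (by rintro _ ⟨P, hP, rfl⟩; exact haI P)
  have hJ0fg : J0.FG := Submodule.fg_span (hSfin.image a)
  have hvopJ0 : 1 / (1 / (J0 : FractionalIdeal D⁰ K)) ≤ (I : FractionalIdeal D⁰ K) :=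
    vop_le_coeIdeal LPmax ((coeIdeal_le_coeIdeal K).mpr hJ0I) (coeIdeal_fg _ hJ0fg)
  obtain ⟨Jv, hJv⟩ := le_one_iff_exists_coeIdeal.mp (hvopJ0.trans coeIdeal_le_one)
  have hJvI : Jv ≤ I := (coeIdeal_le_coeIdeal K).mp (le_of_eq_of_le hJv hvopJ0)
  have hJvtop : Jv ≠ ⊤ := fun e => htop (top_le_iff.mp (e ▸ hJvI))
  have hTJv : IsTIdeal D K Jv := isTIdeal_of_divisorial Jv (by rw [hJv]; exact vop_idem _)
  have hS'fin : {P : Ideal D | IsTMaximal D K P ∧ Jv ≤ P}.Finite := hfc Jv hJvtop hTJv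
  set U : Set (Ideal D) := {P : Ideal D | IsTMaximal D K P ∧ Jv ≤ P} \ S with hUdef
  have hUfin : U.Finite := hS'fin.sdiff
  have hcc : ∀ Q : Ideal D, ∃ cq : D, Q ∈ U → cq ∈ I ∧ cq ∉ Q := by
    intro Q
    by_cases hQ : Q ∈ U
    · have hIQ : ¬I ≤ Q := fun hle => hQ.2 ⟨hQ.1.1, hle⟩
      obtain ⟨x, hxI, hxQ⟩ := SetLike.not_le_iff_exists.mp hIQ
      exact ⟨x, fun _ => ⟨hxI, hxQ⟩⟩
    · exact ⟨0, fun h => absurd h hQ⟩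
  choose cf hcf using hcc
  set J' : Ideal D := J0 ⊔ Ideal.span (cf '' U) with hJ'def
  have hJ'I : J' ≤ I :=
    sup_le hJ0I (Ideal.span_le.mpr (by rintro _ ⟨Q, hQ, rfl⟩; exact (hcf Q hQ).1))
  have hJ'fg : J'.FG := Submodule.FG.sup hJ0fg (Submodule.fg_span (hUfin.image cf))
  have hvopJ' : 1 / (1 / (J' : FractionalIdeal D⁰ K)) ≤ (I : FractionalIdeal D⁰ K) :=
    vop_le_coeIdeal LPmax ((coeIdeal_le_coeIdeal K).mpr hJ'I) (coeIdeal_fg _ hJ'fg)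
  -- KEY: any t-maximal ideal containing J' contains I
  have KEY : ∀ Q : Ideal D, IsTMaximal D K Q → J' ≤ Q → I ≤ Q := by
    intro Q hQ hle
    have h0 : (J0 : FractionalIdeal D⁰ K) ≤ (Q : FractionalIdeal D⁰ K) :=
      (coeIdeal_le_coeIdeal K).mpr (le_sup_left.trans hle)
    have h2 := vop_le_tClosure h0 (coeIdeal_fg (K := K) _ hJ0fg)
    have heq : tClosure D K (Q : FractionalIdeal D⁰ K)
        = ((Q : FractionalIdeal D⁰ K) : Submodule D K) := hQ.2.1
    rw [heq] at h2
    have hJvQ : Jv ≤ Q := by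
      refine (coeIdeal_le_coeIdeal K).mp ?_
      rw [hJv]
      exact coe_le_coe.mp h2
    by_contra hIQ
    have hQU : Q ∈ U := ⟨⟨hQ, hJvQ⟩, fun hQS => hIQ hQS.2⟩
    have hcfQ : cf Q ∈ Q := hle ((le_sup_right : Ideal.span (cf '' U) ≤ J') (Ideal.subset_span ⟨Q, hQU, rfl⟩))
    exact (hcf Q hQU).2 hcfQ
  -- CL : I ⊆ (J')_v
  have CL : (I : FractionalIdeal D⁰ K) ≤ 1 / (1 / (J' : FractionalIdeal D⁰ K)) := by
    intro x hx
    have hx' : x ∈ (I : FractionalIdeal D⁰ K) := hx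
    obtain ⟨ξ, hξ, rfl⟩ := (mem_coeIdeal _).mp hx'
    by_cases hξ0 : algebraMap D K ξ = 0
    · show algebraMap D K ξ ∈ 1 / (1 / (J' : FractionalIdeal D⁰ K))
      rw [hξ0]
      exact mem_coe.mp (Submodule.zero_mem _)
    show algebraMap D K ξ ∈ 1 / (1 / (J' : FractionalIdeal D⁰ K))
    set V : FractionalIdeal D⁰ K := 1 / (1 / (J' : FractionalIdeal D⁰ K)) with hVdef
    set F : Ideal D := colonIdeal V (algebraMap D K ξ) with hFdef
    by_cases hF : F = ⊤
    · have h1 : (1 : D) ∈ F := hF ▸ Submodule.mem_top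
      have := mem_colonIdeal.mp h1
      simpa using this
    · exfalso
      have hV1 : V ≤ 1 := hvopJ'.trans coeIdeal_le_one
      have hVv : 1 / (1 / V) = V := vop_idem _
      have hTF : IsTIdeal D K F := isTIdeal_colonIdeal hVv hV1 hξ0
      obtain ⟨Q, hQmax, hFQ⟩ := exists_tMaximal F hF hTF
      have hJ'F : J' ≤ F := by
        intro s hs
        refine mem_colonIdeal.mpr ?_
        rw [← _root_.map_mul]
        exact le_vop _ ((mem_coeIdeal _).mpr ⟨s * ξ, J'.mul_mem_right ξ hs, rfl⟩)
      have hIQ : I ≤ Q := KEY Q hQmax (hJ'F.trans hFQ)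
      obtain ⟨s, hsQ, d, hd⟩ := hloc Q hQmax.1 ξ hξ
      have hQS : Q ∈ S := ⟨hQmax, hIQ⟩
      have haQJ0 : a Q ∈ J0 := Ideal.subset_span ⟨Q, hQS, rfl⟩
      have hsF : s ∈ F := by
        refine mem_colonIdeal.mpr ?_
        rw [← _root_.map_mul, hd, _root_.map_mul]
        refine le_vop _ ?_
        rw [← _root_.map_mul]
        exact (mem_coeIdeal _).mpr ⟨d * a Q, Ideal.mul_mem_left _ d ((le_sup_left : J0 ≤ J') haQJ0), rfl⟩
      exact hsQ (hFQ hsF)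
  have hIv : (I : FractionalIdeal D⁰ K) = 1 / (1 / (J' : FractionalIdeal D⁰ K)) :=
    le_antisymm CL hvopJ'
  -- Final step
  rw [inv_eq]
  refine le_antisymm mul_one_div_le_one' ?_
  have hprodle : (I : FractionalIdeal D⁰ K) * (1 / (I : FractionalIdeal D⁰ K)) ≤ 1 :=
    mul_one_div_le_one'
  obtain ⟨Tid, hTid⟩ := le_one_iff_exists_coeIdeal.mp hprodle
  by_cases hT : Tid = ⊤
  · rw [← hTid, hT, coeIdeal_top]

  · exfalso
    obtain ⟨M, hM, hTM⟩ := Ideal.exists_le_maximal Tid hT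
    set G : Set D := a '' S ∪ cf '' U with hGdef
    have hGfin : G.Finite := (hSfin.image a).union (hUfin.image cf)
    have hGI : ∀ g ∈ G, g ∈ I := by
      rintro g (⟨P, hP, rfl⟩ | ⟨Q, hQ, rfl⟩)
      · exact haI P
      · exact (hcf Q hQ).1
    have hJ'span : J' = Ideal.span G := by rw [hGdef, Ideal.span_union, hJ'def, hJ0def]
    have hch : ∀ g : D, ∃ sg dg : D, g ∈ G → (sg ∉ M ∧ sg * g = dg * a M) := by
      intro g
      by_cases hg : g ∈ G
      · obtain ⟨s, hs, d, hd⟩ := hloc M hM.ne_top g (hGI g hg)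
        exact ⟨s, d, fun _ => ⟨hs, hd⟩⟩
      · exact ⟨1, 1, fun h => absurd h hg⟩
    choose sg dg hsg using hch
    set sP : D := ∏ g ∈ hGfin.toFinset, sg g with hsPdef
    have hsPM : sP ∉ M := by
      intro hmem
      haveI := hM.isPrime
      obtain ⟨g, hg, hgM⟩ := Ideal.IsPrime.prod_mem_iff.mp hmem
      exact (hsg g (hGfin.mem_toFinset.mp hg)).1 hgM
    set E : Ideal D := mulColonIdeal sP (a M) with hEdef
    have hJ'E : J' ≤ E := by
      rw [hJ'span]
      refine Ideal.span_le.mpr fun g hg => ?_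
      obtain ⟨rest, hrest⟩ : ∃ r, sP = sg g * r := by
        refine ⟨∏ h ∈ hGfin.toFinset.erase g, sg h, ?_⟩
        rw [hsPdef]
        exact (Finset.mul_prod_erase _ _ (hGfin.mem_toFinset.mpr hg)).symm
      refine ⟨rest * dg g, ?_⟩
      calc sP * g = rest * (sg g * g) := by rw [hrest]; ring
        _ = rest * (dg g * a M) := by rw [(hsg g hg).2]
        _ = rest * dg g * a M := by ring
    -- fractional-level consequences
    have haM0 : algebraMap D K (a M) ≠ 0 := fun h0 =>
      ha0 M (IsFractionRing.injective D K (by rw [h0, _root_.map_zero]))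
    have hmul : (J' : FractionalIdeal D⁰ K) * spanSingleton D⁰ (algebraMap D K sP)
        ≤ spanSingleton D⁰ (algebraMap D K (a M)) := by
      refine mul_le.mpr fun i hi j hj => ?_
      obtain ⟨t, ht, rfl⟩ := (mem_coeIdeal _).mp hi
      obtain ⟨e, he⟩ := (mem_spanSingleton _).mp hj
      obtain ⟨e', he'⟩ := hJ'E ht
      refine (mem_spanSingleton _).mpr ⟨e * e', ?_⟩
      rw [← he]
      have hfin : e * (sP * t) = t * (e * sP) := by ring
      calc (e * e') • algebraMap D K (a M)
          = algebraMap D K (e * (e' * a M)) := by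
            rw [Algebra.smul_def, ← _root_.map_mul, mul_assoc]
        _ = algebraMap D K (e * (sP * t)) := by rw [← he']
        _ = algebraMap D K (t * (e * sP)) := by rw [hfin]
        _ = algebraMap D K t * (e • algebraMap D K sP) := by
            rw [Algebra.smul_def, _root_.map_mul, _root_.map_mul]
    have hIspan : (I : FractionalIdeal D⁰ K) * spanSingleton D⁰ (algebraMap D K sP)
        ≤ spanSingleton D⁰ (algebraMap D K (a M)) := by
      rw [hIv]
      calc 1 / (1 / (J' : FractionalIdeal D⁰ K)) * spanSingleton D⁰ (algebraMap D K sP)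
          ≤ 1 / (1 / ((J' : FractionalIdeal D⁰ K) * spanSingleton D⁰ (algebraMap D K sP))) :=
            vop_mul_le _ _
        _ ≤ 1 / (1 / spanSingleton D⁰ (algebraMap D K (a M))) := vop_mono hmul
        _ = spanSingleton D⁰ (algebraMap D K (a M)) := vop_spanSingleton _
    have hz : algebraMap D K sP * (algebraMap D K (a M))⁻¹
        ∈ (1 / (I : FractionalIdeal D⁰ K) : FractionalIdeal D⁰ K) := by
      rw [mem_div_iff_of_ne_zero hW]
      intro y hy
      have hys : y * algebraMap D K sP ∈ spanSingleton D⁰ (algebraMap D K (a M)) :=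
        hIspan (mul_mem_mul hy (mem_spanSingleton_self _ _))
      obtain ⟨e, he⟩ := (mem_spanSingleton _).mp hys
      refine (mem_one_iff _).mpr ⟨e, ?_⟩
      have hcalc : algebraMap D K sP * (algebraMap D K (a M))⁻¹ * y
          = e • algebraMap D K (a M) * (algebraMap D K (a M))⁻¹ := by
        rw [he]; ring
      rw [hcalc, Algebra.smul_def, mul_assoc, mul_inv_cancel₀ haM0, mul_one]
    have hsPT : algebraMap D K sP ∈ (Tid : FractionalIdeal D⁰ K) := by
      rw [hTid]
      have : algebraMap D K sP = algebraMap D K (a M)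
          * (algebraMap D K sP * (algebraMap D K (a M))⁻¹) := by
        field_simp
      rw [this]
      exact mul_mem_mul ((mem_coeIdeal _).mpr ⟨a M, haI M, rfl⟩) hz
    obtain ⟨t, htT, hteq⟩ := (mem_coeIdeal _).mp hsPT
    have : t = sP := IsFractionRing.injective D K hteq
    exact hsPM (hTM (this ▸ htT))


end TProof
end Aux

/-- If `D` has the `t`-finite character, then every faithfully flat nonzero ideal of `D`
is invertible. -/
theorem invertible_of_faithfullyFlat_of_tFiniteCharacter
    (D K : Type*) [CommRing D] [IsDomain D] [Field K] [Algebra D K] [IsFractionRing D K]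
    (hfc : HasTFiniteCharacter D K)
    (I : Ideal D) (hI : I ≠ ⊥) (hff : Module.FaithfullyFlat D I) :
    (I : FractionalIdeal D⁰ K) * (I : FractionalIdeal D⁰ K)⁻¹ = 1 :=
  TProof.main D K hfc I hI hff
end

section
/- Let D be a TV-domain (a domain in which every t-ideal is divisorial). Then every faithfully flat nonzero ideal of D is invertible. -/
open scoped nonZeroDivisors

set_option linter.unusedSectionVars false

open scoped TensorProduct

section FlatAux
variable {D : Type*} [CommRing D] [IsDomain D]

private lemma flat_tmul_comm (I : Ideal D) [Module.Flat D I] (a b : I) :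
    a ⊗ₜ[D] b = b ⊗ₜ[D] a := by
  have hinj : Function.Injective (LinearMap.lTensor (↥I) I.subtype) :=
    Module.Flat.lTensor_preserves_injective_linearMap _ I.injective_subtype
  have h2 : Function.Injective
      ((TensorProduct.rid D I).toLinearMap ∘ₗ LinearMap.lTensor (↥I) I.subtype) :=
    (TensorProduct.rid D I).injective.comp hinj
  apply h2
  simp only [LinearMap.coe_comp, Function.comp_apply, LinearMap.lTensor_tmul,
    LinearEquiv.coe_coe, TensorProduct.rid_tmul, Submodule.coe_subtype]
  exact Subtype.ext (by simp [smul_eq_mul, mul_comm])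

private lemma flat_loc_gen (I : Ideal D) [Module.Flat D I] {x y : D} (hx : x ∈ I) (hy : y ∈ I)
    {m : Ideal D} (hxm : x ∉ m * I) : ∃ s c : D, s ∉ m ∧ s * y = c * x := by
  set xm : I := ⟨x, hx⟩ with hxm_def
  set ym : I := ⟨y, hy⟩ with hym_def
  set N : Submodule D I := Submodule.span D {xm} with hN
  set φ₀ : D →ₗ[D] (↥I ⧸ N) := LinearMap.toSpanSingleton D (↥I ⧸ N) (N.mkQ ym) with hφ₀
  set q : Ideal D := LinearMap.ker φ₀ with hq
  by_cases hqm : q ≤ m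
  · exfalso
    apply hxm
    have hker : LinearMap.ker (q.liftQ φ₀ le_rfl) = ⊥ :=
      Submodule.ker_liftQ_eq_bot' q φ₀ rfl
    have hinj2 : Function.Injective (LinearMap.lTensor (↥I) (q.liftQ φ₀ le_rfl)) :=
      Module.Flat.lTensor_preserves_injective_linearMap _ (LinearMap.ker_eq_bot.mp hker)
    have hx2 : xm ⊗ₜ[D] (Ideal.Quotient.mk q 1) = (0 : ↥I ⊗[D] (D ⧸ q)) := by
      apply hinj2
      rw [map_zero, LinearMap.lTensor_tmul]
      have h1 : (q.liftQ φ₀ le_rfl) (Ideal.Quotient.mk q 1) = N.mkQ ym := by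
        have : (Ideal.Quotient.mk q 1) = Submodule.Quotient.mk (p := q) 1 := rfl
        rw [this, Submodule.liftQ_apply]
        simp [hφ₀]
      rw [h1]
      have h3 : xm ⊗ₜ[D] (N.mkQ ym) = (LinearMap.lTensor (↥I) N.mkQ) (xm ⊗ₜ[D] ym) := rfl
      rw [h3, flat_tmul_comm I xm ym, LinearMap.lTensor_tmul]
      have h4 : N.mkQ xm = 0 :=
        (Submodule.Quotient.mk_eq_zero N).mpr (Submodule.mem_span_singleton_self xm)
      rw [h4, TensorProduct.tmul_zero]
    have hx3 : xm ∈ q • (⊤ : Submodule D I) := by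
      have := congrArg (TensorProduct.tensorQuotEquivQuotSMul (↥I) q) hx2
      rw [LinearEquiv.map_zero, TensorProduct.tensorQuotEquivQuotSMul_tmul_mk, one_smul] at this
      exact (Submodule.Quotient.mk_eq_zero _).mp this
    have hle : (q • (⊤ : Submodule D I)).map I.subtype ≤ m * I := by
      rw [Submodule.map_smul'']
      refine Submodule.smul_le.mpr fun r hr n hn => ?_
      obtain ⟨n', -, rfl⟩ := Submodule.mem_map.mp hn
      exact Ideal.mul_mem_mul (hqm hr) n'.2
    exact hle (Submodule.mem_map_of_mem hx3)
  · obtain ⟨s, hsq, hsm⟩ := SetLike.not_le_iff_exists.mp hqm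
    have h5 : N.mkQ (s • ym) = 0 := by
      have : φ₀ s = 0 := hsq
      simpa [hφ₀, LinearMap.toSpanSingleton_apply, map_smul] using this
    obtain ⟨c, hc⟩ := Submodule.mem_span_singleton.mp ((Submodule.Quotient.mk_eq_zero N).mp h5)
    refine ⟨s, c, hsm, ?_⟩
    have := congrArg Subtype.val hc
    simpa [smul_eq_mul, eq_comm, hxm_def, hym_def] using this

private lemma loc_principal (I : Ideal D) (hff : Module.FaithfullyFlat D I)
    (m : Ideal D) (hm : m.IsMaximal) :
    ∃ x ∈ I, x ≠ 0 ∧ ∀ y ∈ I, ∃ s c : D, s ∉ m ∧ s * y = c * x := by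
  haveI := hff
  have hne := hff.submodule_ne_top hm
  have hx : ∃ x ∈ I, x ∉ m * I := by
    by_contra h
    push_neg at h
    apply hne
    rw [eq_top_iff]
    rintro ⟨y, hy⟩ -
    have hmap : m * I ≤ Submodule.map I.subtype (m • (⊤ : Submodule D I)) := by
      refine Ideal.mul_le.mpr fun r hr i hi => ?_
      exact Submodule.mem_map.mpr ⟨r • ⟨i, hi⟩,
        Submodule.smul_mem_smul hr Submodule.mem_top, by simp⟩
    obtain ⟨z, hz, hzy⟩ := Submodule.mem_map.mp (hmap (h y hy))
    have : (⟨y, hy⟩ : I) = z := Subtype.ext hzy.symm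
    rw [this]
    exact hz
  obtain ⟨x, hxI, hxm⟩ := hx
  have hx0 : x ≠ 0 := by
    rintro rfl
    exact hxm (Submodule.zero_mem _)
  exact ⟨x, hxI, hx0, fun y hy => flat_loc_gen I hxI hy hxm⟩

end FlatAux

section KAux
variable {D K : Type*} [CommRing D] [IsDomain D] [Field K] [Algebra D K] [IsFractionRing D K]

private lemma mem_of_locally (N : Submodule D K) (z : K)
    (h : ∀ m : Ideal D, m.IsMaximal → ∃ s : D, s ∉ m ∧ algebraMap D K s * z ∈ N) : z ∈ N := by
  have h1 : (N.comap (LinearMap.toSpanSingleton D K z)) = ⊤ := by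
    by_contra hne
    obtain ⟨m, hm, hle⟩ := Ideal.exists_le_maximal _ hne
    obtain ⟨s, hsm, hsz⟩ := h m hm
    exact hsm (hle (by simpa [LinearMap.toSpanSingleton_apply, Algebra.smul_def] using hsz))
  have h2 : (1 : D) ∈ N.comap (LinearMap.toSpanSingleton D K z) := h1 ▸ Submodule.mem_top
  simpa [LinearMap.toSpanSingleton_apply] using h2

private lemma exists_uniform (m : Ideal D) (hm : m.IsPrime) (ξ : K) (V : Submodule D K)
    (G : Finset K)
    (h : ∀ g ∈ G, ∃ s, s ∉ m ∧ ∃ v ∈ V, algebraMap D K s * g = ξ * v) :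
    ∃ s, s ∉ m ∧ ∀ w ∈ Submodule.span D (G : Set K), ∃ v ∈ V, algebraMap D K s * w = ξ * v := by
  classical
  induction G using Finset.induction_on with
  | empty =>
    refine ⟨1, (Ideal.ne_top_iff_one m).mp hm.ne_top, fun w hw => ?_⟩
    rw [Finset.coe_empty, Submodule.span_empty, Submodule.mem_bot] at hw
    exact ⟨0, V.zero_mem, by simp [hw]⟩
  | @insert a G haG ih =>
    obtain ⟨sa, hsa, va, hva, heqa⟩ := h a (Finset.mem_insert_self a G)
    obtain ⟨s', hs', hIH⟩ := ih (fun g hg => h g (Finset.mem_insert_of_mem hg))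
    refine ⟨sa * s', fun hc => (hm.mem_or_mem hc).elim hsa hs', fun w hw => ?_⟩
    rw [Finset.coe_insert, Submodule.span_insert] at hw
    obtain ⟨w1, hw1, w2, hw2, rfl⟩ := Submodule.mem_sup.mp hw
    obtain ⟨c, rfl⟩ := Submodule.mem_span_singleton.mp hw1
    obtain ⟨v2, hv2, he2⟩ := hIH w2 hw2
    refine ⟨c • (s' • va) + sa • v2, V.add_mem (V.smul_mem _ (V.smul_mem _ hva))
      (V.smul_mem _ hv2), ?_⟩
    have expand : (algebraMap D K (sa * s')) * (c • a + w2)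
        = c • (algebraMap D K s' * (algebraMap D K sa * a))
          + algebraMap D K sa * (algebraMap D K s' * w2) := by
      simp only [map_mul, Algebra.smul_def]
      ring
    rw [expand, heqa, he2]
    simp only [Algebra.smul_def, map_mul]
    ring

private lemma oneDiv_ne_zero {J : FractionalIdeal D⁰ K} (hJ : J ≠ 0) :
    (1 / J : FractionalIdeal D⁰ K) ≠ 0 := by
  obtain ⟨a, haD, haJ⟩ := J.isFractional
  have ha0 : (a : D) ≠ 0 := nonZeroDivisors.ne_zero haD
  have hu : algebraMap D K a ∈ (1 / J : FractionalIdeal D⁰ K) := by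
    rw [FractionalIdeal.mem_div_iff_of_ne_zero hJ]
    intro w hw
    obtain ⟨d, hd⟩ := haJ w hw
    exact (FractionalIdeal.mem_one_iff _).mpr ⟨d, by rwa [Algebra.smul_def] at hd⟩
  intro h0
  rw [h0, FractionalIdeal.mem_zero_iff] at hu
  exact ha0 ((map_eq_zero_iff _ (IsFractionRing.injective D K)).mp hu)

private lemma div_antitone {A B : FractionalIdeal D⁰ K} (hA : A ≠ 0) (hB : B ≠ 0)
    (hAB : A ≤ B) : (1 / B : FractionalIdeal D⁰ K) ≤ 1 / A := by
  rw [FractionalIdeal.le_div_iff_mul_le hA]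
  calc (1 / B : FractionalIdeal D⁰ K) * A ≤ 1 / B * B := mul_le_mul_right hAB _
  _ ≤ 1 := (FractionalIdeal.le_div_iff_mul_le hB).mp le_rfl

private lemma v_mono {A B : FractionalIdeal D⁰ K} (hAB : A ≤ B) :
    (1 / (1 / A) : FractionalIdeal D⁰ K) ≤ 1 / (1 / B) := by
  rcases eq_or_ne A 0 with rfl | hA
  · rw [FractionalIdeal.div_zero, FractionalIdeal.div_zero]
    exact FractionalIdeal.zero_le _
  have hB : B ≠ 0 := fun h => hA (FractionalIdeal.le_zero_iff.mp (h ▸ hAB))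
  exact div_antitone (oneDiv_ne_zero hB) (oneDiv_ne_zero hA)
    (div_antitone hA hB hAB)

private lemma le_v {A : FractionalIdeal D⁰ K} (hA : A ≠ 0) :
    A ≤ 1 / (1 / A) := by
  rw [FractionalIdeal.le_div_iff_mul_le (oneDiv_ne_zero hA)]
  refine FractionalIdeal.mul_le.mpr fun z hz w hw => ?_
  rw [mul_comm]
  exact (FractionalIdeal.mem_div_iff_of_ne_zero hA).mp hw z hz

end KAux

/-- In a TV-domain (every `t`-ideal is divisorial, i.e. `I_t = I_v` for all nonzero
fractional ideals), every faithfully flat nonzero ideal is invertible. -/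
theorem invertible_of_faithfullyFlat_of_TV
    (D K : Type*) [CommRing D] [IsDomain D] [Field K] [Algebra D K] [IsFractionRing D K]
    (hTV : ∀ I : FractionalIdeal D⁰ K, I ≠ 0 →
      tClosure D K I = ((1 / (1 / I) : FractionalIdeal D⁰ K) : Submodule D K))
    (I : Ideal D) (hI : I ≠ ⊥) (hff : Module.FaithfullyFlat D I) :
    (I : FractionalIdeal D⁰ K) * (I : FractionalIdeal D⁰ K)⁻¹ = 1 := by
  classical
  have hIfr : (I : FractionalIdeal D⁰ K) ≠ 0 := FractionalIdeal.coeIdeal_ne_zero.mpr hI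
  set Ifr : FractionalIdeal D⁰ K := (I : FractionalIdeal D⁰ K) with hIfr_def
  set T : FractionalIdeal D⁰ K := Ifr * (1 / Ifr) with hT_def
  -- local principality, in `K`
  have hlocK : ∀ m : Ideal D, m.IsMaximal → ∃ ξ : K, ξ ≠ 0 ∧ ξ ∈ Ifr ∧
      ∀ w ∈ Ifr, ∃ s, s ∉ m ∧ ∃ c : D, algebraMap D K s * w = algebraMap D K c * ξ := by
    intro m hm
    obtain ⟨x, hxI, hx0, hxgen⟩ := loc_principal I hff m hm
    refine ⟨algebraMap D K x, (map_ne_zero_iff _ (IsFractionRing.injective D K)).mpr hx0,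
      FractionalIdeal.mem_coeIdeal_of_mem _ hxI, fun w hw => ?_⟩
    obtain ⟨y, hyI, rfl⟩ := (FractionalIdeal.mem_coeIdeal _).mp hw
    obtain ⟨s, c, hsm, hsc⟩ := hxgen y hyI
    exact ⟨s, hsm, c, by rw [← map_mul, ← map_mul, hsc]⟩
  -- divisorial closures of f.g. subideals of `Ifr` are contained in `Ifr`
  have hdiv : ∀ J : FractionalIdeal D⁰ K, J ≤ Ifr → (J : Submodule D K).FG →
      (1 / (1 / J) : FractionalIdeal D⁰ K) ≤ Ifr := by
    intro J hJle hJfg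
    rcases eq_or_ne J 0 with rfl | hJ0
    · rw [FractionalIdeal.div_zero, FractionalIdeal.div_zero]
      exact FractionalIdeal.zero_le _
    intro z hz
    change z ∈ (Ifr : Submodule D K)
    apply mem_of_locally
    intro m hm
    obtain ⟨ξ, hξ0, hξI, hgen⟩ := hlocK m hm
    obtain ⟨G, hG⟩ := hJfg
    obtain ⟨s, hsm, hs⟩ := exists_uniform m hm.isPrime ξ
      (((1 : FractionalIdeal D⁰ K) : Submodule D K)) G (fun g hg => by
        have hgJ : g ∈ J := FractionalIdeal.mem_coe.mp (hG ▸ Submodule.subset_span hg)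
        obtain ⟨s, hsm, c, hc⟩ := hgen g (hJle hgJ)
        exact ⟨s, hsm, algebraMap D K c,
          FractionalIdeal.mem_coe.mpr (FractionalIdeal.coe_mem_one _ c),
          by rw [hc]; ring⟩)
    have hu : algebraMap D K s * ξ⁻¹ ∈ (1 / J : FractionalIdeal D⁰ K) := by
      rw [FractionalIdeal.mem_div_iff_of_ne_zero hJ0]
      intro w hw
      obtain ⟨v, hv, hveq⟩ := hs w (hG ▸ FractionalIdeal.mem_coe.mpr hw)
      have hwv : algebraMap D K s * ξ⁻¹ * w = v := by
        rw [mul_comm (algebraMap D K s) ξ⁻¹, mul_assoc, hveq, ← mul_assoc,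
          inv_mul_cancel₀ hξ0, one_mul]
      rw [hwv]
      exact FractionalIdeal.mem_coe.mp hv
    have hz2 := (FractionalIdeal.mem_div_iff_of_ne_zero (oneDiv_ne_zero hJ0)).mp hz _ hu
    obtain ⟨e, he⟩ := (FractionalIdeal.mem_one_iff _).mp hz2
    obtain ⟨x, hxI, hxeq⟩ := (FractionalIdeal.mem_coeIdeal _).mp hξI
    refine ⟨s, hsm, ?_⟩
    have key : algebraMap D K s * z = algebraMap D K e * ξ := by
      rw [he]
      field_simp
    rw [key, ← hxeq, ← map_mul]
    exact FractionalIdeal.mem_coe.mpr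
      (FractionalIdeal.mem_coeIdeal_of_mem _ (Ideal.mul_mem_left I e hxI))
  -- `Ifr` is divisorial
  have hIv : (1 / (1 / Ifr) : FractionalIdeal D⁰ K) = Ifr := by
    refine le_antisymm ?_ (le_v hIfr)
    have h1 := hTV Ifr hIfr
    rw [← FractionalIdeal.coe_le_coe, ← h1, tClosure]
    refine iSup_le ?_
    rintro ⟨J, hJle, hJfg⟩
    exact FractionalIdeal.coe_le_coe.mpr (hdiv J hJle hJfg)
  -- basic facts about the trace `T`
  have hTle1 : T ≤ 1 := by
    refine FractionalIdeal.mul_le.mpr fun i hi j hj => ?_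
    rw [mul_comm]
    exact (FractionalIdeal.mem_div_iff_of_ne_zero hIfr).mp hj i hi
  have hIleT : Ifr ≤ T := by
    have h1le : (1 : FractionalIdeal D⁰ K) ≤ 1 / Ifr := by
      rw [FractionalIdeal.le_div_iff_mul_le hIfr, one_mul]
      exact FractionalIdeal.coeIdeal_le_one
    calc Ifr = Ifr * 1 := (mul_one _).symm
    _ ≤ Ifr * (1 / Ifr) := mul_le_mul_right h1le _
  have hTne : T ≠ 0 := fun h => hIfr (FractionalIdeal.le_zero_iff.mp (h ▸ hIleT))
  -- `(D : T) = D`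
  have hT1 : (1 / T : FractionalIdeal D⁰ K) = 1 := by
    refine le_antisymm ?_ ?_
    · intro u hu
      have huT := (FractionalIdeal.mem_div_iff_of_ne_zero hTne).mp hu
      have u1 : ∀ w ∈ (1 / Ifr : FractionalIdeal D⁰ K),
          u * w ∈ (1 / Ifr : FractionalIdeal D⁰ K) := by
        intro w hw
        rw [FractionalIdeal.mem_div_iff_of_ne_zero hIfr]
        intro z hz
        have h2 := huT _ (FractionalIdeal.mul_mem_mul hz hw)
        have h3 : u * w * z = u * (z * w) := by ring
        rw [h3]
        exact h2
      have u2 : ∀ z ∈ Ifr, u * z ∈ Ifr := by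
        intro z hz
        rw [← hIv, FractionalIdeal.mem_div_iff_of_ne_zero (oneDiv_ne_zero hIfr)]
        intro w hw
        have h3 := (FractionalIdeal.mem_div_iff_of_ne_zero hIfr).mp (u1 w hw) z hz
        have h4 : u * z * w = u * w * z := by ring
        rw [h4]
        exact h3
      change u ∈ ((1 : FractionalIdeal D⁰ K) : Submodule D K)
      apply mem_of_locally
      intro m hm
      obtain ⟨ξ, hξ0, hξI, hgen⟩ := hlocK m hm
      obtain ⟨s, hsm, c, hsc⟩ := hgen (u * ξ) (u2 ξ hξI)
      refine ⟨s, hsm, ?_⟩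
      have h5 : algebraMap D K s * u = algebraMap D K c :=
        mul_right_cancel₀ hξ0 (by rw [mul_assoc]; exact hsc)
      rw [h5]
      exact FractionalIdeal.mem_coe.mpr (FractionalIdeal.coe_mem_one _ c)
    · rw [FractionalIdeal.le_div_iff_mul_le hTne, one_mul]
      exact hTle1
  -- extract a f.g. subideal `J ≤ T` with `1 ∈ J_v`
  have hone_mem : (1 : K) ∈ tClosure D K T := by
    rw [hTV T hTne, hT1, FractionalIdeal.div_one]
    exact FractionalIdeal.mem_coe.mpr (FractionalIdeal.one_mem_one _)
  haveI : Nonempty {J : FractionalIdeal D⁰ K // J ≤ T ∧ (J : Submodule D K).FG} :=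
    ⟨⟨0, FractionalIdeal.zero_le _, by rw [FractionalIdeal.coe_zero]; exact Submodule.fg_bot⟩⟩
  have hdir : Directed (· ≤ ·)
      (fun J : {J : FractionalIdeal D⁰ K // J ≤ T ∧ (J : Submodule D K).FG} =>
        ((1 / (1 / (J : FractionalIdeal D⁰ K)) : FractionalIdeal D⁰ K) : Submodule D K)) := by
    rintro ⟨J1, hJ1, hf1⟩ ⟨J2, hJ2, hf2⟩
    refine ⟨⟨J1 ⊔ J2, sup_le hJ1 hJ2, ?_⟩, ?_, ?_⟩
    · rw [FractionalIdeal.coe_sup]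
      exact hf1.sup hf2
    · exact FractionalIdeal.coe_le_coe.mpr (v_mono le_sup_left)
    · exact FractionalIdeal.coe_le_coe.mpr (v_mono le_sup_right)
  rw [tClosure] at hone_mem
  obtain ⟨⟨J, hJT, hJfg⟩, hJmem⟩ := (Submodule.mem_iSup_of_directed _ hdir).mp hone_mem
  have hJ0 : J ≠ 0 := by
    rintro rfl
    rw [FractionalIdeal.div_zero, FractionalIdeal.div_zero, FractionalIdeal.coe_zero,
      Submodule.mem_bot] at hJmem
    exact one_ne_zero hJmem
  have h1v : ∀ v ∈ (1 / J : FractionalIdeal D⁰ K), v ∈ (1 : FractionalIdeal D⁰ K) := by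
    intro v hv
    have h6 := (FractionalIdeal.mem_div_iff_of_ne_zero (oneDiv_ne_zero hJ0)).mp
      (FractionalIdeal.mem_coe.mp hJmem) v hv
    rwa [one_mul] at h6
  -- final step : `1 ∈ T`
  suffices hmem1 : (1 : K) ∈ (T : Submodule D K) by
    have hTeq : T = 1 := le_antisymm hTle1
      (FractionalIdeal.one_le.mpr (FractionalIdeal.mem_coe.mp hmem1))
    rw [FractionalIdeal.inv_eq]
    exact hTeq
  apply mem_of_locally
  intro m hm
  obtain ⟨ξ, hξ0, hξI, hgen⟩ := hlocK m hm
  obtain ⟨G, hG⟩ := hJfg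
  have hH2 : ∀ g ∈ G, ∃ s, s ∉ m ∧ ∃ v ∈ ((1 / Ifr : FractionalIdeal D⁰ K) : Submodule D K),
      algebraMap D K s * g = ξ * v := by
    intro g hg
    have hgT : g ∈ (Ifr : Submodule D K) * ((1 / Ifr : FractionalIdeal D⁰ K) : Submodule D K) := by
      rw [← FractionalIdeal.coe_mul]
      exact FractionalIdeal.coe_le_coe.mpr hJT (hG ▸ Submodule.subset_span hg)
    refine Submodule.mul_induction_on hgT ?_ ?_
    · intro a ha b hb
      obtain ⟨s, hsm, c, hsc⟩ := hgen a (FractionalIdeal.mem_coe.mp ha)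
      refine ⟨s, hsm, algebraMap D K c * b, ?_, ?_⟩
      · rw [← Algebra.smul_def]
        exact Submodule.smul_mem _ _ hb
      · rw [← mul_assoc, hsc]; ring
    · rintro w1 w2 ⟨s1, hs1, v1, hv1, he1⟩ ⟨s2, hs2, v2, hv2, he2⟩
      refine ⟨s1 * s2, fun hc => (hm.isPrime.mem_or_mem hc).elim hs1 hs2,
        s2 • v1 + s1 • v2, Submodule.add_mem _ (Submodule.smul_mem _ _ hv1)
          (Submodule.smul_mem _ _ hv2), ?_⟩
      have h7 : algebraMap D K (s1 * s2) * (w1 + w2)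
          = algebraMap D K s2 * (algebraMap D K s1 * w1)
            + algebraMap D K s1 * (algebraMap D K s2 * w2) := by
        rw [map_mul]; ring
      rw [h7, he1, he2]
      simp only [Algebra.smul_def, map_mul]
      ring
  obtain ⟨s, hsm, hs⟩ := exists_uniform m hm.isPrime ξ _ G hH2
  have hu : algebraMap D K s * ξ⁻¹ ∈ (1 / Ifr : FractionalIdeal D⁰ K) := by
    rw [FractionalIdeal.mem_div_iff_of_ne_zero hIfr]
    intro z hz
    have huz : algebraMap D K s * ξ⁻¹ * z ∈ (1 / J : FractionalIdeal D⁰ K) := by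
      rw [FractionalIdeal.mem_div_iff_of_ne_zero hJ0]
      intro w hw
      obtain ⟨v, hv, hveq⟩ := hs w (hG ▸ FractionalIdeal.mem_coe.mpr hw)
      have hwv : algebraMap D K s * ξ⁻¹ * w = v := by
        rw [mul_comm (algebraMap D K s) ξ⁻¹, mul_assoc, hveq, ← mul_assoc,
          inv_mul_cancel₀ hξ0, one_mul]
      have h8 : algebraMap D K s * ξ⁻¹ * z * w = z * v := by rw [← hwv]; ring
      rw [h8]
      have h9 := (FractionalIdeal.mem_div_iff_of_ne_zero hIfr).mp
        (FractionalIdeal.mem_coe.mp hv) z hz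
      rwa [mul_comm] at h9
    exact h1v _ huz
  refine ⟨s, hsm, ?_⟩
  have h10 : algebraMap D K s * 1 = ξ * (algebraMap D K s * ξ⁻¹) := by
    field_simp
  rw [h10, hT_def, FractionalIdeal.coe_mul]
  exact Submodule.mul_mem_mul (FractionalIdeal.mem_coe.mpr hξI)
    (FractionalIdeal.mem_coe.mpr hu)
end

section
/- Let D be an integral domain and I a nonzero fractional ideal. Then I is flat as a D-module if and only if I(A ∩ B) = IA ∩ IB for all nonzero D-submodules A, B of the quotient field K. -/
open scoped nonZeroDivisors

section AuxLemmas

set_option linter.unusedSectionVars false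

universe u v

variable {D : Type u} {K : Type v} [CommRing D] [IsDomain D] [Field K] [Algebra D K]
  [IsFractionRing D K]

lemma exists_fin_sum_of_mem_mul {S T : Submodule D K} {w : K} (hw : w ∈ S * T) :
    ∃ (p : ℕ) (m c : Fin p → K), (∀ i, m i ∈ S) ∧ (∀ i, c i ∈ T) ∧ w = ∑ i, m i * c i := by
  refine Submodule.mul_induction_on hw ?_ ?_
  · intro m hm n hn
    exact ⟨1, fun _ => m, fun _ => n, fun _ => hm, fun _ => hn, by simp⟩
  · rintro x y ⟨p, m, c, hm, hc, rfl⟩ ⟨q, m', c', hm', hc', rfl⟩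
    refine ⟨p + q, Fin.append m m', Fin.append c c', ?_, ?_, ?_⟩
    · intro i
      refine Fin.addCases (fun i => ?_) (fun i => ?_) i
      · simpa only [Fin.append_left] using hm i
      · simpa only [Fin.append_right] using hm' i
    · intro i
      refine Fin.addCases (fun i => ?_) (fun i => ?_) i
      · simpa only [Fin.append_left] using hc i
      · simpa only [Fin.append_right] using hc' i
    · rw [Fin.sum_univ_add]
      simp only [Fin.append_left, Fin.append_right]

lemma flat_iff_rel (S : Submodule D K) :
    Module.Flat D S ↔
      ∀ (n : ℕ) (f : Fin n → D) (x : Fin n → K), (∀ i, x i ∈ S) → ∑ i, f i • x i = 0 →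
        ∃ (p : ℕ) (a : Fin n → Fin p → D) (y : Fin p → K),
          (∀ j, y j ∈ S) ∧ (∀ i, x i = ∑ j, a i j • y j) ∧ (∀ j, ∑ i, f i * a i j = 0) := by
  haveI hK : Small.{u} K := small_map (FractionRing.algEquiv D K).toEquiv.symm
  haveI hS : Small.{u} S := small_of_injective (f := (Subtype.val : S → K)) Subtype.val_injective
  let e : Shrink.{u} S ≃ₗ[D] S := Shrink.linearEquiv D S
  let g : Shrink.{u} S →ₗ[D] K := S.subtype.comp e.toLinearMap
  have hg : Function.Injective g := S.injective_subtype.comp e.injective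
  have hgmem : ∀ m : Shrink.{u} S, g m ∈ S := fun m => (e m).2
  have hge : ∀ (z : K) (hz : z ∈ S), g (e.symm ⟨z, hz⟩) = z := by
    intro z hz
    simp only [g, LinearMap.comp_apply, LinearEquiv.coe_toLinearMap, LinearEquiv.apply_symm_apply,
      Submodule.subtype_apply]
  constructor
  · intro hflat n f x hx hsum
    haveI : Module.Flat D (Shrink.{u} S) := Module.Flat.of_linearEquiv e
    set x' : ULift.{u} (Fin n) → Shrink.{u} S := fun i => e.symm ⟨x i.down, hx i.down⟩ with hx'def
    have hx' : ∀ i, g (x' i) = x i.down := fun i => hge _ _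
    have hrel : ∑ i, (fun i : ULift.{u} (Fin n) => f i.down) i • x' i = 0 := by
      apply hg
      rw [map_sum, map_zero]
      simp only [map_smul, hx']
      rw [Fintype.sum_equiv (Equiv.ulift : ULift.{u} (Fin n) ≃ Fin n)
        (fun i : ULift.{u} (Fin n) => f i.down • x i.down) (fun i => f i • x i) (fun i => rfl)]
      exact hsum
    obtain ⟨κ', a, y, h1, h2⟩ := Module.Flat.isTrivialRelation_of_sum_smul_eq_zero hrel
    let κ := Fin κ'
    let ek := Fintype.equivFin κ
    refine ⟨Fintype.card κ, fun i j => a ⟨i⟩ (ek.symm j), fun j => g (y (ek.symm j)),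
      fun j => hgmem _, ?_, ?_⟩
    · intro i
      have h1' := congrArg g (h1 ⟨i⟩)
      rw [hx', map_sum] at h1'
      simp only [map_smul] at h1'
      rw [h1']
      exact Fintype.sum_equiv ek (fun j : κ => a ⟨i⟩ j • g (y j))
        (fun j => a ⟨i⟩ (ek.symm j) • g (y (ek.symm j))) (fun j => by simp)
    · intro j
      have h2' := h2 (ek.symm j)
      rw [Fintype.sum_equiv (Equiv.ulift : ULift.{u} (Fin n) ≃ Fin n)
        (fun i : ULift.{u} (Fin n) => f i.down * a i (ek.symm j))
        (fun i => f i * a ⟨i⟩ (ek.symm j)) (fun i => rfl)] at h2'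
      exact h2'
  · intro h
    suffices hflat : Module.Flat D (Shrink.{u} S) by
      haveI := hflat
      exact Module.Flat.of_linearEquiv e.symm
    refine Module.Flat.of_forall_isTrivialRelation (fun {l} {f} {x} hsum => ?_)
    let ι := Fin l
    let eι := Fintype.equivFin ι
    have hsum0 : ∑ i : Fin (Fintype.card ι), f (eι.symm i) • g (x (eι.symm i)) = 0 := by
      have h3 : ∑ i : Fin (Fintype.card ι), f (eι.symm i) • g (x (eι.symm i))
          = ∑ i : ι, f i • g (x i) :=
        Fintype.sum_equiv eι.symm _ _ (fun i => rfl)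
      rw [h3]
      simp only [← map_smul]
      rw [← map_sum, hsum, map_zero]
    obtain ⟨p, a, y, hy, h1, h2⟩ := h (Fintype.card ι) (fun i => f (eι.symm i))
        (fun i => g (x (eι.symm i))) (fun i => hgmem _) hsum0
    refine ⟨p, fun i j => a (eι i) j,
        fun j => e.symm ⟨y j, hy _⟩, ?_, ?_⟩
    · intro i
      apply hg
      have h1' := h1 (eι i)
      simp only [Equiv.symm_apply_apply] at h1'
      rw [map_sum]
      simp only [map_smul, hge]
      exact h1'
    · intro j
      have h3 : ∑ i : ι, f i * a (eι i) j
          = ∑ i : Fin (Fintype.card ι), f (eι.symm i) * a i j := by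
        exact (Fintype.sum_equiv eι.symm (fun i => f (eι.symm i) * a i j)
          (fun i : ι => f i * a (eι i) j)
          (fun i => by simp)).symm
      show ∑ i : ι, f i * a (eι i) j = 0
      rw [h3]
      exact h2 j

lemma rel_of_distrib (S : Submodule D K)
    (H : ∀ A B : Submodule D K, A ≠ ⊥ → B ≠ ⊥ → S * (A ⊓ B) = (S * A) ⊓ (S * B)) :
    ∀ (n : ℕ) (f : Fin n → D) (x : Fin n → K), (∀ i, x i ∈ S) → ∑ i, f i • x i = 0 →
      ∃ (p : ℕ) (a : Fin n → Fin p → D) (y : Fin p → K),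
        (∀ j, y j ∈ S) ∧ (∀ i, x i = ∑ j, a i j • y j) ∧ (∀ j, ∑ i, f i * a i j = 0) := by
  intro n
  induction n with
  | zero =>
    intro f x hx hsum
    exact ⟨0, fun i => i.elim0, Fin.elim0, fun j => j.elim0, fun i => i.elim0, fun j => j.elim0⟩
  | succ n IH =>
    intro f x hx hsum
    have halg : Function.Injective (algebraMap D K) := IsFractionRing.injective D K
    have hsum' : ∑ i : Fin n, f i.castSucc • x i.castSucc
        + f (Fin.last n) • x (Fin.last n) = 0 := by
      have h0 := hsum
      rw [Fin.sum_univ_castSucc] at h0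
      exact h0
    by_cases hfl : f (Fin.last n) = 0
    · obtain ⟨p, a, y, hy, h1, h2⟩ := IH (fun i => f i.castSucc) (fun i => x i.castSucc)
        (fun i => hx _) (by simpa [hfl] using hsum')
      refine ⟨p + 1, fun i => Fin.lastCases (Fin.snoc 0 1) (fun i' => Fin.snoc (a i') 0) i,
        Fin.snoc y (x (Fin.last n)), ?_, ?_, ?_⟩
      · intro j
        refine Fin.lastCases ?_ (fun j' => ?_) j
        · rw [Fin.snoc_last]; exact hx _
        · rw [Fin.snoc_castSucc]; exact hy j'
      · intro i
        refine Fin.lastCases ?_ (fun i' => ?_) i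
        · simp only [Fin.lastCases_last]
          rw [Fin.sum_univ_castSucc]
          simp only [Fin.snoc_castSucc, Fin.snoc_last, Pi.zero_apply, zero_smul,
            Finset.sum_const_zero, one_smul, zero_add]
        · simp only [Fin.lastCases_castSucc]
          rw [Fin.sum_univ_castSucc]
          simp only [Fin.snoc_castSucc, Fin.snoc_last, zero_smul, add_zero]
          exact h1 i'
      · intro j
        refine Fin.lastCases ?_ (fun j' => ?_) j
        · rw [Fin.sum_univ_castSucc]
          simp only [Fin.lastCases_castSucc, Fin.lastCases_last, Fin.snoc_last, Pi.zero_apply,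
            mul_zero, Finset.sum_const_zero, mul_one, zero_add, hfl]
        · rw [Fin.sum_univ_castSucc]
          simp only [Fin.lastCases_castSucc, Fin.lastCases_last, Fin.snoc_castSucc, Pi.zero_apply,
            mul_zero, add_zero]
          exact h2 j'
    · by_cases hall : ∀ i : Fin n, f i.castSucc = 0
      · have hsl : f (Fin.last n) • x (Fin.last n) = 0 := by
          simpa only [hall, zero_smul, Finset.sum_const_zero, zero_add] using hsum'
        have hxl : x (Fin.last n) = 0 := by
          rw [Algebra.smul_def] at hsl
          rcases mul_eq_zero.mp hsl with h | h
          · exact absurd (halg (by rw [h, map_zero])) hfl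
          · exact h
        refine ⟨n, fun i => Fin.lastCases (fun _ => 0)
            (fun i' j => if i' = j then 1 else 0) i, fun j => x j.castSucc,
          fun j => hx _, ?_, ?_⟩
        · intro i
          refine Fin.lastCases ?_ (fun i' => ?_) i
          · simp only [Fin.lastCases_last, zero_smul, Finset.sum_const_zero]
            exact hxl
          · simp only [Fin.lastCases_castSucc, ite_smul, one_smul, zero_smul,
              Finset.sum_ite_eq, Finset.mem_univ, if_true]
        · intro j
          rw [Fin.sum_univ_castSucc]
          simp only [Fin.lastCases_castSucc, Fin.lastCases_last, hall, zero_mul,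
            Finset.sum_const_zero, mul_zero, add_zero, zero_add]
      · push_neg at hall
        obtain ⟨i₁, hi₁⟩ := hall
        set α : K := algebraMap D K (f (Fin.last n)) with hαdef
        have hα : α ≠ 0 := fun h => hfl (halg (by rw [map_zero]; exact h))
        set A : Submodule D K := Submodule.span D {α} with hAdef
        have hA : A ≠ ⊥ := by
          rw [hAdef, Submodule.span_singleton_eq_bot.ne]
          exact hα
        set B : Submodule D K :=
          Submodule.span D (Set.range (fun i : Fin n => algebraMap D K (f i.castSucc))) with hBdef
        have hB : B ≠ ⊥ := by
          intro hbot
          have hmem : algebraMap D K (f i₁.castSucc) ∈ B :=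
            Submodule.subset_span ⟨i₁, rfl⟩
          rw [hbot, Submodule.mem_bot] at hmem
          exact hi₁ (halg (by rw [map_zero]; exact hmem))
        have hw1 : f (Fin.last n) • x (Fin.last n) ∈ S * A := by
          rw [Algebra.smul_def, mul_comm (algebraMap D K (f (Fin.last n))) (x (Fin.last n))]
          exact Submodule.mul_mem_mul (hx _) (Submodule.mem_span_singleton_self α)
        have hw2 : f (Fin.last n) • x (Fin.last n) ∈ S * B := by
          have hw' : f (Fin.last n) • x (Fin.last n)
              = -∑ i : Fin n, f i.castSucc • x i.castSucc :=
            eq_neg_of_add_eq_zero_right hsum'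
          rw [hw']
          refine neg_mem (Submodule.sum_mem _ fun i _ => ?_)
          rw [Algebra.smul_def, mul_comm (algebraMap D K (f i.castSucc)) (x i.castSucc)]
          exact Submodule.mul_mem_mul (hx _) (Submodule.subset_span ⟨i, rfl⟩)
        have hw : f (Fin.last n) • x (Fin.last n) ∈ S * (A ⊓ B) := by
          rw [H A B hA hB]
          exact ⟨hw1, hw2⟩
        obtain ⟨k, m, c, hm, hc, hwsum⟩ := exists_fin_sum_of_mem_mul hw
        choose d hd using fun t => Submodule.mem_span_singleton.mp (Submodule.mem_inf.mp (hc t)).1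
        choose gm hgm using fun t => (Submodule.mem_span_range_iff_exists_fun D).mp (Submodule.mem_inf.mp (hc t)).2
        have hxl : x (Fin.last n) = ∑ t, d t • m t := by
          apply mul_left_cancel₀ hα
          rw [← Algebra.smul_def, hwsum, Finset.mul_sum]
          refine Finset.sum_congr rfl fun t _ => ?_
          rw [← hd t, mul_smul_comm, mul_smul_comm, mul_comm (m t) α]
        have he : ∀ t, ∑ i : Fin n, gm t i * f i.castSucc = d t * f (Fin.last n) := by
          intro t
          have l1 : algebraMap D K (∑ i : Fin n, gm t i * f i.castSucc) = c t := by
            rw [map_sum]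
            simp only [map_mul, ← Algebra.smul_def]
            exact hgm t
          have l2 : algebraMap D K (d t * f (Fin.last n)) = c t := by
            rw [map_mul, ← Algebra.smul_def]
            exact hd t
          exact halg (l1.trans l2.symm)
        set x' : Fin n → K := fun i => x i.castSucc + ∑ t, gm t i • m t with hx'def
        have hx's : ∀ i, x' i ∈ S := fun i =>
          S.add_mem (hx _) (Submodule.sum_mem _ fun t _ => S.smul_mem _ (hm t))
        have hrel' : ∑ i : Fin n, f i.castSucc • x' i = 0 := by
          have e2 : ∀ t, (∑ i : Fin n, f i.castSucc * gm t i) = f (Fin.last n) * d t := by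
            intro t
            rw [Finset.sum_congr rfl (fun i _ => mul_comm (f i.castSucc) (gm t i)), he t,
              mul_comm]
          calc ∑ i : Fin n, f i.castSucc • x' i
              = ∑ i : Fin n, f i.castSucc • x i.castSucc
                + ∑ t : Fin k, (∑ i : Fin n, f i.castSucc * gm t i) • m t := by
                simp only [hx'def, smul_add, Finset.sum_add_distrib, Finset.smul_sum, smul_smul]
                rw [Finset.sum_comm]
                simp only [Finset.sum_smul]
            _ = ∑ i : Fin n, f i.castSucc • x i.castSucc + f (Fin.last n) • x (Fin.last n) := by
                rw [hxl, Finset.smul_sum]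
                congr 1
                exact Finset.sum_congr rfl fun t _ => by rw [e2 t, smul_smul]
            _ = 0 := hsum'
        obtain ⟨p, a, y, hy, h1, h2⟩ := IH (fun i => f i.castSucc) x' hx's hrel'
        refine ⟨p + k,
          fun i => Fin.lastCases (Fin.append (fun _ : Fin p => (0 : D)) d)
            (fun i' => Fin.append (a i') (fun t => -(gm t i'))) i,
          Fin.append y m, ?_, ?_, ?_⟩
        · intro j
          refine Fin.addCases (fun j₀ => ?_) (fun t => ?_) j
          · rw [Fin.append_left]; exact hy j₀
          · rw [Fin.append_right]; exact hm t
        · intro i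
          refine Fin.lastCases ?_ (fun i' => ?_) i
          · simp only [Fin.lastCases_last]
            rw [Fin.sum_univ_add]
            simp only [Fin.append_left, Fin.append_right, zero_smul, Finset.sum_const_zero,
              zero_add]
            exact hxl
          · simp only [Fin.lastCases_castSucc]
            rw [Fin.sum_univ_add]
            simp only [Fin.append_left, Fin.append_right]
            have h1' := h1 i'
            rw [hx'def] at h1'
            rw [← h1']
            simp only [neg_smul, Finset.sum_neg_distrib]
            rw [add_neg_cancel_right]
        · intro j
          rw [Fin.sum_univ_castSucc]
          simp only [Fin.lastCases_castSucc, Fin.lastCases_last]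
          refine Fin.addCases (fun j₀ => ?_) (fun t => ?_) j
          · simp only [Fin.append_left, mul_zero, add_zero]
            exact h2 j₀
          · simp only [Fin.append_right]
            have h5 : ∑ i' : Fin n, f i'.castSucc * -(gm t i') = -(d t * f (Fin.last n)) := by
              rw [← he t, ← Finset.sum_neg_distrib]
              exact Finset.sum_congr rfl fun i _ => by ring
            rw [h5]
            ring

lemma distrib_of_rel (S : Submodule D K)
    (h : ∀ (n : ℕ) (f : Fin n → D) (x : Fin n → K), (∀ i, x i ∈ S) → ∑ i, f i • x i = 0 →
        ∃ (p : ℕ) (a : Fin n → Fin p → D) (y : Fin p → K),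
          (∀ j, y j ∈ S) ∧ (∀ i, x i = ∑ j, a i j • y j) ∧ (∀ j, ∑ i, f i * a i j = 0))
    (A B : Submodule D K) : S * (A ⊓ B) = (S * A) ⊓ (S * B) := by
  have halg : Function.Injective (algebraMap D K) := IsFractionRing.injective D K
  refine le_antisymm (le_inf (mul_le_mul' le_rfl inf_le_left)
    (mul_le_mul' le_rfl inf_le_right)) ?_
  intro w hw
  obtain ⟨p, mm, aa, hmm, haa, hw1⟩ := exists_fin_sum_of_mem_mul hw.1
  obtain ⟨q, nn, bb, hnn, hbb, hw2⟩ := exists_fin_sum_of_mem_mul hw.2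
  obtain ⟨s, hs⟩ := IsLocalization.exist_integer_multiples_of_finite D⁰ (Fin.append aa bb)
  choose cden hcden using fun j => hs j
  -- hcden j : algebraMap D K (cden j) = (s : D) • Fin.append aa bb j
  have hsK : algebraMap D K (s : D) ≠ 0 := fun h0 =>
    nonZeroDivisors.coe_ne_zero s (halg (by rw [map_zero]; exact h0))
  have hca' : ∀ i : Fin p, algebraMap D K (cden (Fin.castAdd q i)) = (s : D) • aa i := by
    intro i; rw [hcden (Fin.castAdd q i), Fin.append_left]
  have hcb' : ∀ j : Fin q, algebraMap D K (cden (Fin.natAdd p j)) = (s : D) • bb j := by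
    intro j; rw [hcden (Fin.natAdd p j), Fin.append_right]
  set ff : Fin (p + q) → D := Fin.append (fun i => cden (Fin.castAdd q i))
    (fun j => -(cden (Fin.natAdd p j))) with hffdef
  set xx : Fin (p + q) → K := Fin.append mm nn with hxxdef
  have hxxS : ∀ j, xx j ∈ S := by
    intro j
    refine Fin.addCases (fun i => ?_) (fun i => ?_) j
    · rw [hxxdef, Fin.append_left]; exact hmm i
    · rw [hxxdef, Fin.append_right]; exact hnn i
  have L1 : ∑ i : Fin p, cden (Fin.castAdd q i) • mm i = (s : D) • w := by
    rw [hw1, Finset.smul_sum]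
    refine Finset.sum_congr rfl fun i _ => ?_
    rw [Algebra.smul_def, hca' i, smul_mul_assoc, mul_comm (aa i) (mm i)]
  have L2 : ∑ j : Fin q, cden (Fin.natAdd p j) • nn j = (s : D) • w := by
    rw [hw2, Finset.smul_sum]
    refine Finset.sum_congr rfl fun j _ => ?_
    rw [Algebra.smul_def, hcb' j, smul_mul_assoc, mul_comm (bb j) (nn j)]
  have hrelsum : ∑ j, ff j • xx j = 0 := by
    rw [Fin.sum_univ_add]
    simp only [hffdef, hxxdef, Fin.append_left, Fin.append_right, neg_smul,
      Finset.sum_neg_distrib]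
    rw [L1, L2, add_neg_cancel]
  obtain ⟨P, amat, y, hy, h1, h2⟩ := h (p + q) ff xx hxxS hrelsum
  set ca : Fin P → K := fun t => ∑ i : Fin p, amat (Fin.castAdd q i) t • aa i with hcadef
  set cb : Fin P → K := fun t => ∑ j : Fin q, amat (Fin.natAdd p j) t • bb j with hcbdef
  have hcaA : ∀ t, ca t ∈ A := fun t =>
    Submodule.sum_mem _ fun i _ => Submodule.smul_mem _ _ (haa i)
  have hcbB : ∀ t, cb t ∈ B := fun t =>
    Submodule.sum_mem _ fun j _ => Submodule.smul_mem _ _ (hbb j)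
  have hE : ∀ t, ∑ i : Fin p, cden (Fin.castAdd q i) * amat (Fin.castAdd q i) t
      = ∑ j : Fin q, cden (Fin.natAdd p j) * amat (Fin.natAdd p j) t := by
    intro t
    have h2t := h2 t
    rw [Fin.sum_univ_add] at h2t
    simp only [hffdef, Fin.append_left, Fin.append_right, neg_mul,
      Finset.sum_neg_distrib] at h2t
    exact add_neg_eq_zero.mp h2t
  have hsmul_ca : ∀ t, algebraMap D K
      (∑ i : Fin p, cden (Fin.castAdd q i) * amat (Fin.castAdd q i) t) = (s : D) • ca t := by
    intro t
    rw [map_sum, hcadef, Finset.smul_sum]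
    refine Finset.sum_congr rfl fun i _ => ?_
    rw [map_mul, hca' i, smul_mul_assoc, mul_comm (aa i), ← Algebra.smul_def]
  have hsmul_cb : ∀ t, algebraMap D K
      (∑ j : Fin q, cden (Fin.natAdd p j) * amat (Fin.natAdd p j) t) = (s : D) • cb t := by
    intro t
    rw [map_sum, hcbdef, Finset.smul_sum]
    refine Finset.sum_congr rfl fun j _ => ?_
    rw [map_mul, hcb' j, smul_mul_assoc, mul_comm (bb j), ← Algebra.smul_def]
  have hcab : ∀ t, ca t = cb t := by
    intro t
    have hE' := congrArg (algebraMap D K) (hE t)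
    rw [hsmul_ca t, hsmul_cb t, Algebra.smul_def, Algebra.smul_def] at hE'
    exact mul_left_cancel₀ hsK hE'
  have hfin : (s : D) • w = (s : D) • ∑ t, ca t * y t := by
    calc (s : D) • w = ∑ i : Fin p, cden (Fin.castAdd q i) • mm i := L1.symm
      _ = ∑ i : Fin p, cden (Fin.castAdd q i) • ∑ t, amat (Fin.castAdd q i) t • y t := by
          refine Finset.sum_congr rfl fun i _ => ?_
          have h1' := h1 (Fin.castAdd q i)
          rw [hxxdef, Fin.append_left] at h1'
          rw [h1']
      _ = ∑ t, (∑ i : Fin p, cden (Fin.castAdd q i) * amat (Fin.castAdd q i) t) • y t := by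
          simp only [Finset.smul_sum, smul_smul]
          rw [Finset.sum_comm]
          simp only [Finset.sum_smul]
      _ = ∑ t, ((s : D) • ca t) * y t := by
          refine Finset.sum_congr rfl fun t _ => ?_
          rw [Algebra.smul_def, hsmul_ca t]
      _ = (s : D) • ∑ t, ca t * y t := by
          rw [Finset.smul_sum]
          exact Finset.sum_congr rfl fun t _ => smul_mul_assoc _ _ _
  have hwfin : w = ∑ t, ca t * y t := by
    rw [Algebra.smul_def, Algebra.smul_def] at hfin
    exact mul_left_cancel₀ hsK hfin
  rw [hwfin]
  refine Submodule.sum_mem _ fun t _ => ?_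
  rw [mul_comm (ca t) (y t)]
  refine Submodule.mul_mem_mul (hy t) (Submodule.mem_inf.mpr ⟨hcaA t, ?_⟩)
  rw [hcab t]
  exact hcbB t

end AuxLemmas

/-- Flatness criterion: a nonzero fractional ideal `I` is flat over `D` if and only if
`I(A ∩ B) = IA ∩ IB` for all nonzero `D`-submodules `A, B` of the quotient field `K`. -/
theorem flat_iff_mul_inf_distrib
    (D K : Type*) [CommRing D] [IsDomain D] [Field K] [Algebra D K] [IsFractionRing D K]
    (I : FractionalIdeal D⁰ K) (hI : I ≠ 0) :
    Module.Flat D (I : Submodule D K) ↔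
      ∀ A B : Submodule D K, A ≠ ⊥ → B ≠ ⊥ →
        (I : Submodule D K) * (A ⊓ B) =
          ((I : Submodule D K) * A) ⊓ ((I : Submodule D K) * B) := by
  rw [flat_iff_rel (I : Submodule D K)]
  constructor
  · intro h A B _ _
    exact distrib_of_rel _ h A B
  · intro hdist
    exact rel_of_distrib _ hdist
end
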